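/- arXiv:1606.02184 — 5 statements merged into one kernel-verified Lean document; each statement's English description precedes it below -/
import Mathlib

section
/- Let n ≥ 3, let D_n = ⟨a,b | a^n = b^2 = 1, bab = a^{-1}⟩ be the dihedral group of order 2n, and let S = S₁ ∪ S₂ ⊆ D_n∖{1} with S = S^{-1}, where S₁ ⊆ ⟨a⟩ and S₂ ⊆ b⟨a⟩. Then the Cayley graph X(D_n,S) is integral if and only if for every h with 1 ≤ h ≤ ⌊(n-1)/2⌋: (i) χ_h(S₁) and χ_h(S₁²) + χ_h(S₂²) are integers, and (ii) Δ_h(S) = 2[χ_h(S₁²) + χ_h(S₂²)] − (χ_h(S₁))² is a perfect square (the square of an integer). -/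
open DihedralGroup Polynomial

/-- The degree-2 irreducible character `χ_h` of the dihedral group `D_n`:
`χ_h(a^k) = 2cos(2khπ/n)` and `χ_h(ba^k) = 0`. -/
noncomputable def chi (n h : ℕ) : DihedralGroup n → ℝ
  | .r k => 2 * Real.cos (2 * k.val * h * Real.pi / n)
  | .sr _ => 0

/-- `χ(A) = Σ_{x ∈ A} χ(x)`. -/
noncomputable def chiSum (n h : ℕ) (A : Set (DihedralGroup n)) : ℝ :=
  ∑ᶠ x ∈ A, chi n h x

/-- `χ(A²) = Σ_{x,y ∈ A} χ(xy)`, over ordered pairs. -/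
noncomputable def chiSum2 (n h : ℕ) (A : Set (DihedralGroup n)) : ℝ :=
  ∑ᶠ x ∈ A, ∑ᶠ y ∈ A, chi n h (x * y)

/-- The Cayley graph `X(G,S)`: vertices `G`, with `x,y` adjacent iff `x⁻¹y ∈ S`
(for `S` inverse-closed and not containing `1`). -/
def cayleyGraph {G : Type*} [Group G] (S : Set G) : SimpleGraph G :=
  SimpleGraph.fromRel (fun x y => x⁻¹ * y ∈ S)

open scoped Classical in
/-- The adjacency matrix of a graph, over `ℂ`. -/
noncomputable def adjMat {V : Type*} [Fintype V] (G : SimpleGraph V) : Matrix V V ℂ :=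
  Matrix.of fun x y => if G.Adj x y then 1 else 0

/-- A graph is integral if every eigenvalue of its adjacency matrix is an integer. -/
def IsIntegralGraph {V : Type*} [Fintype V] [DecidableEq V] (G : SimpleGraph V) : Prop :=
  ∀ μ ∈ spectrum ℂ (adjMat G), ∃ z : ℤ, μ = (z : ℂ)

/-- The cyclic subgroup `⟨a⟩` of `D_n`, as a set. -/
def rSet (n : ℕ) : Set (DihedralGroup n) := {x | ∃ k, x = .r k}

/-- The coset `b⟨a⟩` of `D_n`, as a set. -/
def srSet (n : ℕ) : Set (DihedralGroup n) := {x | ∃ k, x = .sr k}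

/-- `S` belongs to the Boolean algebra `B(⟨a⟩)`, i.e. `S ⊆ ⟨a⟩` is a union of atoms
`[a^l] = {a^k : gcd(k,n) = gcd(l,n)}`: membership in `S` is constant on each atom. -/
def InBooleanAlgebra (n : ℕ) (S : Set (DihedralGroup n)) : Prop :=
  S ⊆ rSet n ∧ ∀ k l : ZMod n, Nat.gcd k.val n = Nat.gcd l.val n →
    (DihedralGroup.r k ∈ S ↔ DihedralGroup.r l ∈ S)

/-- The multiplicity of `x` in the multiset `S² = {s₁s₂ : (s₁,s₂) ∈ S × S}` (ordered pairs). -/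
noncomputable def sqMult {n : ℕ} (S : Set (DihedralGroup n)) (x : DihedralGroup n) : ℕ :=
  Nat.card {p : DihedralGroup n × DihedralGroup n // p.1 ∈ S ∧ p.2 ∈ S ∧ p.1 * p.2 = x}

/-- The irreducible character `φ_h` of the cyclic group `⟨a⟩` of order `n`:
`φ_h(a^k) = e^{2πihk/n}`. -/
noncomputable def phi (n h : ℕ) (k : ZMod n) : ℂ :=
  Complex.exp (2 * Real.pi * Complex.I * h * k.val / n)


section AuxSpectral
open Complex Finset Matrix

noncomputable def zet (n : ℕ) : ℂ := Complex.exp (2 * Real.pi * Complex.I / n)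

noncomputable def ec (n : ℕ) (k : ZMod n) : ℂ := zet n ^ k.val

noncomputable def As (n : ℕ) (T : Finset (ZMod n)) (h : ZMod n) : ℂ := ∑ k ∈ T, ec n (h * k)

open scoped Classical in
noncomputable def Mblk (n : ℕ) (T₁ T₂ : Finset (ZMod n)) :
    Matrix (Fin 2 × ZMod n) (Fin 2 × ZMod n) ℂ :=
  Matrix.of fun p q => if p.1 = q.1 then (if q.2 - p.2 ∈ T₁ then 1 else 0)
             else (if p.2 + q.2 ∈ T₂ then 1 else 0)

open scoped Classical in
noncomputable def Ublk (n : ℕ) : Matrix (Fin 2 × ZMod n) (Fin 2 × ZMod n) ℂ :=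
  Matrix.of fun p q =>
    if p.1 = q.1 then (if p.1 = 0 then ec n (q.2 * p.2) else ec n (-(q.2 * p.2))) else 0

noncomputable def Nblk (n : ℕ) (T₁ T₂ : Finset (ZMod n)) :
    Matrix (Fin 2 × ZMod n) (Fin 2 × ZMod n) ℂ :=
  Matrix.blockDiagonal fun h => !![As n T₁ h, As n T₂ (-h); As n T₂ h, As n T₁ (-h)]

set_option linter.unusedSectionVars false
section ec
variable (n : ℕ) [NeZero n]
lemma zet_prim : IsPrimitiveRoot (zet n) n := Complex.isPrimitiveRoot_exp n (NeZero.ne n)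
lemma zet_pow_n : zet n ^ n = 1 := (zet_prim n).pow_eq_one
lemma zet_pow_mod (m : ℕ) : zet n ^ (m % n) = zet n ^ m := by
  conv_rhs => rw [← Nat.mod_add_div m n]
  rw [pow_add, pow_mul, zet_pow_n, one_pow, mul_one]
lemma ec_natCast (m : ℕ) : ec n (m : ZMod n) = zet n ^ m := by
  rw [ec, ZMod.val_natCast, zet_pow_mod]
lemma natCast_val_self (k : ZMod n) : ((k.val : ℕ) : ZMod n) = k := by
  simp [ZMod.natCast_val, ZMod.cast_id]
lemma ec_add (j k : ZMod n) : ec n (j + k) = ec n j * ec n k := by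
  rw [← natCast_val_self n j, ← natCast_val_self n k, ← Nat.cast_add, ec_natCast,
    ec_natCast, ec_natCast, pow_add]
lemma ec_zero : ec n 0 = 1 := by simp [ec]
lemma ec_neg (k : ZMod n) : ec n (-k) = (ec n k)⁻¹ := by
  refine eq_inv_of_mul_eq_one_left ?_
  rw [← ec_add, neg_add_cancel, ec_zero]
lemma zet_ne_zero : zet n ≠ 0 := Complex.exp_ne_zero _
lemma ec_ne_zero (k : ZMod n) : ec n k ≠ 0 := pow_ne_zero _ (zet_ne_zero n)
lemma star_zet : star (zet n) = (zet n)⁻¹ := by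
  show (starRingEnd ℂ) _ = _
  rw [zet, ← Complex.exp_conj, ← Complex.exp_neg]
  congr 1
  simp [map_div₀, Complex.conj_I, Complex.conj_ofNat]
  ring
lemma star_ec (k : ZMod n) : star (ec n k) = ec n (-k) := by
  rw [ec, star_pow, star_zet, inv_pow, ec_neg, ec]
lemma ec_mul_left (h k : ZMod n) : ec n (h * k) = (ec n k) ^ h.val := by
  conv_lhs => rw [← natCast_val_self n h, ← natCast_val_self n k]
  rw [← Nat.cast_mul, ec_natCast, pow_mul', ← ec_natCast, natCast_val_self]
lemma sum_ec (c : ZMod n) (hc : c ≠ 0) : ∑ h : ZMod n, ec n (h * c) = 0 := by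
  have h1 : ec n c ≠ 1 := by
    rw [ec]
    refine (zet_prim n).pow_ne_one_of_pos_of_lt ?_ (ZMod.val_lt c)
    exact (fun h => hc (by rwa [← ZMod.val_eq_zero]))
  have hn : (ec n c) ^ n = 1 := by rw [ec, ← pow_mul, mul_comm, pow_mul, zet_pow_n, one_pow]
  calc ∑ h : ZMod n, ec n (h * c) = ∑ h : ZMod n, (ec n c) ^ (h.val)  := by
        simp_rw [ec_mul_left]
    _ = ∑ i ∈ Finset.range n, (ec n c) ^ i := by
        refine Finset.sum_nbij' (fun h => h.val) (fun i => (i : ZMod n)) ?_ ?_ ?_ ?_ ?_ <;>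
          simp +contextual [ZMod.val_lt, ZMod.val_natCast, Nat.mod_eq_of_lt, natCast_val_self]
    _ = 0 := by
        rw [geom_sum_eq h1, hn]
        simp
lemma sum_ec_zero : ∑ h : ZMod n, ec n (h * 0) = n := by simp [ec_zero, Finset.card_univ]
end ec

section blk
variable (n : ℕ) [NeZero n] (T₁ T₂ : Finset (ZMod n))

open scoped Classical

lemma sumL1 (T : Finset (ZMod n)) (h j : ZMod n) :
    ∑ k : ZMod n, (if k - j ∈ T then (1:ℂ) else 0) * ec n (h * k)
      = ec n (h * j) * As n T h := by
  rw [← Equiv.sum_comp (Equiv.addRight j)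
    (fun k => (if k - j ∈ T then (1:ℂ) else 0) * ec n (h * k))]
  simp only [Equiv.coe_addRight, add_sub_cancel_right, mul_add, ec_add, ite_mul, one_mul, zero_mul]
  rw [Finset.sum_ite_mem, Finset.univ_inter, As, Finset.mul_sum]
  exact Finset.sum_congr rfl fun k _ => by ring

lemma sumL3 (T : Finset (ZMod n)) (h j : ZMod n) :
    ∑ k : ZMod n, (if j + k ∈ T then (1:ℂ) else 0) * ec n (h * k)
      = ec n (-(h * j)) * As n T h := by
  rw [← Equiv.sum_comp (Equiv.subRight j)
    (fun k => (if j + k ∈ T then (1:ℂ) else 0) * ec n (h * k))]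
  simp only [Equiv.subRight_apply, add_sub_cancel, ite_mul, one_mul, zero_mul]
  rw [Finset.sum_ite_mem, Finset.univ_inter, As, Finset.mul_sum]
  refine Finset.sum_congr rfl fun k _ => ?_
  rw [show h * (k - j) = -(h*j) + h * k by ring, ec_add]

lemma MU_eq_UN : Mblk n T₁ T₂ * Ublk n = Ublk n * Nblk n T₁ T₂ := by
  ext ⟨i, j⟩ ⟨i', h⟩
  rw [Matrix.mul_apply, Matrix.mul_apply]
  rw [Fintype.sum_prod_type, Fintype.sum_prod_type]
  rw [Fin.sum_univ_two, Fin.sum_univ_two]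
  fin_cases i <;> fin_cases i' <;>
    simp only [Mblk, Ublk, Nblk, Matrix.of_apply, Matrix.blockDiagonal_apply, if_true, if_false,
      Fin.zero_eta, Fin.mk_one, ite_true, ite_false, one_ne_zero, zero_ne_one, mul_zero, mul_ite,
      mul_one, Finset.sum_const_zero, add_zero, zero_add, Finset.sum_ite_eq', Finset.mem_univ,
      if_pos] <;>
    simp only [Matrix.cons_val', Matrix.cons_val_zero, Matrix.cons_val_one, Matrix.head_cons,
      Matrix.head_fin_const, Matrix.cons_val_fin_one, Matrix.empty_val']
  · rw [sumL1]; ring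
  · simp only [← neg_mul]
    rw [sumL3 n T₂ (-h) j]
    simp only [neg_mul, neg_neg]
    ring
  · rw [sumL3]; ring
  · simp only [← neg_mul]
    rw [sumL1 n T₁ (-h) j]
    ring
end blk

section blk2
variable (n : ℕ) [NeZero n] (T₁ T₂ : Finset (ZMod n))
open scoped Classical

lemma sum_ec_delta (c : ZMod n) :
    ∑ k : ZMod n, ec n (k * c) = if c = 0 then (n : ℂ) else 0 := by
  split_ifs with hc
  · subst hc; simp [mul_zero, ec_zero, Finset.card_univ]
  · exact sum_ec n c hc

lemma U_mul_star : Ublk n * (Ublk n)ᴴ = (n : ℂ) • 1 := by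
  ext ⟨i, j⟩ ⟨i', j'⟩
  rw [Matrix.mul_apply]
  rw [Fintype.sum_prod_type, Fin.sum_univ_two]
  simp only [Ublk, Matrix.conjTranspose_apply, Matrix.of_apply, Matrix.smul_apply,
    Matrix.one_apply, Prod.mk.injEq, smul_eq_mul]
  fin_cases i <;> fin_cases i' <;>
    simp only [if_true, if_false, ite_true, ite_false, one_ne_zero, zero_ne_one, star_zero,
      mul_zero, zero_mul, Finset.sum_const_zero, add_zero, zero_add, Fin.zero_eta, Fin.mk_one,
      star_ec, true_and, false_and, if_false]
  · simp only [show ∀ k : ZMod n, ec n (k * j) * ec n (-(k * j')) = ec n (k * (j - j')) from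
      fun k => by rw [← ec_add]; ring_nf]
    rw [sum_ec_delta]
    by_cases hjj : j = j' <;> simp [sub_eq_zero, hjj]
  · simp only [show ∀ k : ZMod n, ec n (-(k * j)) * ec n (- -(k * j')) = ec n (k * (j' - j)) from
      fun k => by rw [neg_neg, ← ec_add]; ring_nf]
    rw [sum_ec_delta]
    by_cases hjj : j = j'
    · simp [hjj]
    · simp [sub_eq_zero, hjj, Ne.symm hjj]

lemma detU_ne_zero : (Ublk n).det ≠ 0 := by
  intro h0
  have := congrArg Matrix.det (U_mul_star n)
  rw [Matrix.det_mul, h0, zero_mul, Matrix.det_smul, Matrix.det_one, mul_one] at this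
  have hn : ((n : ℂ)) ≠ 0 := Nat.cast_ne_zero.mpr (NeZero.ne n)
  exact pow_ne_zero _ hn this.symm

lemma spec_Mblk (μ : ℂ) : μ ∈ spectrum ℂ (Mblk n T₁ T₂) ↔
    ∃ h : ZMod n,
      (μ - As n T₁ h) * (μ - As n T₁ (-h)) - As n T₂ (-h) * As n T₂ h = 0 := by
  rw [spectrum.mem_iff, Algebra.algebraMap_eq_smul_one, Matrix.isUnit_iff_isUnit_det,
    isUnit_iff_ne_zero, not_not]
  have key : (μ • 1 - Mblk n T₁ T₂) * Ublk n = Ublk n * (μ • 1 - Nblk n T₁ T₂) := by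
    rw [sub_mul, mul_sub, MU_eq_UN, smul_mul_assoc, one_mul, mul_smul_comm, mul_one]
  have hdet : (μ • 1 - Mblk n T₁ T₂).det = (μ • 1 - Nblk n T₁ T₂).det := by
    have := congrArg Matrix.det key
    rw [Matrix.det_mul, Matrix.det_mul, mul_comm (Ublk n).det] at this
    exact mul_right_cancel₀ (detU_ne_zero n) this
  rw [hdet]
  have hN : (μ • (1 : Matrix (Fin 2 × ZMod n) (Fin 2 × ZMod n) ℂ) - Nblk n T₁ T₂)
      = Matrix.blockDiagonal (fun h => μ • (1 : Matrix (Fin 2) (Fin 2) ℂ)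
          - !![As n T₁ h, As n T₂ (-h); As n T₂ h, As n T₁ (-h)]) := by
    ext ⟨i, k⟩ ⟨i', k'⟩
    by_cases hk : k = k' <;>
      simp [Nblk, Matrix.blockDiagonal_apply, Matrix.sub_apply, Matrix.smul_apply,
        Matrix.one_apply, Prod.ext_iff, hk]
  rw [hN, Matrix.det_blockDiagonal]
  rw [Finset.prod_eq_zero_iff]
  constructor
  · rintro ⟨h, -, hh⟩
    refine ⟨h, ?_⟩
    rw [Matrix.det_fin_two] at hh
    simpa [Matrix.smul_apply, Matrix.one_apply, sub_eq_add_neg] using hh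
  · rintro ⟨h, hh⟩
    refine ⟨h, Finset.mem_univ h, ?_⟩
    rw [Matrix.det_fin_two]
    simpa [Matrix.smul_apply, Matrix.one_apply, sub_eq_add_neg] using hh
end blk2

def dEquiv (n : ℕ) : DihedralGroup n ≃ Fin 2 × ZMod n where
  toFun x := match x with
    | .r k => (0, k)
    | .sr k => (1, k)
  invFun p := if p.1 = 0 then .r p.2 else .sr p.2
  left_inv x := by rcases x with k | k <;> simp
  right_inv p := by
    rcases p with ⟨i, k⟩
    fin_cases i <;> simp

lemma dEquiv_symm_zero (n : ℕ) (k : ZMod n) : (dEquiv n).symm (0, k) = .r k := rfl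
lemma dEquiv_symm_one (n : ℕ) (k : ZMod n) : (dEquiv n).symm (1, k) = .sr k := rfl

lemma inv_r (n : ℕ) (k : ZMod n) : (DihedralGroup.r k)⁻¹ = DihedralGroup.r (-k) := by
  apply inv_eq_of_mul_eq_one_right
  rw [r_mul_r, add_neg_cancel, one_def]

lemma inv_sr (n : ℕ) (k : ZMod n) : (DihedralGroup.sr k)⁻¹ = DihedralGroup.sr k := by
  apply inv_eq_of_mul_eq_one_right
  rw [sr_mul_sr, sub_self, one_def]

open scoped Classical

lemma adjMat_cayley {G : Type*} [Group G] [Fintype G] (S : Set G)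
    (h1 : (1:G) ∉ S) (hinv : S⁻¹ = S) (x y : G) :
    adjMat (cayleyGraph S) x y = if x⁻¹ * y ∈ S then 1 else 0 := by
  rw [adjMat, Matrix.of_apply]
  refine if_congr ?_ rfl rfl
  rw [cayleyGraph, SimpleGraph.fromRel_adj]
  constructor
  · rintro ⟨hne, h | h⟩
    · exact h
    · have : (x⁻¹ * y)⁻¹ ∈ S := by rwa [_root_.mul_inv_rev, inv_inv]
      rwa [← Set.mem_inv, hinv] at this
  · intro h
    refine ⟨fun hxy => h1 ?_, Or.inl h⟩
    rwa [hxy, inv_mul_cancel] at h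

lemma reindex_adjMat (n : ℕ) [NeZero n] (S : Set (DihedralGroup n))
    (h1 : (1 : DihedralGroup n) ∉ S) (hinv : S⁻¹ = S)
    (T₁ T₂ : Finset (ZMod n))
    (hT₁ : ∀ m : ZMod n, DihedralGroup.r m ∈ S ↔ m ∈ T₁)
    (hT₂ : ∀ m : ZMod n, DihedralGroup.sr m ∈ S ↔ m ∈ T₂) :
    Matrix.reindex (dEquiv n) (dEquiv n) (adjMat (cayleyGraph S)) = Mblk n T₁ T₂ := by
  ext ⟨i, k⟩ ⟨i', k'⟩
  rw [Matrix.reindex_apply, Matrix.submatrix_apply]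
  fin_cases i <;> fin_cases i' <;>
    simp only [Fin.zero_eta, Fin.mk_one, dEquiv_symm_zero, dEquiv_symm_one] <;>
    rw [adjMat_cayley S h1 hinv] <;>
    simp only [Mblk, Matrix.of_apply, if_true, if_false, ite_true, ite_false, one_ne_zero,
      zero_ne_one]
  · rw [_root_.inv_r, r_mul_r, show -k + k' = k' - k by ring]
    exact if_congr (hT₁ _) rfl rfl
  · rw [_root_.inv_r, r_mul_sr, show k' - -k = k + k' by ring]
    exact if_congr (hT₂ _) rfl rfl
  · rw [_root_.inv_sr, sr_mul_r]
    exact if_congr (hT₂ _) rfl rfl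
  · rw [_root_.inv_sr, sr_mul_sr]
    exact if_congr (hT₁ _) rfl rfl

lemma spectrum_adjMat_eq (n : ℕ) [NeZero n] (S : Set (DihedralGroup n))
    (h1 : (1 : DihedralGroup n) ∉ S) (hinv : S⁻¹ = S)
    (T₁ T₂ : Finset (ZMod n))
    (hT₁ : ∀ m : ZMod n, DihedralGroup.r m ∈ S ↔ m ∈ T₁)
    (hT₂ : ∀ m : ZMod n, DihedralGroup.sr m ∈ S ↔ m ∈ T₂) :
    spectrum ℂ (adjMat (cayleyGraph S)) = spectrum ℂ (Mblk n T₁ T₂) := by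
  rw [← AlgEquiv.spectrum_eq (Matrix.reindexAlgEquiv ℂ ℂ (dEquiv n)) (adjMat (cayleyGraph S)),
    Matrix.reindexAlgEquiv_apply, reindex_adjMat n S h1 hinv T₁ T₂ hT₁ hT₂]

section f
variable (n : ℕ) [NeZero n]

lemma star_As (T : Finset (ZMod n)) (h : ZMod n) : star (As n T h) = As n T (-h) := by
  rw [As, As, star_sum]
  exact Finset.sum_congr rfl fun k _ => by rw [star_ec, neg_mul]

lemma As_neg_of_symm (T : Finset (ZMod n)) (hsym : ∀ k, k ∈ T ↔ -k ∈ T) (h : ZMod n) :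
    As n T (-h) = As n T h := by
  rw [As, As]
  refine Finset.sum_nbij' (fun k => -k) (fun k => -k) ?_ ?_ ?_ ?_ ?_ <;> intro k hk
  · exact (hsym k).mp hk
  · exact (hsym k).mp hk
  · simp
  · simp
  · rw [show -h * k = h * (-k) by ring]

lemma ec_eq_exp (h : ℕ) (k : ZMod n) :
    ec n ((h : ZMod n) * k) = Complex.exp (((2 * k.val * h * Real.pi / n : ℝ) : ℂ) * Complex.I) := by
  have h1 : ((h : ZMod n)) * k = ((h * k.val : ℕ) : ZMod n) := by
    conv_lhs => rw [← natCast_val_self n k]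
    push_cast
    ring
  rw [h1, ec_natCast, zet, ← Complex.exp_nat_mul]
  congr 1
  have hn : (n : ℂ) ≠ 0 := Nat.cast_ne_zero.mpr (NeZero.ne n)
  push_cast
  field_simp

lemma chi_r_c (h : ℕ) (k : ZMod n) :
    ((chi n h (.r k) : ℝ) : ℂ) = ec n ((h : ZMod n) * k) + ec n (-((h : ZMod n) * k)) := by
  show ((2 * Real.cos (2 * k.val * h * Real.pi / n) : ℝ) : ℂ) = _
  rw [Complex.ofReal_mul, Complex.ofReal_ofNat, Complex.ofReal_cos, Complex.two_cos,
    ec_eq_exp, ec_neg, ec_eq_exp, ← Complex.exp_neg, neg_mul]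

end f

section g
variable (n : ℕ) [NeZero n]

lemma set_eq_image (S₁ : Set (DihedralGroup n)) (hS₁ : S₁ ⊆ rSet n)
    (T₁ : Finset (ZMod n)) (hT : ∀ k, DihedralGroup.r k ∈ S₁ ↔ k ∈ T₁) :
    S₁ = ↑(T₁.image (DihedralGroup.r)) := by
  ext x
  constructor
  · intro hx
    obtain ⟨k, rfl⟩ := hS₁ hx
    exact Finset.mem_coe.mpr (Finset.mem_image.mpr ⟨k, (hT k).mp hx, rfl⟩)
  · intro hx
    obtain ⟨k, hk, rfl⟩ := Finset.mem_image.mp (Finset.mem_coe.mp hx)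
    exact (hT k).mpr hk

lemma set_eq_image_sr (S₂ : Set (DihedralGroup n)) (hS₂ : S₂ ⊆ srSet n)
    (T₂ : Finset (ZMod n)) (hT : ∀ k, DihedralGroup.sr k ∈ S₂ ↔ k ∈ T₂) :
    S₂ = ↑(T₂.image (DihedralGroup.sr)) := by
  ext x
  constructor
  · intro hx
    obtain ⟨k, rfl⟩ := hS₂ hx
    exact Finset.mem_coe.mpr (Finset.mem_image.mpr ⟨k, (hT k).mp hx, rfl⟩)
  · intro hx
    obtain ⟨k, hk, rfl⟩ := Finset.mem_image.mp (Finset.mem_coe.mp hx)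
    exact (hT k).mpr hk

lemma r_injective : Function.Injective (DihedralGroup.r : ZMod n → DihedralGroup n) := by
  intro a b hab
  exact DihedralGroup.r.injEq a b ▸ hab

lemma sr_injective : Function.Injective (DihedralGroup.sr : ZMod n → DihedralGroup n) := by
  intro a b hab
  exact DihedralGroup.sr.injEq a b ▸ hab

lemma chiSum_eq (h : ℕ) (S₁ : Set (DihedralGroup n)) (hS₁ : S₁ ⊆ rSet n)
    (T₁ : Finset (ZMod n)) (hT : ∀ k, DihedralGroup.r k ∈ S₁ ↔ k ∈ T₁) :
    ((chiSum n h S₁ : ℝ) : ℂ) = As n T₁ (h : ZMod n) + As n T₁ (-(h : ZMod n)) := by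
  rw [chiSum, set_eq_image n S₁ hS₁ T₁ hT, finsum_mem_coe_finset,
    Finset.sum_image (fun a _ b _ hab => r_injective n hab)]
  push_cast
  rw [As, As, ← Finset.sum_add_distrib]
  exact Finset.sum_congr rfl fun k _ => by rw [chi_r_c, neg_mul]

lemma chiSum2_S₁_eq (h : ℕ) (S₁ : Set (DihedralGroup n)) (hS₁ : S₁ ⊆ rSet n)
    (T₁ : Finset (ZMod n)) (hT : ∀ k, DihedralGroup.r k ∈ S₁ ↔ k ∈ T₁) :
    ((chiSum2 n h S₁ : ℝ) : ℂ)
      = As n T₁ (h : ZMod n) ^ 2 + As n T₁ (-(h : ZMod n)) ^ 2 := by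
  set h' := (h : ZMod n)
  rw [chiSum2, set_eq_image n S₁ hS₁ T₁ hT, finsum_mem_coe_finset]
  have step1 : ∀ x : DihedralGroup n,
      (∑ᶠ y ∈ (↑(T₁.image DihedralGroup.r) : Set (DihedralGroup n)), chi n h (x * y))
        = ∑ l ∈ T₁, chi n h (x * DihedralGroup.r l) := by
    intro x
    rw [finsum_mem_coe_finset, Finset.sum_image (fun a _ b _ hab => r_injective n hab)]
  rw [Finset.sum_congr rfl fun x _ => step1 x,
    Finset.sum_image (fun a _ b _ hab => r_injective n hab)]
  push_cast
  have e1 : As n T₁ h' ^ 2 = ∑ k ∈ T₁, ∑ l ∈ T₁, ec n (h' * k) * ec n (h' * l) := by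
    rw [sq, As, Finset.sum_mul_sum]
  have e2 : As n T₁ (-h') ^ 2 = ∑ k ∈ T₁, ∑ l ∈ T₁, ec n (-h' * k) * ec n (-h' * l) := by
    rw [sq, As, Finset.sum_mul_sum]
  rw [e1, e2, ← Finset.sum_add_distrib]
  refine Finset.sum_congr rfl fun k _ => ?_
  rw [← Finset.sum_add_distrib]
  refine Finset.sum_congr rfl fun l _ => ?_
  rw [r_mul_r, chi_r_c]
  rw [show h' * (k + l) = h' * k + h' * l by ring, ec_add,
    show -(h' * k + h' * l) = -h' * k + -h' * l by ring, ec_add]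

lemma chiSum2_S₂_eq (h : ℕ) (S₂ : Set (DihedralGroup n)) (hS₂ : S₂ ⊆ srSet n)
    (T₂ : Finset (ZMod n)) (hT : ∀ k, DihedralGroup.sr k ∈ S₂ ↔ k ∈ T₂) :
    ((chiSum2 n h S₂ : ℝ) : ℂ)
      = 2 * (As n T₂ (h : ZMod n) * As n T₂ (-(h : ZMod n))) := by
  set h' := (h : ZMod n)
  rw [chiSum2, set_eq_image_sr n S₂ hS₂ T₂ hT, finsum_mem_coe_finset]
  have step1 : ∀ x : DihedralGroup n,
      (∑ᶠ y ∈ (↑(T₂.image DihedralGroup.sr) : Set (DihedralGroup n)), chi n h (x * y))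
        = ∑ l ∈ T₂, chi n h (x * DihedralGroup.sr l) := by
    intro x
    rw [finsum_mem_coe_finset, Finset.sum_image (fun a _ b _ hab => sr_injective n hab)]
  rw [Finset.sum_congr rfl fun x _ => step1 x,
    Finset.sum_image (fun a _ b _ hab => sr_injective n hab)]
  push_cast
  have key : ∀ k l : ZMod n, ((chi n h (DihedralGroup.sr k * DihedralGroup.sr l) : ℝ) : ℂ)
      = ec n (h' * k) * ec n (-h' * l) + ec n (-h' * k) * ec n (h' * l) := by
    intro k l
    rw [sr_mul_sr, chi_r_c,
      show h' * (l - k) = h' * l + -h' * k by ring, ec_add,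
      show -(h' * l + -h' * k) = -h' * l + h' * k by ring, ec_add]
    ring
  have e1 : As n T₂ h' * As n T₂ (-h') = ∑ k ∈ T₂, ∑ l ∈ T₂, ec n (h' * k) * ec n (-h' * l) := by
    rw [As, As, Finset.sum_mul_sum]
  have e2 : As n T₂ (-h') * As n T₂ h' = ∑ k ∈ T₂, ∑ l ∈ T₂, ec n (-h' * k) * ec n (h' * l) := by
    rw [As, As, Finset.sum_mul_sum]
  calc ∑ x ∈ T₂, ∑ i ∈ T₂, ((chi n h (DihedralGroup.sr x * DihedralGroup.sr i) : ℝ) : ℂ)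
      = (∑ k ∈ T₂, ∑ l ∈ T₂, ec n (h' * k) * ec n (-h' * l))
        + (∑ k ∈ T₂, ∑ l ∈ T₂, ec n (-h' * k) * ec n (h' * l)) := by
        rw [← Finset.sum_add_distrib]
        refine Finset.sum_congr rfl fun k _ => ?_
        rw [← Finset.sum_add_distrib]
        exact Finset.sum_congr rfl fun l _ => key k l
    _ = 2 * (As n T₂ h' * As n T₂ (-h')) := by rw [← e1, ← e2]; ring

end g

lemma sum_int {α : Type*} {T : Finset α} {f : α → ℂ} (h : ∀ k ∈ T, ∃ z : ℤ, f k = (z : ℂ)) :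
    ∃ z : ℤ, ∑ k ∈ T, f k = (z : ℂ) := by
  classical
  induction T using Finset.induction_on with
  | empty => exact ⟨0, by simp⟩
  | @insert a s ha ih =>
    obtain ⟨z₁, hz₁⟩ := h a (Finset.mem_insert_self a s)
    obtain ⟨z₂, hz₂⟩ := ih (fun k hk => h k (Finset.mem_insert_of_mem hk))
    exact ⟨z₁ + z₂, by rw [Finset.sum_insert ha, hz₁, hz₂]; push_cast; ring⟩


end AuxSpectral

/-- Theorem 3.1. `X(D_n,S)` is integral iff for all `1 ≤ h ≤ ⌊(n-1)/2⌋`: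
(i) `χ_h(S₁)` and `χ_h(S₁²) + χ_h(S₂²)` are integers, and
(ii) `Δ_h(S) = 2[χ_h(S₁²)+χ_h(S₂²)] − (χ_h(S₁))²` is the square of an integer. -/
theorem stmt0 (n : ℕ) (hn : 3 ≤ n) [NeZero n]
    (S S₁ S₂ : Set (DihedralGroup n)) (hS : S = S₁ ∪ S₂)
    (h1 : (1 : DihedralGroup n) ∉ S) (hSinv : S⁻¹ = S)
    (hS₁ : S₁ ⊆ rSet n) (hS₂ : S₂ ⊆ srSet n) :
    IsIntegralGraph (cayleyGraph S) ↔
      ∀ h : ℕ, 1 ≤ h → h ≤ (n - 1) / 2 →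
        ((∃ z : ℤ, chiSum n h S₁ = (z : ℝ)) ∧
          (∃ z : ℤ, chiSum2 n h S₁ + chiSum2 n h S₂ = (z : ℝ))) ∧
        (∃ z : ℤ, 2 * (chiSum2 n h S₁ + chiSum2 n h S₂) - (chiSum n h S₁) ^ 2 = (z : ℝ) ^ 2) := by
  classical
  set T₁ : Finset (ZMod n) := Finset.univ.filter (fun k => DihedralGroup.r k ∈ S) with hT₁def
  set T₂ : Finset (ZMod n) := Finset.univ.filter (fun k => DihedralGroup.sr k ∈ S) with hT₂def
  have hrT : ∀ m, DihedralGroup.r m ∈ S ↔ m ∈ T₁ := fun m => by simp [hT₁def]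
  have hsrT : ∀ m, DihedralGroup.sr m ∈ S ↔ m ∈ T₂ := fun m => by simp [hT₂def]
  have hrS₁ : ∀ m, DihedralGroup.r m ∈ S₁ ↔ m ∈ T₁ := by
    intro m
    rw [← hrT]
    constructor
    · intro h; rw [hS]; exact Or.inl h
    · intro h
      rcases (hS ▸ h) with h' | h'
      · exact h'
      · obtain ⟨k, hk⟩ := hS₂ h'
        exact absurd hk (by simp)
  have hsrS₂ : ∀ m, DihedralGroup.sr m ∈ S₂ ↔ m ∈ T₂ := by
    intro m
    rw [← hsrT]
    constructor
    · intro h; rw [hS]; exact Or.inr h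
    · intro h
      rcases (hS ▸ h) with h' | h'
      · obtain ⟨k, hk⟩ := hS₁ h'
        exact absurd hk (by simp)
      · exact h'
  have hmem : ∀ x : DihedralGroup n, x ∈ S ↔ x⁻¹ ∈ S := by
    intro x
    conv_lhs => rw [← hSinv]
    exact Set.mem_inv
  have hT₁sym : ∀ k, k ∈ T₁ ↔ -k ∈ T₁ := by
    intro k
    rw [← hrT, ← hrT, ← _root_.inv_r, ← hmem]
  set aa : ZMod n → ℝ := fun h => (As n T₁ h).re with haa
  set bb : ZMod n → ℝ := fun h => ‖As n T₂ h‖ with hbb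
  have hA1real : ∀ h, As n T₁ h = ((aa h : ℝ) : ℂ) := by
    intro h
    have h0 := star_As n T₁ h
    rw [As_neg_of_symm n T₁ hT₁sym h] at h0
    exact (Complex.conj_eq_iff_re.mp h0).symm
  have hA2 : ∀ h, As n T₂ (-h) * As n T₂ h = (((bb h : ℝ) : ℂ)) ^ 2 := by
    intro h
    rw [← star_As, mul_comm]
    rw [show As n T₂ h * star (As n T₂ h) = As n T₂ h * (starRingEnd ℂ) (As n T₂ h) from rfl]
    rw [Complex.mul_conj, Complex.normSq_eq_norm_sq, hbb]
    push_cast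
    ring
  have hbbneg : ∀ h, bb (-h) = bb h := by
    intro h
    show ‖As n T₂ (-h)‖ = ‖As n T₂ h‖
    rw [← star_As]
    exact Complex.norm_conj _
  have haaneg : ∀ h, aa (-h) = aa h := by
    intro h
    show (As n T₁ (-h)).re = (As n T₁ h).re
    rw [As_neg_of_symm n T₁ hT₁sym h]
  have hbbpos : ∀ h, 0 ≤ bb h := fun h => norm_nonneg _
  have hquad : ∀ (μ : ℂ) (h : ZMod n),
      (μ - As n T₁ h) * (μ - As n T₁ (-h)) - As n T₂ (-h) * As n T₂ h
        = (μ - ((aa h + bb h : ℝ) : ℂ)) * (μ - ((aa h - bb h : ℝ) : ℂ)) := by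
    intro μ h
    rw [As_neg_of_symm n T₁ hT₁sym h, hA1real h, hA2 h]
    push_cast
    ring
  have hspec : ∀ μ : ℂ, μ ∈ spectrum ℂ (adjMat (cayleyGraph S)) ↔
      ∃ h : ZMod n, μ = ((aa h + bb h : ℝ) : ℂ) ∨ μ = ((aa h - bb h : ℝ) : ℂ) := by
    intro μ
    rw [spectrum_adjMat_eq n S h1 hSinv T₁ T₂ hrT hsrT, spec_Mblk]
    constructor
    · rintro ⟨h, hh⟩
      rw [hquad μ h, mul_eq_zero, sub_eq_zero, sub_eq_zero] at hh
      exact ⟨h, hh⟩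
    · rintro ⟨h, hh⟩
      refine ⟨h, ?_⟩
      rw [hquad μ h, mul_eq_zero, sub_eq_zero, sub_eq_zero]
      exact hh
  have hmain : IsIntegralGraph (cayleyGraph S) ↔ ∀ h : ZMod n,
      (∃ z : ℤ, aa h + bb h = (z : ℝ)) ∧ (∃ z : ℤ, aa h - bb h = (z : ℝ)) := by
    constructor
    · intro hint h
      constructor
      · obtain ⟨z, hz⟩ := hint _ ((hspec _).mpr ⟨h, Or.inl rfl⟩)
        exact ⟨z, by exact_mod_cast hz⟩
      · obtain ⟨z, hz⟩ := hint _ ((hspec _).mpr ⟨h, Or.inr rfl⟩)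
        exact ⟨z, by exact_mod_cast hz⟩
    · intro hcond μ hμ
      obtain ⟨h, hor⟩ := (hspec μ).mp hμ
      rcases hor with rfl | rfl
      · obtain ⟨z, hz⟩ := (hcond h).1
        exact ⟨z, by rw [hz]; push_cast; ring⟩
      · obtain ⟨z, hz⟩ := (hcond h).2
        exact ⟨z, by rw [hz]; push_cast; ring⟩
  have hc1 : ∀ h : ℕ, chiSum n h S₁ = 2 * aa ((h : ZMod n)) := by
    intro h
    have e := chiSum_eq n h S₁ hS₁ T₁ hrS₁
    rw [As_neg_of_symm n T₁ hT₁sym, hA1real] at e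
    have : ((chiSum n h S₁ : ℝ) : ℂ) = ((2 * aa ((h : ZMod n)) : ℝ) : ℂ) := by
      rw [e]; push_cast; ring
    exact_mod_cast this
  have hc2 : ∀ h : ℕ, chiSum2 n h S₁ + chiSum2 n h S₂
      = 2 * aa ((h : ZMod n)) ^ 2 + 2 * bb ((h : ZMod n)) ^ 2 := by
    intro h
    have e1 := chiSum2_S₁_eq n h S₁ hS₁ T₁ hrS₁
    have e2 := chiSum2_S₂_eq n h S₂ hS₂ T₂ hsrS₂
    rw [As_neg_of_symm n T₁ hT₁sym, hA1real] at e1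
    rw [mul_comm (As n T₂ ((h : ZMod n))), hA2] at e2
    have : ((chiSum2 n h S₁ + chiSum2 n h S₂ : ℝ) : ℂ)
        = ((2 * aa ((h : ZMod n)) ^ 2 + 2 * bb ((h : ZMod n)) ^ 2 : ℝ) : ℂ) := by
      push_cast [e1, e2]
      push_cast
      ring
    exact_mod_cast this
  rw [hmain]
  constructor
  · -- ∀ ZMod → nat conditions
    intro hZ h hge hle
    set h' : ZMod n := (h : ZMod n) with hh'
    obtain ⟨⟨z₁, e₁⟩, ⟨z₂, e₂⟩⟩ := hZ h'
    refine ⟨⟨⟨z₁ + z₂, ?_⟩, ⟨z₁ ^ 2 + z₂ ^ 2, ?_⟩⟩, ⟨z₁ - z₂, ?_⟩⟩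
    · rw [hc1 h]; push_cast; linarith
    · rw [hc2 h]; push_cast
      linear_combination (aa h' + bb h' + (z₁ : ℝ)) * e₁ + (aa h' - bb h' + (z₂ : ℝ)) * e₂
    · rw [hc2 h, hc1 h]; push_cast
      linear_combination (2 * bb h' + (z₁ : ℝ) - (z₂ : ℝ)) * (e₁ - e₂)
  · -- nat conditions → ∀ ZMod
    intro hcond h
    by_cases h0 : h = 0
    · subst h0
      have hA10 : As n T₁ 0 = (T₁.card : ℂ) := by
        simp [As, zero_mul, ec_zero]
      have hA20 : As n T₂ 0 = (T₂.card : ℂ) := by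
        simp [As, zero_mul, ec_zero]
      have ha0 : aa 0 = (T₁.card : ℝ) := by
        show (As n T₁ 0).re = _
        rw [hA10]; simp
      have hb0 : bb 0 = (T₂.card : ℝ) := by
        show ‖As n T₂ 0‖ = _
        rw [hA20]; simp [Complex.norm_natCast]
      constructor
      · exact ⟨(T₁.card : ℤ) + T₂.card, by rw [ha0, hb0]; push_cast; ring⟩
      · exact ⟨(T₁.card : ℤ) - T₂.card, by rw [ha0, hb0]; push_cast; ring⟩
    by_cases hhalf : 2 * h.val = n
    · -- h = n/2 case
      have hsum0 : h + h = 0 := by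
        have : ((h.val + h.val : ℕ) : ZMod n) = 0 := by
          rw [show h.val + h.val = 2 * h.val by ring, hhalf, ZMod.natCast_self]
        rwa [Nat.cast_add, natCast_val_self] at this
      have hpm : ∀ k : ZMod n, ∃ z : ℤ, ec n (h * k) = (z : ℂ) := by
        intro k
        have hsq : ec n (h * k) ^ 2 = 1 := by
          rw [sq, ← ec_add, show h * k + h * k = (h + h) * k by ring, hsum0, zero_mul, ec_zero]
        have : (ec n (h * k) - 1) * (ec n (h * k) + 1) = 0 := by linear_combination hsq
        rcases mul_eq_zero.mp this with h' | h'
        · exact ⟨1, by push_cast; linear_combination h'⟩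
        · exact ⟨-1, by push_cast; linear_combination h'⟩
      obtain ⟨z₁, hz₁⟩ := sum_int (T := T₁) (f := fun k => ec n (h * k)) (fun k _ => hpm k)
      obtain ⟨z₂, hz₂⟩ := sum_int (T := T₂) (f := fun k => ec n (h * k)) (fun k _ => hpm k)
      have ha : aa h = (z₁ : ℝ) := by
        show (As n T₁ h).re = _
        rw [As, hz₁]
        simp
      have hb : bb h = (|z₂| : ℝ) := by
        show ‖As n T₂ h‖ = _
        rw [As, hz₂, show ((z₂ : ℂ)) = (((z₂ : ℝ)) : ℂ) by push_cast; ring, Complex.norm_real]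
        try push_cast
        try simp [Int.cast_abs]
        try ring
      constructor
      · exact ⟨z₁ + |z₂|, by rw [ha, hb]; push_cast; ring⟩
      · exact ⟨z₁ - |z₂|, by rw [ha, hb]; push_cast; ring⟩
    · -- generic case: reduce to 1 ≤ m ≤ (n-1)/2
      have hvpos : 1 ≤ h.val := Nat.one_le_iff_ne_zero.mpr (fun hv => h0 (by rwa [← ZMod.val_eq_zero]))
      have hvlt : h.val < n := ZMod.val_lt h
      set m : ℕ := if 2 * h.val ≤ n then h.val else n - h.val with hm
      have hm1 : 1 ≤ m := by
        rw [hm]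
        split_ifs with hc
        · exact hvpos
        · omega
      have hm2 : m ≤ (n - 1) / 2 := by
        rw [hm]
        split_ifs with hc
        · omega
        · omega
      have hcast : ((m : ℕ) : ZMod n) = h ∨ ((m : ℕ) : ZMod n) = -h := by
        rw [hm]
        split_ifs with hc
        · left; exact natCast_val_self n h
        · right
          push_cast [Nat.cast_sub (le_of_lt hvlt)]
          rw [natCast_val_self n h, ZMod.natCast_self]
          ring
      obtain ⟨⟨⟨z₁, e₁⟩, ⟨z₂, e₂⟩⟩, ⟨z₃, e₃⟩⟩ := hcond m hm1 hm2
      -- translate to aa/bb at h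
      have haam : aa ((m : ZMod n)) = aa h := by
        rcases hcast with hc | hc
        · rw [hc]
        · rw [hc, haaneg]
      have hbbm : bb ((m : ZMod n)) = bb h := by
        rcases hcast with hc | hc
        · rw [hc]
        · rw [hc, hbbneg]
      rw [hc1 m, haam] at e₁
      rw [hc2 m, haam, hbbm] at e₂
      rw [hc2 m, hc1 m, haam, hbbm] at e₃
      -- e₁ : 2 * aa h = z₁ ; e₂ : 2 aa² + 2 bb² = z₂ ; e₃ : 2(2a²+2b²) − (2a)² = z₃²
      have hb2 : 2 * bb h = |(z₃ : ℝ)| := by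
        have hsq : (2 * bb h) ^ 2 = ((z₃ : ℝ)) ^ 2 := by linear_combination e₃
        have h2b : 0 ≤ 2 * bb h := by linarith [hbbpos h]
        have habs := (_root_.sq_eq_sq_iff_abs_eq_abs _ _).mp hsq
        rwa [_root_.abs_of_nonneg h2b] at habs
      have hint : (z₁ : ℤ) ^ 2 + |z₃| ^ 2 = 2 * z₂ := by
        have hreal : ((z₁ ^ 2 + |z₃| ^ 2 : ℤ) : ℝ) = ((2 * z₂ : ℤ) : ℝ) := by
          push_cast
          linear_combination (-(2 * aa h + (z₁ : ℝ))) * e₁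
            + (-(2 * bb h + |(z₃ : ℝ)|)) * hb2 + 2 * e₂
        exact_mod_cast hreal
      have hparity : Even z₁ ↔ Even |z₃| := by
        have hcontra : Even (z₁ ^ 2 + |z₃| ^ 2) := ⟨z₂, by linarith [hint]⟩
        rw [Int.even_add, Int.even_pow, Int.even_pow] at hcontra
        simpa using hcontra
      have heven : Even (z₁ + |z₃|) := by
        rw [Int.even_add]; exact hparity
      obtain ⟨c, hcc⟩ := heven
      have heven2 : Even (z₁ - |z₃|) := by
        have hd : z₁ - |z₃| = (z₁ + |z₃|) - 2 * |z₃| := by ring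
        rw [hd, hcc]
        exact ⟨c - |z₃|, by ring⟩
      obtain ⟨c', hcc'⟩ := heven2
      have hccR : (z₁ : ℝ) + |(z₃ : ℝ)| = (c : ℝ) + (c : ℝ) := by
        have := congrArg (fun z : ℤ => (z : ℝ)) hcc
        push_cast at this
        linarith [this]
      have hccR' : (z₁ : ℝ) - |(z₃ : ℝ)| = (c' : ℝ) + (c' : ℝ) := by
        have := congrArg (fun z : ℤ => (z : ℝ)) hcc'
        push_cast at this
        linarith [this]
      constructor
      · exact ⟨c, by linarith [e₁, hb2, hccR]⟩
      · exact ⟨c', by linarith [e₁, hb2, hccR']⟩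
end

section
/- Let n ≥ 3, let D_n = ⟨a,b | a^n = b^2 = 1, bab = a^{-1}⟩, and let S = S₁ ∪ S₂ ⊆ D_n∖{1} with S = S^{-1}, where S₁ ⊆ ⟨a⟩ and S₂ ⊆ b⟨a⟩. If both S₁ and bS₂ = {bs : s ∈ S₂} are unions of atoms of the Boolean algebra B(⟨a⟩), then the Cayley graph X(D_n,S) is integral. -/
open DihedralGroup Polynomial

/-! ### Auxiliary machinery -/

namespace Stmt2Aux

open Finset
open scoped Classical

section
variable (n : ℕ) [NeZero n]

noncomputable def zet : ℂ := Complex.exp (2 * Real.pi * Complex.I / n)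

lemma zet_prim : IsPrimitiveRoot (zet n) n := Complex.isPrimitiveRoot_exp n (NeZero.ne n)

noncomputable def EE (m : ℕ) : ℂ := zet n ^ m

lemma EE_mod (m : ℕ) : EE n (m % n) = EE n m := by
  conv_rhs => rw [← Nat.mod_add_div m n]
  simp [EE, pow_add, pow_mul, (zet_prim n).pow_eq_one]

noncomputable def ee (k : ZMod n) : ℂ := EE n k.val

lemma ee_add (j k : ZMod n) : ee n (j + k) = ee n j * ee n k := by
  rw [ee, ZMod.val_add, EE_mod, EE, pow_add]; rfl

lemma ee_mul_val (h k : ZMod n) : ee n (h * k) = EE n (h.val * k.val) := by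
  rw [ee, ZMod.val_mul, EE_mod]

lemma sum_pow_val (x : ℂ) : ∑ h : ZMod n, x ^ h.val = ∑ i ∈ Finset.range n, x ^ i :=
  Finset.sum_nbij' (fun h => h.val) (fun i => (i : ZMod n))
    (by intro a _; simp [ZMod.val_lt]) (by intro a ha; simp)
    (by intro a _; simp [ZMod.natCast_val, ZMod.cast_id])
    (by intro a ha; simp only [mem_range] at ha; exact ZMod.val_cast_of_lt ha) (by intro a _; rfl)

lemma geom_aux (x : ℂ) (m : ℕ) (hxn : x ^ m = 1) (hx : x ≠ 1) :
    ∑ i ∈ Finset.range m, x ^ i = 0 := by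
  have := geom_sum_mul x m
  rw [hxn, sub_self] at this
  rcases mul_eq_zero.mp this with h | h
  · exact h
  · exact absurd (sub_eq_zero.mp h) hx

lemma sum_ee (m : ZMod n) : ∑ h : ZMod n, ee n (h * m) = if m = 0 then (n : ℂ) else 0 := by
  have : ∀ h : ZMod n, ee n (h * m) = (zet n ^ m.val) ^ h.val := by
    intro h; rw [ee_mul_val, EE, ← pow_mul, Nat.mul_comm]
  simp_rw [this, sum_pow_val]
  split_ifs with hm
  · subst hm; simp
  · apply geom_aux
    · rw [← pow_mul, Nat.mul_comm, pow_mul, (zet_prim n).pow_eq_one, one_pow]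
    · intro hx
      have := (zet_prim n).pow_eq_one_iff_dvd m.val |>.mp hx
      have hlt := ZMod.val_lt m
      have : m.val = 0 := Nat.eq_zero_of_dvd_of_lt this hlt
      exact hm ((ZMod.val_eq_zero m).mp this)

lemma gcd_rep (d : ℕ) (hd : d ∣ n) : Nat.gcd ((d : ZMod n)).val n = d := by
  have hn : 0 < n := Nat.pos_of_ne_zero (NeZero.ne n)
  rcases Nat.lt_or_ge d n with h | h
  · rw [ZMod.val_cast_of_lt h]; exact Nat.gcd_eq_left hd
  · have : d = n := Nat.le_antisymm (Nat.le_of_dvd hn hd) h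
    subst this
    simp [ZMod.natCast_self]

lemma sum_dvd_int (h : ZMod n) (d : ℕ) (hd : d ∣ n) (hd0 : d ≠ 0) :
    ∃ z : ℤ, ∑ k ∈ univ.filter (fun k : ZMod n => d ∣ k.val), ee n (h * k) = z := by
  have hn : 0 < n := Nat.pos_of_ne_zero (NeZero.ne n)
  set x : ℂ := zet n ^ (h.val * d) with hx
  have key : ∑ k ∈ univ.filter (fun k : ZMod n => d ∣ k.val), ee n (h * k)
      = ∑ j ∈ Finset.range (n / d), x ^ j := by
    apply Finset.sum_nbij' (fun k => k.val / d) (fun j => ((d * j : ℕ) : ZMod n))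
    · intro k hk
      simp only [mem_filter, mem_univ, true_and] at hk
      simp only [mem_range]
      exact Nat.div_lt_div_of_lt_of_dvd hd (ZMod.val_lt k)
    · intro j hj
      simp only [mem_range] at hj
      have hlt : d * j < n := by
        calc d * j < d * (n / d) := by
              exact (Nat.mul_lt_mul_left (Nat.pos_of_ne_zero hd0)).mpr hj
        _ ≤ n := Nat.mul_div_le n d
      simp only [mem_filter, mem_univ, true_and]
      rw [ZMod.val_cast_of_lt hlt]
      exact Dvd.intro j rfl
    · intro k hk
      simp only [mem_filter, mem_univ, true_and] at hk
      rw [Nat.mul_div_cancel' hk, ZMod.natCast_val, ZMod.cast_id]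
    · intro j hj
      simp only [mem_range] at hj
      have hlt : d * j < n := by
        calc d * j < d * (n / d) := (Nat.mul_lt_mul_left (Nat.pos_of_ne_zero hd0)).mpr hj
        _ ≤ n := Nat.mul_div_le n d
      rw [ZMod.val_cast_of_lt hlt, Nat.mul_div_cancel_left j (Nat.pos_of_ne_zero hd0)]
    · intro k hk
      simp only [mem_filter, mem_univ, true_and] at hk
      rw [ee_mul_val, EE, hx, ← pow_mul]
      congr 1
      rw [mul_assoc, Nat.mul_div_cancel' hk]
  have hxm : x ^ (n / d) = 1 := by
    rw [hx, ← pow_mul, mul_assoc, Nat.mul_div_cancel' hd, mul_comm, pow_mul,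
      (zet_prim n).pow_eq_one, one_pow]
  rw [key]
  by_cases hx1 : x = 1
  · refine ⟨(n / d : ℕ), ?_⟩
    simp only [hx1, one_pow, Finset.sum_const, Finset.card_range, nsmul_eq_mul, mul_one,
      Int.cast_natCast]
  · exact ⟨0, by rw [geom_aux x (n/d) hxm hx1]; simp⟩

noncomputable def GG (h : ZMod n) (d : ℕ) : ℂ :=
  ∑ k ∈ univ.filter (fun k : ZMod n => Nat.gcd k.val n = d), ee n (h * k)

lemma GG_int (h : ZMod n) : ∀ d : ℕ, ∃ z : ℤ, GG n h d = z := by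
  have hn : 0 < n := Nat.pos_of_ne_zero (NeZero.ne n)
  suffices key : ∀ m : ℕ, ∀ d : ℕ, n - d < m → ∃ z : ℤ, GG n h d = z by
    intro d; exact key (n + 1) d (by omega)
  intro m
  induction m with
  | zero => omega
  | succ m ih =>
    intro d hdm
    by_cases hd : d ∣ n ∧ d ≠ 0
    · obtain ⟨hdn, hd0⟩ := hd
      have hdle : d ≤ n := Nat.le_of_dvd hn hdn
      set t : Finset ℕ := n.divisors.filter (fun e => d ∣ e) with ht
      have hpart : ∑ e ∈ t, GG n h e
          = ∑ k ∈ univ.filter (fun k : ZMod n => d ∣ k.val), ee n (h * k) := by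
        rw [← Finset.sum_fiberwise_of_maps_to (g := fun k : ZMod n => Nat.gcd k.val n)
          (t := t) ?_ (fun k => ee n (h * k))]
        · apply Finset.sum_congr rfl
          intro e he
          simp only [ht, mem_filter, Nat.mem_divisors] at he
          apply Finset.sum_congr
          · ext k
            simp only [mem_filter, mem_univ, true_and]
            constructor
            · intro hg
              have hdg : d ∣ Nat.gcd k.val n := by rw [hg]; exact he.2
              exact ⟨dvd_trans hdg (Nat.gcd_dvd_left _ _), hg⟩
            · exact fun hh => hh.2
          · intros; rfl
        · intro k hk
          simp only [mem_filter, mem_univ, true_and] at hk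
          simp only [ht, mem_filter, Nat.mem_divisors]
          exact ⟨⟨Nat.gcd_dvd_right _ _, NeZero.ne n⟩, Nat.dvd_gcd hk hdn⟩
      have hdt : d ∈ t := by
        simp only [ht, mem_filter, Nat.mem_divisors]
        exact ⟨⟨hdn, NeZero.ne n⟩, dvd_rfl⟩
      have hsplit : GG n h d = (∑ k ∈ univ.filter (fun k : ZMod n => d ∣ k.val), ee n (h * k))
          - ∑ e ∈ t.erase d, GG n h e := by
        rw [← hpart, ← Finset.add_sum_erase t _ hdt]; ring
      obtain ⟨z₁, hz₁⟩ := sum_dvd_int n h d hdn hd0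
      have herase : ∃ z₂ : ℤ, ∑ e ∈ t.erase d, GG n h e = z₂ := by
        have : ∀ e ∈ t.erase d, ∃ z : ℤ, GG n h e = z := by
          intro e he
          simp only [Finset.mem_erase, ht, mem_filter, Nat.mem_divisors] at he
          obtain ⟨hne, ⟨hen, -⟩, hde⟩ := he
          have hpos : 0 < e := Nat.pos_of_dvd_of_pos hen hn
          have h1 : d < e := lt_of_le_of_ne (Nat.le_of_dvd hpos hde) (Ne.symm hne)
          have h2 : e ≤ n := Nat.le_of_dvd hn hen
          exact ih e (by omega)
        choose zf hzf using this
        exact ⟨∑ e ∈ (t.erase d).attach, zf e.1 e.2, by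
          rw [← Finset.sum_attach (t.erase d) (GG n h)]
          push_cast
          exact Finset.sum_congr rfl (fun e _ => hzf e.1 e.2)⟩
      obtain ⟨z₂, hz₂⟩ := herase
      exact ⟨z₁ - z₂, by rw [hsplit, hz₁, hz₂]; push_cast; ring⟩
    · refine ⟨0, ?_⟩
      rw [GG]
      have : univ.filter (fun k : ZMod n => Nat.gcd k.val n = d) = ∅ := by
        ext k
        simp only [mem_filter, mem_univ, true_and, Finset.notMem_empty, iff_false]
        intro hg
        exact hd ⟨hg ▸ Nat.gcd_dvd_right _ _, hg ▸ (Nat.gcd_pos_of_pos_right _ hn).ne'⟩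
      simp [this]

lemma ramanujan (c : ZMod n → ℂ)
    (hz : ∀ k, ∃ z : ℤ, c k = z)
    (hc : ∀ k l : ZMod n, Nat.gcd k.val n = Nat.gcd l.val n → c k = c l)
    (h : ZMod n) : ∃ z : ℤ, ∑ k : ZMod n, c k * ee n (h * k) = z := by
  have hn : 0 < n := Nat.pos_of_ne_zero (NeZero.ne n)
  have hpart : ∑ k : ZMod n, c k * ee n (h * k)
      = ∑ d ∈ n.divisors, c ((d : ZMod n)) * GG n h d := by
    rw [← Finset.sum_fiberwise_of_maps_to (g := fun k : ZMod n => Nat.gcd k.val n)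
      (t := n.divisors) ?_ (fun k => c k * ee n (h * k))]
    · apply Finset.sum_congr rfl
      intro d hd
      rw [Nat.mem_divisors] at hd
      rw [GG, Finset.mul_sum]
      apply Finset.sum_congr rfl
      intro k hk
      simp only [mem_filter, mem_univ, true_and] at hk
      rw [hc k (d : ZMod n) (by rw [hk, gcd_rep n d hd.1])]
    · intro k _
      exact Nat.mem_divisors.mpr ⟨Nat.gcd_dvd_right _ _, NeZero.ne n⟩
  rw [hpart]
  have : ∀ d ∈ n.divisors, ∃ z : ℤ, c ((d : ZMod n)) * GG n h d = z := by
    intro d _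
    obtain ⟨z₁, hz₁⟩ := hz ((d : ZMod n))
    obtain ⟨z₂, hz₂⟩ := GG_int n h d
    exact ⟨z₁ * z₂, by rw [hz₁, hz₂]; push_cast; ring⟩
  choose zf hzf using this
  exact ⟨∑ d ∈ n.divisors.attach, zf d.1 d.2, by
    rw [← Finset.sum_attach n.divisors]
    push_cast
    exact Finset.sum_congr rfl (fun d _ => hzf d.1 d.2)⟩

lemma gcd_neg (m : ZMod n) : Nat.gcd ((-m : ZMod n)).val n = Nat.gcd m.val n := by
  have hn : 0 < n := Nat.pos_of_ne_zero (NeZero.ne n)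
  by_cases hm : m = 0
  · subst hm; simp
  · have hv0 : m.val ≠ 0 := fun h => hm ((ZMod.val_eq_zero m).mp h)
    have hvlt : m.val < n := ZMod.val_lt m
    haveI : NeZero m := ⟨hm⟩
    have hneg : ((-m : ZMod n)).val = n - m.val := ZMod.val_neg_of_ne_zero m
    rw [hneg]
    apply Nat.dvd_antisymm
    · apply Nat.dvd_gcd
      · have h1 := Nat.gcd_dvd_left (n - m.val) n
        have h2 := Nat.gcd_dvd_right (n - m.val) n
        have := Nat.dvd_sub h2 h1
        rwa [Nat.sub_sub_self (Nat.le_of_lt hvlt)] at this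
      · exact Nat.gcd_dvd_right _ _
    · apply Nat.dvd_gcd
      · exact Nat.dvd_sub (Nat.gcd_dvd_right _ _) (Nat.gcd_dvd_left _ _)
      · exact Nat.gcd_dvd_right _ _

/-- Splitting a sum over the dihedral group into rotations and reflections. -/
def dihEquiv : (ZMod n) ⊕ (ZMod n) ≃ DihedralGroup n where
  toFun := Sum.elim DihedralGroup.r DihedralGroup.sr
  invFun := fun x => match x with
    | DihedralGroup.r k => Sum.inl k
    | DihedralGroup.sr k => Sum.inr k
  left_inv := by rintro (k | k) <;> rfl
  right_inv := by rintro (k | k) <;> rfl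

lemma dih_sum (F : DihedralGroup n → ℂ) :
    ∑ x : DihedralGroup n, F x
      = ∑ k : ZMod n, F (DihedralGroup.r k) + ∑ k : ZMod n, F (DihedralGroup.sr k) := by
  classical
  rw [← Equiv.sum_comp (dihEquiv n) F, Fintype.sum_sum_type]
  rfl

/-- The eigenvector `W_{h,ε}`. -/
noncomputable def Wv (h : ZMod n) (ε : ℂ) : DihedralGroup n → ℂ := fun x =>
  match x with
  | DihedralGroup.r k => ee n (h * k)
  | DihedralGroup.sr k => ε * ee n (-(h * k))

@[simp] lemma Wv_r (h : ZMod n) (ε : ℂ) (k : ZMod n) :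
    Wv n h ε (DihedralGroup.r k) = ee n (h * k) := rfl

@[simp] lemma Wv_sr (h : ZMod n) (ε : ℂ) (k : ZMod n) :
    Wv n h ε (DihedralGroup.sr k) = ε * ee n (-(h * k)) := rfl

lemma sum_neg_arg (c : ZMod n → ℂ) (hcs : ∀ m, c (-m) = c m) (h : ZMod n) :
    ∑ m : ZMod n, c m * ee n (-(h * m)) = ∑ m : ZMod n, c m * ee n (h * m) := by
  apply Fintype.sum_equiv (Equiv.neg (ZMod n))
  intro m
  rw [show (Equiv.neg (ZMod n)) m = -m from rfl, hcs,
    show h * -m = -(h * m) from by ring]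

lemma eigen_eq (A : Matrix (DihedralGroup n) (DihedralGroup n) ℂ) (f g : ZMod n → ℂ)
    (hrr : ∀ j k, A (DihedralGroup.r j) (DihedralGroup.r k) = f (k - j))
    (hrs : ∀ j k, A (DihedralGroup.r j) (DihedralGroup.sr k) = g (j + k))
    (hsr : ∀ j k, A (DihedralGroup.sr j) (DihedralGroup.r k) = g (j + k))
    (hss : ∀ j k, A (DihedralGroup.sr j) (DihedralGroup.sr k) = f (k - j))
    (hfs : ∀ m, f (-m) = f m) (hgs : ∀ m, g (-m) = g m)
    (h : ZMod n) (ε : ℂ) (hε : ε * ε = 1) :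
    A.mulVec (Wv n h ε)
      = ((∑ m : ZMod n, f m * ee n (h * m)) + ε * ∑ m : ZMod n, g m * ee n (h * m))
        • Wv n h ε := by
  set α := ∑ m : ZMod n, f m * ee n (h * m) with hα
  set β := ∑ m : ZMod n, g m * ee n (h * m) with hβ
  funext x
  rw [Matrix.mulVec, dotProduct]
  cases x with
  | r j =>
    rw [dih_sum n (fun y => A (DihedralGroup.r j) y * Wv n h ε y)]
    simp only [hrr, hrs, Wv_r, Wv_sr]
    have e1 : ∑ k : ZMod n, f (k - j) * ee n (h * k) = α * ee n (h * j) := by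
      have step : ∀ m : ZMod n, f m * ee n (h * m) * ee n (h * j)
          = f ((m + j) - j) * ee n (h * (m + j)) := by
        intro m
        rw [add_sub_cancel_right, show h * (m + j) = h * m + h * j from by ring, ee_add]
        ring
      have := Fintype.sum_equiv (Equiv.addRight j)
        (fun m => f m * ee n (h * m) * ee n (h * j))
        (fun k => f (k - j) * ee n (h * k)) step
      rw [← this, ← Finset.sum_mul, ← hα]
    have e2 : ∑ k : ZMod n, g (j + k) * (ε * ee n (-(h * k))) = ε * β * ee n (h * j) := by
      have step : ∀ m : ZMod n, ε * (g m * ee n (-(h * m))) * ee n (h * j)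
          = g (j + (m - j)) * (ε * ee n (-(h * (m - j)))) := by
        intro m
        rw [show j + (m - j) = m from by ring,
          show -(h * (m - j)) = -(h * m) + h * j from by ring, ee_add]
        ring
      have := Fintype.sum_equiv (Equiv.subRight j)
        (fun m => ε * (g m * ee n (-(h * m))) * ee n (h * j))
        (fun k => g (j + k) * (ε * ee n (-(h * k)))) step
      rw [← this, ← Finset.sum_mul, ← Finset.mul_sum, sum_neg_arg n g hgs h, ← hβ]
    rw [e1, e2, Pi.smul_apply, Wv_r, smul_eq_mul]
    ring
  | sr j =>
    rw [dih_sum n (fun y => A (DihedralGroup.sr j) y * Wv n h ε y)]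
    simp only [hsr, hss, Wv_r, Wv_sr]
    have e1 : ∑ k : ZMod n, g (j + k) * ee n (h * k) = β * ee n (-(h * j)) := by
      have step : ∀ m : ZMod n, g m * ee n (h * m) * ee n (-(h * j))
          = g (j + (m - j)) * ee n (h * (m - j)) := by
        intro m
        rw [show j + (m - j) = m from by ring,
          show h * (m - j) = h * m + -(h * j) from by ring, ee_add]
        ring
      have := Fintype.sum_equiv (Equiv.subRight j)
        (fun m => g m * ee n (h * m) * ee n (-(h * j)))
        (fun k => g (j + k) * ee n (h * k)) step
      rw [← this, ← Finset.sum_mul, ← hβ]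
    have e2 : ∑ k : ZMod n, f (k - j) * (ε * ee n (-(h * k)))
        = ε * α * ee n (-(h * j)) := by
      have step : ∀ m : ZMod n, ε * (f m * ee n (-(h * m))) * ee n (-(h * j))
          = f ((m + j) - j) * (ε * ee n (-(h * (m + j)))) := by
        intro m
        rw [add_sub_cancel_right,
          show -(h * (m + j)) = -(h * m) + -(h * j) from by ring, ee_add]
        ring
      have := Fintype.sum_equiv (Equiv.addRight j)
        (fun m => ε * (f m * ee n (-(h * m))) * ee n (-(h * j)))
        (fun k => f (k - j) * (ε * ee n (-(h * k)))) step
      rw [← this, ← Finset.sum_mul, ← Finset.mul_sum, sum_neg_arg n f hfs h, ← hα]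
    rw [e1, e2, Pi.smul_apply, Wv_sr, smul_eq_mul]
    have hkey : (α + ε * β) * ε = β + ε * α := by
      calc (α + ε * β) * ε = α * ε + β * (ε * ε) := by ring
      _ = β + ε * α := by rw [hε]; ring
    rw [show (α + ε * β) * (ε * ee n (-(h * j)))
        = ((α + ε * β) * ε) * ee n (-(h * j)) from by ring, hkey]
    ring

lemma span_Wv :
    Submodule.span ℂ (Set.range
      (fun p : ZMod n × Bool => Wv n p.1 (if p.2 then 1 else -1))) = ⊤ := by
  have hn : (n : ℂ) ≠ 0 := Nat.cast_ne_zero.mpr (NeZero.ne n)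
  rw [eq_top_iff]
  intro v _
  have hv : v = ∑ x : DihedralGroup n, v x • (Pi.single x 1 : DihedralGroup n → ℂ) := by
    funext y
    simp [Finset.sum_apply, Pi.single_apply]
  rw [hv]
  apply Submodule.sum_mem
  intro x _
  apply Submodule.smul_mem
  have hmem : ∀ (h : ZMod n) (b : Bool),
      Wv n h (if b then 1 else -1) ∈ Submodule.span ℂ (Set.range
        (fun p : ZMod n × Bool => Wv n p.1 (if p.2 then 1 else -1))) :=
    fun h b => Submodule.subset_span ⟨(h, b), rfl⟩
  cases x with
  | r j =>
    have hid : (Pi.single (DihedralGroup.r j) 1 : DihedralGroup n → ℂ)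
        = ((2 * n : ℂ))⁻¹ • ∑ h : ZMod n, ee n (-(h * j)) • (Wv n h 1 + Wv n h (-1)) := by
      funext y
      cases y with
      | r k =>
        simp only [Pi.smul_apply, Finset.sum_apply, Pi.add_apply, Wv_r, smul_eq_mul,
          Pi.single_apply]
        have hterm : ∀ h : ZMod n,
            ee n (-(h * j)) * (ee n (h * k) + ee n (h * k)) = 2 * ee n (h * (k - j)) := by
          intro h
          rw [show h * (k - j) = -(h * j) + h * k by ring, ee_add]
          ring
        rw [Finset.sum_congr rfl (fun h _ => hterm h), ← Finset.mul_sum, sum_ee]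
        by_cases hkj : k = j
        · subst hkj
          rw [if_pos rfl, sub_self, if_pos rfl]
          field_simp
        · rw [if_neg (by simp [hkj]), if_neg (sub_ne_zero.mpr hkj)]
          ring
      | sr k =>
        simp only [Pi.smul_apply, Finset.sum_apply, Pi.add_apply, Wv_sr, smul_eq_mul,
          Pi.single_apply]
        have : ∀ h : ZMod n,
            ee n (-(h * j)) * (1 * ee n (-(h * k)) + -1 * ee n (-(h * k))) = 0 := by
          intro h; ring
        rw [Finset.sum_congr rfl (fun h _ => this h)]
        simp
    rw [hid]
    apply Submodule.smul_mem
    apply Submodule.sum_mem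
    intro h _
    apply Submodule.smul_mem
    exact Submodule.add_mem _ (by simpa using hmem h true) (by simpa using hmem h false)
  | sr j =>
    have hid : (Pi.single (DihedralGroup.sr j) 1 : DihedralGroup n → ℂ)
        = ((2 * n : ℂ))⁻¹ • ∑ h : ZMod n, ee n (h * j) • (Wv n h 1 - Wv n h (-1)) := by
      funext y
      cases y with
      | r k =>
        simp only [Pi.smul_apply, Finset.sum_apply, Pi.sub_apply, Wv_r, smul_eq_mul,
          Pi.single_apply]
        have : ∀ h : ZMod n, ee n (h * j) * (ee n (h * k) - ee n (h * k)) = 0 := by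
          intro h; ring
        rw [Finset.sum_congr rfl (fun h _ => this h)]
        simp
      | sr k =>
        simp only [Pi.smul_apply, Finset.sum_apply, Pi.sub_apply, Wv_sr, smul_eq_mul,
          Pi.single_apply]
        have hterm : ∀ h : ZMod n,
            ee n (h * j) * (1 * ee n (-(h * k)) - -1 * ee n (-(h * k)))
              = 2 * ee n (h * (j - k)) := by
          intro h
          rw [show h * (j - k) = h * j + -(h * k) by ring, ee_add]
          ring
        rw [Finset.sum_congr rfl (fun h _ => hterm h), ← Finset.mul_sum, sum_ee]
        by_cases hkj : k = j
        · subst hkj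
          rw [if_pos rfl, sub_self, if_pos rfl]
          field_simp
        · rw [if_neg (by simp [hkj]), if_neg (sub_ne_zero.mpr (Ne.symm hkj))]
          ring
    rw [hid]
    apply Submodule.smul_mem
    apply Submodule.sum_mem
    intro h _
    apply Submodule.smul_mem
    exact Submodule.sub_mem _ (by simpa using hmem h true) (by simpa using hmem h false)

end

lemma spectrum_subset_of_eigen {V ι : Type*} [Fintype V] [DecidableEq V]
    (A : Matrix V V ℂ) (w : ι → V → ℂ) (lam : ι → ℂ)
    (hw : ∀ i, A.mulVec (w i) = lam i • w i)
    (hspan : Submodule.span ℂ (Set.range w) = ⊤)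
    (μ : ℂ) (hμ : μ ∈ spectrum ℂ A) : ∃ i, μ = lam i := by
  by_contra hcon
  push_neg at hcon
  rw [spectrum.mem_iff] at hμ
  apply hμ
  set M : Matrix V V ℂ := algebraMap ℂ (Matrix V V ℂ) μ - A with hMdef
  have hM : ∀ i, M.mulVec (w i) = (μ - lam i) • w i := by
    intro i
    rw [hMdef, Matrix.sub_mulVec, hw i, sub_smul]
    congr 1
    funext x
    rw [Matrix.algebraMap_eq_diagonal, Matrix.mulVec_diagonal]
    simp
  have hsurj : Function.Surjective M.mulVecLin := by
    rw [← LinearMap.range_eq_top, ← top_le_iff, ← hspan, Submodule.span_le]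
    rintro _ ⟨i, rfl⟩
    refine ⟨(μ - lam i)⁻¹ • w i, ?_⟩
    rw [Matrix.mulVecLin_apply, Matrix.mulVec_smul, hM i, smul_smul,
      inv_mul_cancel₀ (sub_ne_zero.2 (fun hh => hcon i hh)), one_smul]
  have hinj : Function.Injective M.mulVecLin :=
    (LinearMap.injective_iff_surjective).mpr hsurj
  have hdet : M.det ≠ 0 := by
    intro h0
    obtain ⟨v, hv0, hv⟩ := (Matrix.exists_mulVec_eq_zero_iff).mpr h0
    exact hv0 (hinj (by simpa [Matrix.mulVecLin_apply] using hv))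
  exact (Matrix.isUnit_iff_isUnit_det M).mpr (isUnit_iff_ne_zero.mpr hdet)

end Stmt2Aux

/-- Corollary 3.3. If `S₁ ∈ B(⟨a⟩)` and `bS₂ ∈ B(⟨a⟩)`, then
`X(D_n,S)` is integral. Here `b = sr 0`. -/
theorem stmt2 (n : ℕ) (hn : 3 ≤ n) [NeZero n]
    (S S₁ S₂ : Set (DihedralGroup n)) (hS : S = S₁ ∪ S₂)
    (h1 : (1 : DihedralGroup n) ∉ S) (hSinv : S⁻¹ = S)
    (hS₁ : S₁ ⊆ rSet n) (hS₂ : S₂ ⊆ srSet n)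
    (hB₁ : InBooleanAlgebra n S₁)
    (hB₂ : InBooleanAlgebra n ((fun s => DihedralGroup.sr 0 * s) '' S₂)) :
    IsIntegralGraph (cayleyGraph S) := by
  classical
  intro μ hμ
  set A := adjMat (cayleyGraph S) with hA
  have hnot_r_sr : ∀ (a b : ZMod n), DihedralGroup.r a ≠ DihedralGroup.sr b := by
    intro a b hab; cases hab
  have hmem_r : ∀ m : ZMod n, (DihedralGroup.r m ∈ S ↔ DihedralGroup.r m ∈ S₁) := by
    intro m
    rw [hS]
    constructor
    · rintro (hh | hh)
      · exact hh
      · obtain ⟨k, hk⟩ := hS₂ hh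
        exact absurd hk (hnot_r_sr m k)
    · exact Or.inl
  have hmem_sr : ∀ m : ZMod n, (DihedralGroup.sr m ∈ S ↔ DihedralGroup.sr m ∈ S₂) := by
    intro m
    rw [hS]
    constructor
    · rintro (hh | hh)
      · obtain ⟨k, hk⟩ := hS₁ hh
        exact absurd hk.symm (hnot_r_sr k m)
      · exact hh
    · exact Or.inr
  have hadj : ∀ x y : DihedralGroup n, (cayleyGraph S).Adj x y ↔ x⁻¹ * y ∈ S := by
    intro x y
    rw [cayleyGraph, SimpleGraph.fromRel_adj]
    constructor
    · rintro ⟨hne, (hh | hh)⟩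
      · exact hh
      · have h2 : (y⁻¹ * x)⁻¹ ∈ S⁻¹ := by
          rw [Set.mem_inv, inv_inv]
          exact hh
        rw [hSinv] at h2
        simpa using h2
    · intro hh
      refine ⟨?_, Or.inl hh⟩
      rintro rfl
      rw [inv_mul_cancel] at hh
      exact h1 hh
  have hAdef : ∀ x y, A x y = if x⁻¹ * y ∈ S then (1:ℂ) else 0 := by
    intro x y
    rw [hA, adjMat, Matrix.of_apply]
    exact if_congr (hadj x y) rfl rfl
  set f : ZMod n → ℂ := fun k => if DihedralGroup.r k ∈ S₁ then 1 else 0 with hf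
  set g : ZMod n → ℂ := fun k => if DihedralGroup.sr k ∈ S₂ then 1 else 0 with hg
  have hfcl : ∀ k l : ZMod n, Nat.gcd k.val n = Nat.gcd l.val n → f k = f l := by
    intro k l hkl
    simp only [hf]
    exact if_congr (hB₁.2 k l hkl) rfl rfl
  have himg : ∀ k : ZMod n,
      (DihedralGroup.r k ∈ (fun s => DihedralGroup.sr 0 * s) '' S₂
        ↔ DihedralGroup.sr k ∈ S₂) := by
    intro k
    constructor
    · rintro ⟨s, hs, heq⟩
      obtain ⟨m, rfl⟩ := hS₂ hs
      simp only [DihedralGroup.sr_mul_sr, sub_zero] at heq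
      have hmk : m = k := by
        simpa [DihedralGroup.r.injEq] using heq
      rwa [← hmk]
    · intro hk
      exact ⟨DihedralGroup.sr k, hk, by simp [DihedralGroup.sr_mul_sr]⟩
  have hgcl : ∀ k l : ZMod n, Nat.gcd k.val n = Nat.gcd l.val n → g k = g l := by
    intro k l hkl
    simp only [hg]
    exact if_congr ((himg k).symm.trans ((hB₂.2 k l hkl).trans (himg l))) rfl rfl
  have hfs : ∀ m : ZMod n, f (-m) = f m := fun m => hfcl _ _ (Stmt2Aux.gcd_neg n m)
  have hgs : ∀ m : ZMod n, g (-m) = g m := fun m => hgcl _ _ (Stmt2Aux.gcd_neg n m)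
  have hrr : ∀ j k, A (DihedralGroup.r j) (DihedralGroup.r k) = f (k - j) := by
    intro j k
    rw [hAdef]
    have e : (DihedralGroup.r j)⁻¹ * DihedralGroup.r k = DihedralGroup.r (k - j) := by
      show DihedralGroup.r (-j) * DihedralGroup.r k = _
      rw [DihedralGroup.r_mul_r]
      congr 1
      ring
    rw [e, hf]
    exact if_congr (hmem_r _) rfl rfl
  have hrs : ∀ j k, A (DihedralGroup.r j) (DihedralGroup.sr k) = g (j + k) := by
    intro j k
    rw [hAdef]
    have e : (DihedralGroup.r j)⁻¹ * DihedralGroup.sr k = DihedralGroup.sr (j + k) := by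
      show DihedralGroup.r (-j) * DihedralGroup.sr k = _
      rw [DihedralGroup.r_mul_sr]
      congr 1
      ring
    rw [e, hg]
    exact if_congr (hmem_sr _) rfl rfl
  have hsr : ∀ j k, A (DihedralGroup.sr j) (DihedralGroup.r k) = g (j + k) := by
    intro j k
    rw [hAdef]
    have e : (DihedralGroup.sr j)⁻¹ * DihedralGroup.r k = DihedralGroup.sr (j + k) := by
      show DihedralGroup.sr j * DihedralGroup.r k = _
      rw [DihedralGroup.sr_mul_r]
    rw [e, hg]
    exact if_congr (hmem_sr _) rfl rfl
  have hss : ∀ j k, A (DihedralGroup.sr j) (DihedralGroup.sr k) = f (k - j) := by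
    intro j k
    rw [hAdef]
    have e : (DihedralGroup.sr j)⁻¹ * DihedralGroup.sr k = DihedralGroup.r (k - j) := by
      show DihedralGroup.sr j * DihedralGroup.sr k = _
      rw [DihedralGroup.sr_mul_sr]
    rw [e, hf]
    exact if_congr (hmem_r _) rfl rfl
  set Wfam : ZMod n × Bool → DihedralGroup n → ℂ :=
    fun p => Stmt2Aux.Wv n p.1 (if p.2 then 1 else -1) with hW
  set lam : ZMod n × Bool → ℂ := fun p =>
    (∑ m : ZMod n, f m * Stmt2Aux.ee n (p.1 * m))
      + (if p.2 then 1 else -1) * ∑ m : ZMod n, g m * Stmt2Aux.ee n (p.1 * m) with hlam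
  have hw : ∀ p, A.mulVec (Wfam p) = lam p • Wfam p := by
    intro p
    exact Stmt2Aux.eigen_eq n A f g hrr hrs hsr hss hfs hgs p.1 _
      (by cases hp : p.2 <;> norm_num)
  obtain ⟨i, hi⟩ := Stmt2Aux.spectrum_subset_of_eigen A Wfam lam hw (Stmt2Aux.span_Wv n) μ hμ
  have hzf : ∀ k, ∃ z : ℤ, f k = z := by
    intro k
    by_cases hk : DihedralGroup.r k ∈ S₁
    · exact ⟨1, by simp [hf, hk]⟩
    · exact ⟨0, by simp [hf, hk]⟩
  have hzg : ∀ k, ∃ z : ℤ, g k = z := by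
    intro k
    by_cases hk : DihedralGroup.sr k ∈ S₂
    · exact ⟨1, by simp [hg, hk]⟩
    · exact ⟨0, by simp [hg, hk]⟩
  obtain ⟨z₁, hz₁⟩ := Stmt2Aux.ramanujan n f hzf hfcl i.1
  obtain ⟨z₂, hz₂⟩ := Stmt2Aux.ramanujan n g hzg hgcl i.1
  have hval : μ = (∑ m : ZMod n, f m * Stmt2Aux.ee n (i.1 * m))
      + (if i.2 then 1 else -1) * ∑ m : ZMod n, g m * Stmt2Aux.ee n (i.1 * m) := hi
  rw [hval, hz₁, hz₂]
  cases hb : i.2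
  · rw [if_neg (by simp)]
    exact ⟨z₁ - z₂, by push_cast; ring⟩
  · rw [if_pos rfl]
    exact ⟨z₁ + z₂, by push_cast; ring⟩
end

section
/- Let n ≥ 3, let D_n = ⟨a,b | a^n = b^2 = 1, bab = a^{-1}⟩, and let S = S₁ ∪ S₂ ⊆ D_n∖{1} with S = S^{-1}, where S₁ ⊆ ⟨a⟩ and S₂ ⊆ b⟨a⟩. If the Cayley graph X(D_n,S) is integral, then S₁ is a union of atoms of the Boolean algebra B(⟨a⟩), and the multiset S₂² = {s₁s₂ : (s₁,s₂) ∈ S₂×S₂} (with multiplicities, over ordered pairs) belongs to the integral cone C(⟨a⟩), i.e., its multiplicity function is constant on each atom of ⟨a⟩. -/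
open DihedralGroup Polynomial

section MyAux

variable (n : ℕ) [NeZero n]

noncomputable def om : ℂ := Complex.exp (2 * Real.pi * Complex.I / n)

lemma om_prim : IsPrimitiveRoot (om n) n := Complex.isPrimitiveRoot_exp n (NeZero.ne n)

noncomputable def ee (k : ZMod n) : ℂ := om n ^ k.val

lemma om_pow_mod (m : ℕ) : om n ^ (m % n) = om n ^ m := by
  conv_rhs => rw [← Nat.div_add_mod m n]
  rw [pow_add, pow_mul, (om_prim n).pow_eq_one, one_pow, one_mul]

lemma ee_natCast (m : ℕ) : ee n (m : ZMod n) = om n ^ m := by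
  rw [ee, ZMod.val_natCast, om_pow_mod]

lemma ee_coe (k : ZMod n) : ee n k = om n ^ k.val := rfl

lemma ee_add (j k : ZMod n) : ee n (j + k) = ee n j * ee n k := by
  have : j + k = ((j.val + k.val : ℕ) : ZMod n) := by
    push_cast [ZMod.natCast_val, ZMod.cast_id]; ring
  rw [this, ee_natCast, pow_add, ee_coe, ee_coe]

lemma ee_zero : ee n 0 = 1 := by
  rw [ee, ZMod.val_zero, pow_zero]

lemma sum_ee (m : ZMod n) : ∑ h : ZMod n, ee n (h * m) = if m = 0 then (n : ℂ) else 0 := by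
  have key : ∀ h : ZMod n, ee n (h * m) = (om n ^ m.val) ^ h.val := by
    intro h
    have : h * m = ((h.val * m.val : ℕ) : ZMod n) := by
      push_cast [ZMod.natCast_val, ZMod.cast_id]; ring
    rw [this, ee_natCast, mul_comm h.val, pow_mul]
  simp only [key]
  have hsum : ∑ h : ZMod n, (om n ^ m.val) ^ h.val
      = ∑ i ∈ Finset.range n, (om n ^ m.val) ^ i := by
    refine Finset.sum_nbij' (fun h => h.val) (fun i => (i : ZMod n)) ?_ ?_ ?_ ?_ ?_
    · intro a _; exact Finset.mem_range.2 (ZMod.val_lt a)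
    · intro a _; exact Finset.mem_univ _
    · intro a _; simp [ZMod.natCast_val, ZMod.cast_id]
    · intro i hi; exact ZMod.val_natCast_of_lt (Finset.mem_range.1 hi)
    · intro a _; rfl
  rw [hsum]
  by_cases hm : m = 0
  · simp [hm, ZMod.val_zero]
  · rw [if_neg hm]
    have hne : om n ^ m.val ≠ 1 := by
      apply (om_prim n).pow_ne_one_of_pos_of_lt
      · exact fun h => hm (by rwa [← ZMod.val_eq_zero])
      · exact ZMod.val_lt m
    rw [geom_sum_eq hne]
    have : (om n ^ m.val) ^ n = 1 := by
      rw [← pow_mul, mul_comm, pow_mul, (om_prim n).pow_eq_one, one_pow]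
    rw [this, sub_self, zero_div]

lemma galois (P : ℚ[X]) (c : ℚ) (hc : aeval (om n) P = (c : ℂ)) (t : ℕ) (ht : t.Coprime n) :
    aeval (om n ^ t) P = (c : ℂ) := by
  have hn : 0 < n := Nat.pos_of_ne_zero (NeZero.ne n)
  have hroot : aeval (om n) (P - C c) = 0 := by
    rw [map_sub, hc, aeval_C]; simp
  have hdvd : minpoly ℚ (om n) ∣ P - C c := minpoly.dvd ℚ (om n) hroot
  have hmin : minpoly ℚ (om n) = cyclotomic n ℚ :=
    (cyclotomic_eq_minpoly_rat (om_prim n) hn).symm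
  have hprim' : IsPrimitiveRoot (om n ^ t) n := (om_prim n).pow_of_coprime t ht
  have hroot' : aeval (om n ^ t) (minpoly ℚ (om n)) = 0 := by
    rw [hmin]
    have := hprim'.isRoot_cyclotomic hn
    rw [aeval_def, eval₂_eq_eval_map, map_cyclotomic]
    exact this
  obtain ⟨Q, hQ⟩ := hdvd
  have hz : aeval (om n ^ t) (P - C c) = 0 := by
    rw [hQ, map_mul, hroot', zero_mul]
  have h2 : aeval (om n ^ t) P - (c : ℂ) = 0 := by
    rw [map_sub, aeval_C] at hz
    simpa using hz
  exact sub_eq_zero.1 h2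

lemma exists_unit (k l : ZMod n) (h : Nat.gcd k.val n = Nat.gcd l.val n) :
    ∃ u : (ZMod n)ˣ, (u : ZMod n) * k = l := by
  have hn : 0 < n := Nat.pos_of_ne_zero (NeZero.ne n)
  set d := Nat.gcd k.val n with hd
  have hdpos : 0 < d := Nat.gcd_pos_of_pos_right _ hn
  have hdn : d ∣ n := Nat.gcd_dvd_right _ _
  have hdk : d ∣ k.val := Nat.gcd_dvd_left _ _
  have hdl : d ∣ l.val := h ▸ Nat.gcd_dvd_left _ _
  set m := n / d with hm
  have hmn : m ∣ n := Nat.div_dvd_of_dvd hdn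
  have hdm : d * m = n := Nat.mul_div_cancel' hdn
  have hmpos : 0 < m := Nat.div_pos (Nat.le_of_dvd hn hdn) hdpos
  haveI : NeZero m := ⟨hmpos.ne'⟩
  set a := k.val / d with ha
  set b := l.val / d with hb
  have hca : Nat.Coprime a m := Nat.coprime_div_gcd_div_gcd hdpos
  have hcb : Nat.Coprime b m := by
    have := Nat.coprime_div_gcd_div_gcd (h ▸ hdpos : 0 < Nat.gcd l.val n)
    rwa [← h] at this
  let ua : (ZMod m)ˣ := ZMod.unitOfCoprime a hca
  let ub : (ZMod m)ˣ := ZMod.unitOfCoprime b hcb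
  obtain ⟨u, hu⟩ := ZMod.unitsMap_surjective hmn (ub * ua⁻¹)
  refine ⟨u, ?_⟩
  have h1 : (((u : ZMod n).val : ZMod m)) * (a : ZMod m) = (b : ZMod m) := by
    have : ((ZMod.unitsMap hmn u : (ZMod m)ˣ) : ZMod m) = ZMod.cast (u : ZMod n) := by
      simp [ZMod.unitsMap_def]
    rw [ZMod.natCast_val, ← this, hu]
    have hua : ((ua : (ZMod m)ˣ) : ZMod m) = (a : ZMod m) := rfl
    have hub : ((ub : (ZMod m)ˣ) : ZMod m) = (b : ZMod m) := rfl
    rw [Units.val_mul, mul_assoc, ← hua]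
    rw [← Units.val_mul, inv_mul_cancel, Units.val_one, mul_one, hub]
  have h2 : (u : ZMod n).val * a ≡ b [MOD m] := by
    apply (ZMod.natCast_eq_natCast_iff _ _ _).1
    push_cast
    exact h1
  have h3 : d * ((u : ZMod n).val * a) ≡ d * b [MOD d * m] := h2.mul_left' d
  rw [hdm] at h3
  have hka : d * a = k.val := Nat.mul_div_cancel' hdk
  have hlb : d * b = l.val := Nat.mul_div_cancel' hdl
  have h4 : (u : ZMod n).val * k.val ≡ l.val [MOD n] := by
    calc (u : ZMod n).val * k.val = d * ((u : ZMod n).val * a) := by rw [← hka]; ring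
    _ ≡ d * b [MOD n] := h3
    _ = l.val := hlb
  have h5 := (ZMod.natCast_eq_natCast_iff _ _ _).2 h4
  push_cast [ZMod.natCast_val, ZMod.cast_id] at h5
  exact h5

lemma lemA (g : ZMod n → ℕ)
    (hrat : ∀ h : ZMod n, ∃ c : ℚ, ∑ m : ZMod n, (g m : ℂ) * ee n (h * m) = (c : ℂ)) :
    ∀ k l : ZMod n, Nat.gcd k.val n = Nat.gcd l.val n → g k = g l := by
  set ghat : ZMod n → ℂ := fun h => ∑ m : ZMod n, (g m : ℂ) * ee n (h * m) with hghat
  have step1 : ∀ (u : (ZMod n)ˣ) (h : ZMod n), ghat ((u : ZMod n) * h) = ghat h := by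
    intro u h
    obtain ⟨c, hc⟩ := hrat h
    set t := (u : ZMod n).val with htdef
    have ht : Nat.Coprime t n := ZMod.val_coe_unit_coprime u
    set P : ℚ[X] := ∑ m : ZMod n, C (g m : ℚ) * X ^ (h * m).val with hP
    have hev : ∀ z : ℂ, aeval z P = ∑ m : ZMod n, (g m : ℂ) * z ^ (h * m).val := by
      intro z
      rw [hP, map_sum]
      apply Finset.sum_congr rfl
      intro m _
      rw [map_mul, aeval_C, map_pow, aeval_X]
      norm_num
    have h1 : aeval (om n) P = (c : ℂ) := by
      rw [hev, ← hc]
      apply Finset.sum_congr rfl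
      intro m _
      rfl
    have h2 := galois n P c h1 t ht
    rw [hev] at h2
    have h3 : ∀ m : ZMod n, (om n ^ t) ^ (h * m).val = ee n ((u : ZMod n) * h * m) := by
      intro m
      rw [← pow_mul, ← ee_natCast]
      congr 1
      simp only [htdef]
      push_cast [ZMod.natCast_val, ZMod.cast_id]
      ring
    calc ghat ((u : ZMod n) * h) = ∑ m : ZMod n, (g m : ℂ) * ee n ((u : ZMod n) * h * m) := rfl
    _ = ∑ m : ZMod n, (g m : ℂ) * (om n ^ t) ^ (h * m).val := by
        apply Finset.sum_congr rfl; intro m _; rw [h3]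
    _ = (c : ℂ) := h2
    _ = ghat h := hc.symm
  have step2 : ∀ k : ZMod n, ∑ h : ZMod n, ghat h * ee n (-(h * k)) = (n : ℂ) * g k := by
    intro k
    have e1 : ∀ h : ZMod n, ghat h * ee n (-(h * k))
        = ∑ m : ZMod n, (g m : ℂ) * ee n (h * (m - k)) := by
      intro h
      rw [hghat, Finset.sum_mul]
      apply Finset.sum_congr rfl
      intro m _
      rw [mul_assoc, ← ee_add]
      congr 2
      ring
    simp only [e1]
    rw [Finset.sum_comm]
    have e2 : ∀ m : ZMod n, ∑ h : ZMod n, (g m : ℂ) * ee n (h * (m - k))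
        = (g m : ℂ) * (if m - k = 0 then (n : ℂ) else 0) := by
      intro m
      rw [← Finset.mul_sum, sum_ee]
    simp only [e2]
    rw [Finset.sum_eq_single k]
    · simp [mul_comm]
    · intro m _ hm
      rw [if_neg (by simpa [sub_eq_zero] using hm), mul_zero]
    · intro hk; exact absurd (Finset.mem_univ k) hk
  intro k l hkl
  obtain ⟨u, hu⟩ := exists_unit n k l hkl
  have key : ∑ h : ZMod n, ghat h * ee n (-(h * l)) = ∑ h : ZMod n, ghat h * ee n (-(h * k)) := by
    refine Fintype.sum_equiv (Units.mulLeft u) _ _ ?_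
    intro h
    have he : (Units.mulLeft u) h = (u : ZMod n) * h := rfl
    rw [he, step1 u h]
    congr 2
    rw [← hu]
    ring
  rw [step2, step2] at key
  have hne : (n : ℂ) ≠ 0 := Nat.cast_ne_zero.2 (NeZero.ne n)
  have hcancel := mul_left_cancel₀ hne key
  exact_mod_cast hcancel.symm

end MyAux

lemma mem_spectrum_of_eigen {V : Type*} [Fintype V] [DecidableEq V]
    (M : Matrix V V ℂ) (v : V → ℂ) (hv : v ≠ 0) (μ : ℂ)
    (h : M.mulVec v = μ • v) : μ ∈ spectrum ℂ M := by
  rw [spectrum.mem_iff]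
  intro hU
  have halg : algebraMap ℂ (Matrix V V ℂ) μ = μ • (1 : Matrix V V ℂ) :=
    Algebra.algebraMap_eq_smul_one μ
  set N := algebraMap ℂ (Matrix V V ℂ) μ - M with hN
  have hNv : N.mulVec v = 0 := by
    rw [hN, Matrix.sub_mulVec, halg, Matrix.smul_mulVec, Matrix.one_mulVec, h, sub_self]
  obtain ⟨N', hN'⟩ := hU.exists_left_inv
  have hv0 : v = 0 := by
    calc v = (1 : Matrix V V ℂ).mulVec v := (Matrix.one_mulVec v).symm
    _ = (N' * N).mulVec v := by rw [hN']
    _ = N'.mulVec (N.mulVec v) := by rw [Matrix.mulVec_mulVec]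
    _ = N'.mulVec 0 := by rw [hNv]
    _ = 0 := Matrix.mulVec_zero _
  exact hv hv0

def toidx {n : ℕ} : DihedralGroup n → ZMod n
  | .r j => j
  | .sr j => j

noncomputable def eigvec (n : ℕ) [NeZero n] (h : ZMod n) (u w : ℂ) : DihedralGroup n → ℂ
  | .r j => u * ee n (h * j)
  | .sr j => w * ee n (-(h * j))

@[simp] lemma eigvec_r (n : ℕ) [NeZero n] (h : ZMod n) (u w : ℂ) (j : ZMod n) :
    eigvec n h u w (.r j) = u * ee n (h * j) := rfl

@[simp] lemma eigvec_sr (n : ℕ) [NeZero n] (h : ZMod n) (u w : ℂ) (j : ZMod n) :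
    eigvec n h u w (.sr j) = w * ee n (-(h * j)) := rfl


/-- Corollary 3.4. If `X(D_n,S)` is integral, then `S₁ ∈ B(⟨a⟩)` and the
multiset `S₂²` (multiplicities over ordered pairs) lies in the integral cone `C(⟨a⟩)`,
i.e. its multiplicity function is constant on each atom of `⟨a⟩`. -/
theorem stmt3 (n : ℕ) (hn : 3 ≤ n) [NeZero n]
    (S S₁ S₂ : Set (DihedralGroup n)) (hS : S = S₁ ∪ S₂)
    (h1 : (1 : DihedralGroup n) ∉ S) (hSinv : S⁻¹ = S)
    (hS₁ : S₁ ⊆ rSet n) (hS₂ : S₂ ⊆ srSet n)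
    (hint : IsIntegralGraph (cayleyGraph S)) :
    InBooleanAlgebra n S₁ ∧
      ∀ k l : ZMod n, Nat.gcd k.val n = Nat.gcd l.val n →
        sqMult S₂ (DihedralGroup.r k) = sqMult S₂ (DihedralGroup.r l) := by
  classical
  set T₁ : Finset (ZMod n) := Finset.univ.filter (fun k => DihedralGroup.r k ∈ S₁) with hT₁
  set T₂ : Finset (ZMod n) := Finset.univ.filter (fun k => DihedralGroup.sr k ∈ S₂) with hT₂
  -- S₁ is exactly the rotation part of S
  have hS₁S : ∀ x, x ∈ S₁ ↔ x ∈ S ∧ x ∈ rSet n := by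
    intro x
    constructor
    · intro hx; exact ⟨hS ▸ Set.mem_union_left _ hx, hS₁ hx⟩
    · rintro ⟨hxS, hxr⟩
      rw [hS] at hxS
      rcases hxS with hx | hx
      · exact hx
      · exfalso
        obtain ⟨k, rfl⟩ := hxr
        obtain ⟨l, hl⟩ := hS₂ hx
        exact absurd hl (by simp)
  have hr_inv : ∀ i : ZMod n, (DihedralGroup.r i)⁻¹ = DihedralGroup.r (-i) := fun i => rfl
  have hmemS_inv : ∀ x : DihedralGroup n, x ∈ S → x⁻¹ ∈ S := by
    intro x hx
    rw [← hSinv]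
    rw [Set.mem_inv, inv_inv]
    exact hx
  have hsym : ∀ k : ZMod n, DihedralGroup.r k ∈ S₁ → DihedralGroup.r (-k) ∈ S₁ := by
    intro k hk
    rw [hS₁S] at hk ⊢
    refine ⟨?_, ⟨-k, rfl⟩⟩
    have := hmemS_inv _ hk.1
    rwa [hr_inv] at this
  -- adjacency
  have adj_iff : ∀ x y : DihedralGroup n, (cayleyGraph S).Adj x y ↔ x⁻¹ * y ∈ S := by
    intro x y
    rw [cayleyGraph, SimpleGraph.fromRel_adj]
    constructor
    · rintro ⟨hne, hxy | hyx⟩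
      · exact hxy
      · have := hmemS_inv _ hyx
        rwa [mul_inv_rev, inv_inv] at this
    · intro hxy
      refine ⟨?_, Or.inl hxy⟩
      rintro rfl
      apply h1
      simpa using hxy
  -- eigenvalue machinery
  have heigen : ∀ (h : ZMod n) (μ u w : ℂ),
      u * (∑ k ∈ T₁, ee n (h * k)) + w * (∑ k ∈ T₂, ee n (-(h * k))) = μ * u →
      w * (∑ k ∈ T₁, ee n (h * k)) + u * (∑ k ∈ T₂, ee n (h * k)) = μ * w →
      (u ≠ 0 ∨ w ≠ 0) →
      ∃ z : ℤ, μ = (z : ℂ) := by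
    intro h μ u w hu hw hne
    apply hint
    have hvne : eigvec n h u w ≠ 0 := by
      intro h0
      rcases hne with hu0 | hw0
      · apply hu0
        have := congrFun h0 (DihedralGroup.r 0)
        rw [eigvec_r, mul_zero, ee_zero, mul_one] at this
        exact this
      · apply hw0
        have := congrFun h0 (DihedralGroup.sr 0)
        simpa [mul_zero, ee_zero] using this
    apply mem_spectrum_of_eigen _ (eigvec n h u w) hvne μ
    funext x
    have hrow : (adjMat (cayleyGraph S)).mulVec (eigvec n h u w) x
        = ∑ s ∈ Finset.univ.filter (· ∈ S), eigvec n h u w (x * s) := by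
      simp only [Matrix.mulVec, dotProduct, adjMat, Matrix.of_apply]
      have e0 : ∀ y : DihedralGroup n,
          (if (cayleyGraph S).Adj x y then (1 : ℂ) else 0) * eigvec n h u w y
          = if x⁻¹ * y ∈ S then eigvec n h u w y else 0 := by
        intro y
        by_cases hxy : x⁻¹ * y ∈ S
        · rw [if_pos ((adj_iff x y).2 hxy), if_pos hxy, one_mul]
        · rw [if_neg (fun hA => hxy ((adj_iff x y).1 hA)), if_neg hxy, zero_mul]
      rw [Finset.sum_congr rfl (fun y _ => e0 y), ← Finset.sum_filter]
      refine Finset.sum_nbij' (fun y => x⁻¹ * y) (fun s => x * s) ?_ ?_ ?_ ?_ ?_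
      · intro y hy
        simp only [Finset.mem_filter, Finset.mem_univ, true_and] at hy ⊢
        exact hy
      · intro s hs
        simp only [Finset.mem_filter, Finset.mem_univ, true_and] at hs ⊢
        simpa using hs
      · intro y _; simp
      · intro s _; simp
      · intro y _; rw [mul_inv_cancel_left]
    rw [hrow]
    have hsplit : Finset.univ.filter (· ∈ S)
        = (Finset.univ.filter (· ∈ S₁)) ∪ (Finset.univ.filter (· ∈ S₂)) := by
      ext s; simp [hS]
    have hdisj : Disjoint (Finset.univ.filter (· ∈ S₁)) (Finset.univ.filter (· ∈ S₂)) := by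
      rw [Finset.disjoint_left]
      intro s hs1 hs2
      obtain ⟨k, rfl⟩ := hS₁ (Finset.mem_filter.1 hs1).2
      obtain ⟨l, hl⟩ := hS₂ (Finset.mem_filter.1 hs2).2
      simp at hl
    rw [hsplit, Finset.sum_union hdisj]
    have hsum1 : ∑ s ∈ Finset.univ.filter (· ∈ S₁), eigvec n h u w (x * s)
        = ∑ k ∈ T₁, eigvec n h u w (x * DihedralGroup.r k) := by
      refine Finset.sum_nbij' (fun s => toidx s) (fun k => DihedralGroup.r k) ?_ ?_ ?_ ?_ ?_
      · intro s hs
        obtain ⟨k, rfl⟩ := hS₁ (Finset.mem_filter.1 hs).2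
        simp only [hT₁, Finset.mem_filter, Finset.mem_univ, true_and, toidx]
        exact (Finset.mem_filter.1 hs).2
      · intro k hk
        simp only [hT₁, Finset.mem_filter, Finset.mem_univ, true_and] at hk
        simp only [Finset.mem_filter, Finset.mem_univ, true_and]
        exact hk
      · intro s hs
        obtain ⟨k, rfl⟩ := hS₁ (Finset.mem_filter.1 hs).2
        rfl
      · intro k _; rfl
      · intro s hs
        obtain ⟨k, rfl⟩ := hS₁ (Finset.mem_filter.1 hs).2
        rfl
    have hsum2 : ∑ s ∈ Finset.univ.filter (· ∈ S₂), eigvec n h u w (x * s)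
        = ∑ k ∈ T₂, eigvec n h u w (x * DihedralGroup.sr k) := by
      refine Finset.sum_nbij' (fun s => toidx s) (fun k => DihedralGroup.sr k) ?_ ?_ ?_ ?_ ?_
      · intro s hs
        obtain ⟨k, rfl⟩ := hS₂ (Finset.mem_filter.1 hs).2
        simp only [hT₂, Finset.mem_filter, Finset.mem_univ, true_and, toidx]
        exact (Finset.mem_filter.1 hs).2
      · intro k hk
        simp only [hT₂, Finset.mem_filter, Finset.mem_univ, true_and] at hk
        simp only [Finset.mem_filter, Finset.mem_univ, true_and]
        exact hk
      · intro s hs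
        obtain ⟨k, rfl⟩ := hS₂ (Finset.mem_filter.1 hs).2
        rfl
      · intro k _; rfl
      · intro s hs
        obtain ⟨k, rfl⟩ := hS₂ (Finset.mem_filter.1 hs).2
        rfl
    rw [hsum1, hsum2]
    have hT₁neg : ∑ k ∈ T₁, ee n (-(h * k)) = ∑ k ∈ T₁, ee n (h * k) := by
      refine Finset.sum_nbij' (fun k => -k) (fun k => -k) ?_ ?_ ?_ ?_ ?_
      · intro k hk
        simp only [hT₁, Finset.mem_filter, Finset.mem_univ, true_and] at hk ⊢
        exact hsym k hk
      · intro k hk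
        simp only [hT₁, Finset.mem_filter, Finset.mem_univ, true_and] at hk ⊢
        exact hsym k hk
      · intro k _; simp
      · intro k _; simp
      · intro k _
        congr 1
        ring
    cases x with
    | r j =>
      have e1 : ∀ k ∈ T₁, eigvec n h u w (DihedralGroup.r j * DihedralGroup.r k)
          = u * ee n (h * j) * ee n (h * k) := by
        intro k _
        rw [DihedralGroup.r_mul_r, eigvec_r,
          show h * (j + k) = h * j + h * k by ring, ee_add]
        ring
      have e2 : ∀ k ∈ T₂, eigvec n h u w (DihedralGroup.r j * DihedralGroup.sr k)
          = w * ee n (h * j) * ee n (-(h * k)) := by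
        intro k _
        rw [DihedralGroup.r_mul_sr, eigvec_sr,
          show -(h * (k - j)) = h * j + -(h * k) by ring, ee_add]
        ring
      rw [Finset.sum_congr rfl e1, Finset.sum_congr rfl e2, ← Finset.mul_sum, ← Finset.mul_sum]
      have : (μ • eigvec n h u w) (DihedralGroup.r j) = μ * (u * ee n (h * j)) := by
        simp [Pi.smul_apply, smul_eq_mul]
      rw [this]
      linear_combination ee n (h * j) * hu
    | sr j =>
      have e1 : ∀ k ∈ T₁, eigvec n h u w (DihedralGroup.sr j * DihedralGroup.r k)
          = w * ee n (-(h * j)) * ee n (-(h * k)) := by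
        intro k _
        rw [DihedralGroup.sr_mul_r, eigvec_sr,
          show -(h * (j + k)) = -(h * j) + -(h * k) by ring, ee_add]
        ring
      have e2 : ∀ k ∈ T₂, eigvec n h u w (DihedralGroup.sr j * DihedralGroup.sr k)
          = u * ee n (-(h * j)) * ee n (h * k) := by
        intro k _
        rw [DihedralGroup.sr_mul_sr, eigvec_r,
          show h * (k - j) = -(h * j) + h * k by ring, ee_add]
        ring
      rw [Finset.sum_congr rfl e1, Finset.sum_congr rfl e2, ← Finset.mul_sum, ← Finset.mul_sum,
        hT₁neg]
      have : (μ • eigvec n h u w) (DihedralGroup.sr j) = μ * (w * ee n (-(h * j))) := by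
        simp [Pi.smul_apply, smul_eq_mul]
      rw [this]
      linear_combination ee n (-(h * j)) * hw
  -- integer eigenvalue consequences
  have hspec : ∀ h : ZMod n, ∃ p q : ℤ,
      (∑ k ∈ T₁, ee n (h * k)) = ((p : ℂ) + q) / 2 ∧
      (∑ k ∈ T₂, ee n (-(h * k))) * (∑ k ∈ T₂, ee n (h * k)) = (((p : ℂ) - q) / 2) ^ 2 := by
    intro h
    set A := ∑ k ∈ T₁, ee n (h * k) with hA
    set B := ∑ k ∈ T₂, ee n (-(h * k)) with hB
    set B' := ∑ k ∈ T₂, ee n (h * k) with hB'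
    by_cases hBz : B = 0
    · obtain ⟨z, hz⟩ := heigen h A 0 1 (by simp only [← hA, ← hB, ← hB']; rw [hBz]; ring)
        (by simp only [← hA, ← hB, ← hB']; ring) (Or.inr one_ne_zero)
      refine ⟨z, z, by rw [hz]; ring, by rw [hBz]; simp⟩
    · obtain ⟨t, ht⟩ : ∃ t : ℂ, t ^ 2 = B * B' := by
        by_cases hz : B * B' = 0
        · exact ⟨0, by rw [hz]; ring⟩
        · refine ⟨Complex.exp (Complex.log (B * B') / 2), ?_⟩
          have e : Complex.log (B * B') / 2 + Complex.log (B * B') / 2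
              = Complex.log (B * B') := by ring
          rw [sq, ← Complex.exp_add, e]
          exact Complex.exp_log hz
      obtain ⟨z₁, hz₁⟩ := heigen h (A + t) B t
        (by simp only [← hA, ← hB, ← hB']; ring)
        (by simp only [← hA, ← hB, ← hB']; linear_combination -ht) (Or.inl hBz)
      obtain ⟨z₂, hz₂⟩ := heigen h (A - t) B (-t)
        (by simp only [← hA, ← hB, ← hB']; ring)
        (by simp only [← hA, ← hB, ← hB']; linear_combination -ht) (Or.inl hBz)
      refine ⟨z₁, z₂, by linear_combination (hz₁ + hz₂) / 2, ?_⟩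
      have htv : t = ((z₁ : ℂ) - z₂) / 2 := by linear_combination (hz₁ - hz₂) / 2
      calc B * B' = t ^ 2 := ht.symm
      _ = (((z₁ : ℂ) - z₂) / 2) ^ 2 := by rw [htv]
  -- the S₁ indicator function
  have hrat₁ : ∀ h : ZMod n, ∃ c : ℚ, ∑ m : ZMod n,
      ((if DihedralGroup.r m ∈ S₁ then 1 else 0 : ℕ) : ℂ) * ee n (h * m) = (c : ℂ) := by
    intro h
    obtain ⟨p, q, hA, -⟩ := hspec h
    refine ⟨((p : ℚ) + q) / 2, ?_⟩
    have e : ∑ m : ZMod n, ((if DihedralGroup.r m ∈ S₁ then 1 else 0 : ℕ) : ℂ) * ee n (h * m)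
        = ∑ k ∈ T₁, ee n (h * k) := by
      rw [hT₁, Finset.sum_filter]
      apply Finset.sum_congr rfl
      intro m _
      by_cases hm : DihedralGroup.r m ∈ S₁ <;> simp [hm]
    rw [e, hA]
    push_cast
    ring
  have hcon₁ := lemA n _ hrat₁
  -- the sqMult function
  have hsq : ∀ m : ZMod n, sqMult S₂ (DihedralGroup.r m)
      = ((T₂ ×ˢ T₂).filter (fun p => p.2 - p.1 = m)).card := by
    intro m
    rw [sqMult, Nat.card_eq_fintype_card, Fintype.card_subtype]
    refine Finset.card_nbij' (fun p => (toidx p.1, toidx p.2))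
      (fun q => (DihedralGroup.sr q.1, DihedralGroup.sr q.2)) ?_ ?_ ?_ ?_
    · intro p hp
      simp only [Finset.mem_coe, Finset.mem_filter, Finset.mem_univ, true_and] at hp
      obtain ⟨hp1, hp2, hp3⟩ := hp
      obtain ⟨k, hk⟩ := hS₂ hp1
      obtain ⟨l, hl⟩ := hS₂ hp2
      rw [hk, hl] at hp3
      rw [DihedralGroup.sr_mul_sr] at hp3
      have hlk : l - k = m := by
        have := hp3
        simpa using this
      simp only [Finset.mem_coe, Finset.mem_filter, Finset.mem_product, hT₂, Finset.mem_univ, true_and]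
      rw [hk, hl]
      refine ⟨⟨?_, ?_⟩, ?_⟩
      · show DihedralGroup.sr k ∈ S₂; rw [← hk]; exact hp1
      · show DihedralGroup.sr l ∈ S₂; rw [← hl]; exact hp2
      · show l - k = m; exact hlk
    · intro q hq
      simp only [Finset.mem_coe, Finset.mem_filter, Finset.mem_product, hT₂, Finset.mem_univ, true_and] at hq
      simp only [Finset.mem_coe, Finset.mem_filter, Finset.mem_univ, true_and]
      refine ⟨hq.1.1, hq.1.2, ?_⟩
      rw [DihedralGroup.sr_mul_sr, hq.2]
    · intro p hp
      simp only [Finset.mem_coe, Finset.mem_filter, Finset.mem_univ, true_and] at hp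
      obtain ⟨hp1, hp2, -⟩ := hp
      obtain ⟨k, hk⟩ := hS₂ hp1
      obtain ⟨l, hl⟩ := hS₂ hp2
      obtain ⟨p1, p2⟩ := p
      simp only at hk hl
      rw [hk, hl]
      rfl
    · intro q _
      rfl
  have hrat₂ : ∀ h : ZMod n, ∃ c : ℚ, ∑ m : ZMod n,
      ((sqMult S₂ (DihedralGroup.r m) : ℕ) : ℂ) * ee n (h * m) = (c : ℂ) := by
    intro h
    obtain ⟨p, q, -, hBB⟩ := hspec h
    refine ⟨(((p : ℚ) - q) / 2) ^ 2, ?_⟩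
    have key : ∑ m : ZMod n, ((sqMult S₂ (DihedralGroup.r m) : ℕ) : ℂ) * ee n (h * m)
        = (∑ k ∈ T₂, ee n (-(h * k))) * (∑ k ∈ T₂, ee n (h * k)) := by
      rw [Finset.sum_mul_sum]
      calc ∑ m : ZMod n, ((sqMult S₂ (DihedralGroup.r m) : ℕ) : ℂ) * ee n (h * m)
          = ∑ m : ZMod n, ∑ _p ∈ (T₂ ×ˢ T₂).filter (fun p => p.2 - p.1 = m),
              ee n (h * m) := by
            apply Finset.sum_congr rfl
            intro m _
            rw [hsq m, Finset.sum_const, nsmul_eq_mul]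
      _ = ∑ m : ZMod n, ∑ p ∈ (T₂ ×ˢ T₂).filter (fun p => p.2 - p.1 = m),
              ee n (h * (p.2 - p.1)) := by
            apply Finset.sum_congr rfl
            intro m _
            apply Finset.sum_congr rfl
            intro p hp
            rw [(Finset.mem_filter.1 hp).2]
      _ = ∑ p ∈ T₂ ×ˢ T₂, ee n (h * (p.2 - p.1)) :=
            Finset.sum_fiberwise (T₂ ×ˢ T₂) (fun p => p.2 - p.1) _
      _ = ∑ k ∈ T₂, ∑ l ∈ T₂, ee n (h * (l - k)) := by rw [Finset.sum_product]
      _ = ∑ k ∈ T₂, ∑ l ∈ T₂, ee n (-(h * k)) * ee n (h * l) := by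
            apply Finset.sum_congr rfl
            intro k _
            apply Finset.sum_congr rfl
            intro l _
            rw [← ee_add]
            congr 1
            ring
    rw [key, hBB]
    push_cast
    ring
  have hcon₂ := lemA n _ hrat₂
  refine ⟨⟨hS₁, ?_⟩, ?_⟩
  · intro k l hkl
    have := hcon₁ k l hkl
    by_cases h1' : DihedralGroup.r k ∈ S₁ <;> by_cases h2' : DihedralGroup.r l ∈ S₁ <;>
      simp [h1', h2'] at this ⊢
  · intro k l hkl
    exact hcon₂ k l hkl
end

section
/- Let p be an odd prime, let D_p = ⟨a,b | a^p = b^2 = 1, bab = a^{-1}⟩, and let S = S₁ ∪ S₂ ⊆ D_p∖{1} with S = S^{-1}, where S₁ ⊆ ⟨a⟩ and S₂ ⊆ b⟨a⟩. Then the Cayley graph X(D_p,S) is integral if and only if S₁ is a union of atoms of B(⟨a⟩) (i.e., S₁ ∈ {∅, ⟨a⟩∖{1}, ⟨a⟩∖{1} treated as a union of atoms}) and S₂ is one of: b⟨a⟩∖{ba^k} for some 0 ≤ k ≤ p−1, the full coset b⟨a⟩, a singleton {ba^k} for some 0 ≤ k ≤ p−1, or the empty set. -/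
open DihedralGroup Polynomial

namespace IntDih
open Matrix DihedralGroup Polynomial
set_option linter.unusedSectionVars false
set_option maxHeartbeats 1000000
variable {p : ℕ} [NeZero p]
variable {S S₁ S₂ : Set (DihedralGroup p)}
variable {c j : ZMod p}

def sumEquiv (p : ℕ) : (ZMod p ⊕ ZMod p) ≃ DihedralGroup p where
  toFun := Sum.elim DihedralGroup.r DihedralGroup.sr
  invFun x := match x with
    | .r j => Sum.inl j
    | .sr j => Sum.inr j
  left_inv := by rintro (x | x) <;> rfl
  right_inv := by rintro (x | x) <;> rfl

lemma sum_dihedral {M : Type*} [AddCommMonoid M] (f : DihedralGroup p → M) :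
    ∑ x, f x = ∑ j : ZMod p, f (.r j) + ∑ j : ZMod p, f (.sr j) := by
  rw [← (sumEquiv p).sum_comp f, Fintype.sum_sum_type]
  rfl

variable {S : Set (DihedralGroup p)}

lemma adj_iff (hSinv : S⁻¹ = S) (h1 : (1 : DihedralGroup p) ∉ S)
    (x y : DihedralGroup p) : (cayleyGraph S).Adj x y ↔ x⁻¹ * y ∈ S := by
  constructor
  · rintro ⟨hne, h | h⟩
    · exact h
    · rw [← hSinv] at h
      simpa using h
  · intro h
    refine ⟨?_, Or.inl h⟩
    rintro rfl
    simp at h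
    exact h1 h

open scoped Classical in
lemma adjMat_apply (hSinv : S⁻¹ = S) (h1 : (1 : DihedralGroup p) ∉ S)
    (x y : DihedralGroup p) :
    adjMat (cayleyGraph S) x y = if x⁻¹ * y ∈ S then 1 else 0 := by
  simp only [adjMat, Matrix.of_apply]
  by_cases h : x⁻¹ * y ∈ S
  · rw [if_pos ((adj_iff hSinv h1 x y).2 h), if_pos h]
  · rw [if_neg (fun hc => h ((adj_iff hSinv h1 x y).1 hc)), if_neg h]

/-- right-translation permutation matrix -/
noncomputable def Rm (g : DihedralGroup p) : Matrix (DihedralGroup p) (DihedralGroup p) ℂ :=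
  Matrix.of fun x y => if y = x * g then 1 else 0

lemma Rm_mul (g h : DihedralGroup p) : Rm g * Rm h = Rm (g * h) := by
  ext x y
  simp only [Rm, Matrix.mul_apply, Matrix.of_apply]
  rw [Finset.sum_eq_single (x * g)]
  · simp [mul_assoc]
  · intro b _ hb
    simp [hb]
  · simp

lemma Rm_one : (Rm (1 : DihedralGroup p)) = 1 := by
  ext x y
  simp only [Rm, Matrix.of_apply, mul_one, Matrix.one_apply]
  by_cases h : x = y <;> simp [h, eq_comm]

noncomputable def Um (p : ℕ) [NeZero p] : Matrix (DihedralGroup p) (DihedralGroup p) ℂ :=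
  ∑ k : ZMod p, Rm (.r k)

noncomputable def Wm (p : ℕ) [NeZero p] : Matrix (DihedralGroup p) (DihedralGroup p) ℂ :=
  ∑ k : ZMod p, Rm (.sr k)

lemma card_smul (A : Matrix (DihedralGroup p) (DihedralGroup p) ℂ) :
    ∑ _j : ZMod p, A = (p : ℂ) • A := by
  rw [Finset.sum_const, Finset.card_univ, ZMod.card, Nat.cast_smul_eq_nsmul]

variable {c j : ZMod p}

lemma r_mul_Um : Rm (.r j) * Um p = Um p := by
  conv_lhs => rw [Um, Finset.mul_sum]
  simp only [Rm_mul, r_mul_r]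
  rw [Um]; exact Fintype.sum_equiv (Equiv.addLeft j) _ _ (fun k => rfl)

lemma Um_mul_r : Um p * Rm (.r j) = Um p := by
  conv_lhs => rw [Um, Finset.sum_mul]
  simp only [Rm_mul, r_mul_r]
  rw [Um]; exact Fintype.sum_equiv (Equiv.addRight j) _ _ (fun k => rfl)

lemma r_mul_Wm : Rm (.r j) * Wm p = Wm p := by
  conv_lhs => rw [Wm, Finset.mul_sum]
  simp only [Rm_mul, r_mul_sr]
  rw [Wm]; exact Fintype.sum_equiv (Equiv.subRight j) _ _ (fun k => rfl)

lemma Wm_mul_r : Wm p * Rm (.r j) = Wm p := by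
  conv_lhs => rw [Wm, Finset.sum_mul]
  simp only [Rm_mul, sr_mul_r]
  rw [Wm]; exact Fintype.sum_equiv (Equiv.addRight j) _ _ (fun k => rfl)

lemma sr_mul_Um : Rm (.sr c) * Um p = Wm p := by
  conv_lhs => rw [Um, Finset.mul_sum]
  simp only [Rm_mul, sr_mul_r]
  rw [Wm]; exact Fintype.sum_equiv (Equiv.addLeft c) _ _ (fun k => rfl)

lemma Um_mul_sr : Um p * Rm (.sr c) = Wm p := by
  conv_lhs => rw [Um, Finset.sum_mul]
  simp only [Rm_mul, r_mul_sr]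
  rw [Wm]; exact Fintype.sum_equiv (Equiv.subLeft c) _ _ (fun k => rfl)

lemma sr_mul_Wm : Rm (.sr c) * Wm p = Um p := by
  conv_lhs => rw [Wm, Finset.mul_sum]
  simp only [Rm_mul, sr_mul_sr]
  rw [Um]; exact Fintype.sum_equiv (Equiv.subRight c) _ _ (fun k => rfl)

lemma Wm_mul_sr : Wm p * Rm (.sr c) = Um p := by
  conv_lhs => rw [Wm, Finset.sum_mul]
  simp only [Rm_mul, sr_mul_sr]
  rw [Um]; exact Fintype.sum_equiv (Equiv.subLeft c) _ _ (fun k => rfl)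

lemma sr_mul_self_K : Rm (.sr c) * Rm (.sr c) = 1 := by
  rw [Rm_mul, DihedralGroup.sr_mul_self, Rm_one]

lemma Um_mul_Um : Um p * Um p = (p : ℂ) • Um p := by
  conv_lhs => rw [Um, Finset.sum_mul]
  rw [← card_smul (Um p)]
  exact Finset.sum_congr rfl fun j _ => r_mul_Um

lemma Um_mul_Wm : Um p * Wm p = (p : ℂ) • Wm p := by
  conv_lhs => rw [Um, Finset.sum_mul]
  rw [← card_smul (Wm p)]
  exact Finset.sum_congr rfl fun j _ => r_mul_Wm

lemma Wm_mul_Um : Wm p * Um p = (p : ℂ) • Wm p := by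
  conv_lhs => rw [Wm, Finset.sum_mul]
  rw [← card_smul (Wm p)]
  exact Finset.sum_congr rfl fun j _ => sr_mul_Um

lemma Wm_mul_Wm : Wm p * Wm p = (p : ℂ) • Um p := by
  conv_lhs => rw [Wm, Finset.sum_mul]
  rw [← card_smul (Um p)]
  exact Finset.sum_congr rfl fun j _ => sr_mul_Wm

lemma annihilate (a w s : ℂ) (c : ZMod p)
    (M : Matrix (DihedralGroup p) (DihedralGroup p) ℂ)
    (hM : M = a • Um p + w • Wm p + s • Rm (.sr c) - a • 1) :
    (M - (a*(p-1)+(p:ℂ)*w+s) • 1) * (M - (a*(p-1)-(p:ℂ)*w-s) • 1) *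
      (M - (-a+s) • 1) * (M - (-a-s) • 1) = 0 := by
  have hMU : M * Um p = (a*((p:ℂ)-1)) • Um p + ((p:ℂ)*w+s) • Wm p := by
    rw [hM]
    simp only [sub_mul, add_mul, smul_mul_assoc, one_mul, Um_mul_Um, Wm_mul_Um, sr_mul_Um]
    module
  have hMW : M * Wm p = ((p:ℂ)*w+s) • Um p + (a*((p:ℂ)-1)) • Wm p := by
    rw [hM]
    simp only [sub_mul, add_mul, smul_mul_assoc, one_mul, Um_mul_Wm, Wm_mul_Wm, sr_mul_Wm]
    module
  have hP1 : (M - (a*(p-1)+(p:ℂ)*w+s) • 1) * (Um p + Wm p) = 0 := by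
    rw [sub_mul, mul_add, hMU, hMW, smul_mul_assoc, one_mul]
    module
  have hP2 : (M - (a*(p-1)-(p:ℂ)*w-s) • 1) * (Um p - Wm p) = 0 := by
    rw [sub_mul, mul_sub, hMU, hMW, smul_mul_assoc, one_mul]
    module
  have hQ : (M - (-a+s) • 1) * (M - (-a-s) • 1)
      = ((p:ℂ)*(a^2+w^2)+2*w*s) • Um p + (2*a*w*(p:ℂ)+2*a*s) • Wm p := by
    rw [sub_mul, mul_sub, mul_sub, hM]
    simp only [sub_mul, add_mul, mul_sub, mul_add, smul_mul_assoc, mul_smul_comm, one_mul,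
      mul_one, Um_mul_Um, Um_mul_Wm, Wm_mul_Um, Wm_mul_Wm, sr_mul_Um, Um_mul_sr, sr_mul_Wm,
      Wm_mul_sr, sr_mul_self_K, smul_smul]
    module
  have hcomm : ∀ α β : ℂ, (M - α • 1) * (M - β • 1) = (M - β • 1) * (M - α • 1) := by
    intro α β
    simp only [sub_mul, mul_sub, smul_mul_assoc, mul_smul_comm, one_mul, mul_one, smul_smul]
    module
  set x := (p:ℂ)*(a^2+w^2)+2*w*s
  set y := 2*a*w*(p:ℂ)+2*a*s
  have hxy : x • Um p + y • Wm p
      = ((x+y)/2) • (Um p + Wm p) + ((x-y)/2) • (Um p - Wm p) := by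
    match_scalars <;> ring
  set A := M - (a*(p-1)+(p:ℂ)*w+s) • 1 with hA
  set B := M - (a*(p-1)-(p:ℂ)*w-s) • 1 with hB
  have h1 : A * B * (((x+y)/2) • (Um p + Wm p)) = 0 := by
    rw [show A * B = B * A from hcomm _ _, mul_smul_comm, mul_assoc, hP1, mul_zero, smul_zero]
  have h2 : A * B * (((x-y)/2) • (Um p - Wm p)) = 0 := by
    rw [mul_smul_comm, mul_assoc, hP2, mul_zero, smul_zero]
  rw [mul_assoc, hQ, hxy, mul_add, h1, h2, add_zero]

-- entry lemmas
open scoped Classical in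
lemma Rm_entry (g h : DihedralGroup p) (x : DihedralGroup p) :
    Rm g x (x * h) = if h = g then 1 else 0 := by
  simp only [Rm, Matrix.of_apply, mul_right_inj]

lemma Um_entry_r (x : DihedralGroup p) (m : ZMod p) : Um p x (x * .r m) = 1 := by
  simp only [Um, Matrix.sum_apply, Rm_entry, DihedralGroup.r.injEq]
  simp

lemma Um_entry_sr (x : DihedralGroup p) (m : ZMod p) : Um p x (x * .sr m) = 0 := by
  simp only [Um, Matrix.sum_apply, Rm_entry]
  simp

lemma Wm_entry_r (x : DihedralGroup p) (m : ZMod p) : Wm p x (x * .r m) = 0 := by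
  simp only [Wm, Matrix.sum_apply, Rm_entry]
  simp

lemma Wm_entry_sr (x : DihedralGroup p) (m : ZMod p) : Wm p x (x * .sr m) = 1 := by
  simp only [Wm, Matrix.sum_apply, Rm_entry, DihedralGroup.sr.injEq]
  simp

lemma one_entry (x h : DihedralGroup p) :
    (1 : Matrix (DihedralGroup p) (DihedralGroup p) ℂ) x (x * h) = if h = 1 then 1 else 0 := by
  rw [Matrix.one_apply]
  by_cases hh : h = 1 <;> simp [hh]

variable {S S₁ S₂ : Set (DihedralGroup p)}

open scoped Classical in
lemma matrix_form (hS : S = S₁ ∪ S₂) (h1 : (1 : DihedralGroup p) ∉ S) (hSinv : S⁻¹ = S)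
    (hS₁ : S₁ ⊆ rSet p) (hS₂ : S₂ ⊆ srSet p)
    (hBA : ∀ m : ZMod p, m ≠ 0 → ((.r m : DihedralGroup p) ∈ S₁ ↔ (.r 1 : DihedralGroup p) ∈ S₁))
    (a w s : ℂ) (c : ZMod p)
    (ha : a = if (.r 1 : DihedralGroup p) ∈ S₁ then 1 else 0)
    (h2 : ∀ m : ZMod p, (if (.sr m : DihedralGroup p) ∈ S₂ then (1:ℂ) else 0)
      = w + s * (if m = c then 1 else 0)) :
    adjMat (cayleyGraph S) = a • Um p + w • Wm p + s • Rm (.sr c) - a • 1 := by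
  have hr0 : (.r 0 : DihedralGroup p) ∉ S₁ := fun h => h1 (by rw [hS]; exact Or.inl (by rwa [one_def]))
  have key : ∀ (x g : DihedralGroup p),
      adjMat (cayleyGraph S) x (x * g) = (a • Um p + w • Wm p + s • Rm (.sr c) - a • 1) x (x * g) := by
    intro x g
    rw [adjMat_apply hSinv h1, inv_mul_cancel_left]
    simp only [Matrix.sub_apply, Matrix.add_apply, Matrix.smul_apply, smul_eq_mul]
    match g with
    | .r m =>
      rw [Um_entry_r, Wm_entry_r, Rm_entry, one_entry]
      have hnotmem : (.r m : DihedralGroup p) ∉ S₂ := fun h => by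
        obtain ⟨k, hk⟩ := hS₂ h; exact (by simp at hk)
      have hmem : ((.r m : DihedralGroup p) ∈ S) ↔ (.r m : DihedralGroup p) ∈ S₁ := by
        rw [hS]; simp [hnotmem]
      have e1 : (if (DihedralGroup.r m : DihedralGroup p) ∈ S then (1:ℂ) else 0)
          = if (DihedralGroup.r m : DihedralGroup p) ∈ S₁ then (1:ℂ) else 0 :=
        if_congr hmem rfl rfl
      have e3 : ((DihedralGroup.r m : DihedralGroup p) = 1) ↔ (m = 0) := by
        rw [one_def]; simp only [r.injEq]
      rw [e1, if_neg (show ¬(DihedralGroup.r m : DihedralGroup p) = .sr c from by simp),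
        if_congr e3 rfl rfl]
      by_cases hm : m = 0
      · rw [if_pos hm, if_neg (show (DihedralGroup.r m : DihedralGroup p) ∉ S₁ from hm ▸ hr0)]
        ring
      · rw [if_neg hm]
        by_cases hm1 : (.r 1 : DihedralGroup p) ∈ S₁
        · rw [if_pos ((hBA m hm).2 hm1), ha, if_pos hm1]; ring
        · rw [if_neg (fun hc => hm1 ((hBA m hm).1 hc)), ha, if_neg hm1]; ring
    | .sr m =>
      rw [Um_entry_sr, Wm_entry_sr, Rm_entry, one_entry]
      have hnotmem : (.sr m : DihedralGroup p) ∉ S₁ := fun h => by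
        obtain ⟨k, hk⟩ := hS₁ h; exact (by simp at hk)
      have hmem : ((.sr m : DihedralGroup p) ∈ S) ↔ (.sr m : DihedralGroup p) ∈ S₂ := by
        rw [hS]; simp [hnotmem]
      have e1 : (if (DihedralGroup.sr m : DihedralGroup p) ∈ S then (1:ℂ) else 0)
          = w + s * (if m = c then 1 else 0) := by
        rw [← h2 m]; exact if_congr hmem rfl rfl
      rw [e1, if_congr (show ((DihedralGroup.sr m : DihedralGroup p) = .sr c) ↔ (m = c) by simp)
        rfl rfl, if_neg (show (DihedralGroup.sr m : DihedralGroup p) ≠ 1 by rw [one_def]; intro h; cases h)]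
      ring
  ext x y
  have := key x (x⁻¹ * y)
  rwa [mul_inv_cancel_left] at this

open Polynomial in
lemma spectrum_quartic {M : Matrix (DihedralGroup p) (DihedralGroup p) ℂ} (l1 l2 l3 l4 : ℂ)
    (h : (M - l1 • 1) * (M - l2 • 1) * (M - l3 • 1) * (M - l4 • 1) = 0)
    {μ : ℂ} (hμ : μ ∈ spectrum ℂ M) : μ = l1 ∨ μ = l2 ∨ μ = l3 ∨ μ = l4 := by
  have hq : (Polynomial.aeval M) ((X - C l1) * (X - C l2) * (X - C l3) * (X - C l4)) = 0 := by
    simp only [_root_.map_mul, map_sub, Polynomial.aeval_X, Polynomial.aeval_C,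
      Algebra.algebraMap_eq_smul_one]
    exact h
  have hmem := spectrum.subset_polynomial_aeval M
    ((X - C l1) * (X - C l2) * (X - C l3) * (X - C l4)) ⟨μ, hμ, rfl⟩
  rw [hq, spectrum.zero_eq] at hmem
  simp only [Set.mem_singleton_iff, Polynomial.eval_mul, Polynomial.eval_sub,
    Polynomial.eval_X, Polynomial.eval_C, mul_eq_zero, sub_eq_zero] at hmem
  tauto

lemma gcd_key (hp : p.Prime) {m : ZMod p} (hm : m ≠ 0) : Nat.gcd m.val p = 1 := by
  have hv : ¬ p ∣ m.val := by
    intro hdvd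
    have hlt := ZMod.val_lt m
    have hne : m.val ≠ 0 := fun h => hm ((ZMod.val_eq_zero m).mp h)
    exact absurd (Nat.le_of_dvd (Nat.pos_of_ne_zero hne) hdvd) (not_le.mpr hlt)
  exact Nat.coprime_comm.mp (hp.coprime_iff_not_dvd.2 hv)

lemma sufficiency (hp : p.Prime)
    (hS : S = S₁ ∪ S₂) (h1 : (1 : DihedralGroup p) ∉ S) (hSinv : S⁻¹ = S)
    (hS₁ : S₁ ⊆ rSet p) (hS₂ : S₂ ⊆ srSet p)
    (hBA : ∀ m : ZMod p, m ≠ 0 → ((.r m : DihedralGroup p) ∈ S₁ ↔ (.r 1 : DihedralGroup p) ∈ S₁))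
    (hcases : (∃ k : ZMod p, S₂ = srSet p \ {DihedralGroup.sr k}) ∨ S₂ = srSet p ∨
          (∃ k : ZMod p, S₂ = {DihedralGroup.sr k}) ∨ S₂ = ∅) :
    IsIntegralGraph (cayleyGraph S) := by
  classical
  obtain ⟨c, w, s, zw, zs, hw, hs, h2⟩ :
      ∃ (c : ZMod p) (w s : ℂ) (zw zs : ℤ), w = (zw : ℂ) ∧ s = (zs : ℂ) ∧
        ∀ m : ZMod p, (if (.sr m : DihedralGroup p) ∈ S₂ then (1:ℂ) else 0)
          = w + s * (if m = c then 1 else 0) := by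
    rcases hcases with ⟨k, rfl⟩ | rfl | ⟨k, rfl⟩ | rfl
    · refine ⟨k, 1, -1, 1, -1, by norm_num, by norm_num, fun m => ?_⟩
      by_cases hm : m = k
      · subst hm
        rw [if_pos rfl, if_neg (by simp [srSet])]
        ring
      · rw [if_neg hm, if_pos (by simp [srSet, hm])]
        ring
    · refine ⟨0, 1, 0, 1, 0, by norm_num, by norm_num, fun m => ?_⟩
      rw [if_pos ⟨m, rfl⟩]
      ring
    · refine ⟨k, 0, 1, 0, 1, by norm_num, by norm_num, fun m => ?_⟩
      by_cases hm : m = k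
      · subst hm
        rw [if_pos (show (DihedralGroup.sr m : DihedralGroup p) ∈
          ({DihedralGroup.sr m} : Set (DihedralGroup p)) from rfl), if_pos rfl]
        ring
      · rw [if_neg hm, if_neg (by simp [hm])]
        ring
    · refine ⟨0, 0, 0, 0, 0, by norm_num, by norm_num, fun m => ?_⟩
      rw [if_neg (Set.notMem_empty _)]
      ring
  set a : ℂ := if (.r 1 : DihedralGroup p) ∈ S₁ then 1 else 0 with ha
  obtain ⟨za, hza⟩ : ∃ z : ℤ, a = (z : ℂ) := by
    by_cases hm1 : (.r 1 : DihedralGroup p) ∈ S₁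
    · exact ⟨1, by rw [ha, if_pos hm1]; norm_num⟩
    · exact ⟨0, by rw [ha, if_neg hm1]; norm_num⟩
  have hform := matrix_form hS h1 hSinv hS₁ hS₂ hBA a w s c ha h2
  have hann := annihilate a w s c _ hform
  intro μ hμ
  have hcases4 := spectrum_quartic _ _ _ _ hann hμ
  rcases hcases4 with h | h | h | h
  · exact ⟨za*(p-1)+p*zw+zs, by rw [h, hza, hw, hs]; push_cast; ring⟩
  · exact ⟨za*(p-1)-p*zw-zs, by rw [h, hza, hw, hs]; push_cast; ring⟩
  · exact ⟨-za+zs, by rw [h, hza, hs]; push_cast; ring⟩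
  · exact ⟨-za-zs, by rw [h, hza, hs]; push_cast; ring⟩

noncomputable def zc (p : ℕ) : ℂ := Complex.exp (2 * Real.pi * Complex.I / p)

lemma zc_prim (p : ℕ) [NeZero p] : IsPrimitiveRoot (zc p) p :=
  Complex.isPrimitiveRoot_exp p (NeZero.ne p)

noncomputable def ec (p : ℕ) [NeZero p] (k : ZMod p) : ℂ := zc p ^ k.val

lemma zc_pow_p : zc p ^ p = 1 := (zc_prim p).pow_eq_one

lemma zc_pow_mod (n : ℕ) : zc p ^ (n % p) = zc p ^ n := by
  conv_rhs => rw [← Nat.mod_add_div n p, pow_add, pow_mul, zc_pow_p, one_pow, mul_one]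

lemma e_zero : ec p 0 = 1 := by simp [ec, ZMod.val_zero]

lemma e_add (a b : ZMod p) : ec p (a + b) = ec p a * ec p b := by
  rw [ec, ec, ec, ← pow_add, ZMod.val_add, zc_pow_mod]

lemma e_ne_zero (a : ZMod p) : ec p a ≠ 0 :=
  pow_ne_zero _ (Complex.exp_ne_zero _)

lemma e_neg (a : ZMod p) : ec p (-a) = (ec p a)⁻¹ := by
  have h : ec p (-a) * ec p a = 1 := by rw [← e_add, neg_add_cancel, e_zero]
  exact eq_inv_of_mul_eq_one_left h

lemma e_pow (a : ZMod p) (n : ℕ) : ec p ((n : ZMod p) * a) = ec p a ^ n := by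
  induction n with
  | zero => simp [e_zero]
  | succ n ih => rw [Nat.cast_add, Nat.cast_one, add_mul, one_mul, e_add, ih, pow_succ]

lemma e_one (hp : 1 < p) : ec p 1 = zc p := by
  rw [ec, ZMod.val_one_eq_one_mod, Nat.mod_eq_of_lt hp, pow_one]

lemma e_mul_eq_pow (h k : ZMod p) : ec p (h * k) = ec p h ^ k.val := by
  rw [← e_pow, ZMod.natCast_val, ZMod.cast_id, mul_comm]

lemma sum_e (hp : 1 < p) : ∑ k : ZMod p, ec p k = 0 := by
  have h := (zc_prim p).geom_sum_eq_zero hp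
  rw [← h]
  refine Finset.sum_nbij' (fun k => k.val) (fun i => (i : ZMod p)) ?_ ?_ ?_ ?_ ?_ <;>
    intro a ha
  · exact Finset.mem_range.mpr (ZMod.val_lt a)
  · exact Finset.mem_univ _
  · exact ZMod.natCast_rightInverse a
  · exact ZMod.val_cast_of_lt (Finset.mem_range.mp ha)
  · rfl

lemma sum_e_eq (hp : p.Prime) (d : ZMod p) :
    ∑ h : ZMod p, ec p (h * d) = if d = 0 then (p : ℂ) else 0 := by
  haveI := Fact.mk hp
  by_cases hd : d = 0
  · subst hd
    simp only [mul_zero, e_zero, Finset.sum_const, Finset.card_univ, ZMod.card, if_pos rfl]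
    simp
  · rw [if_neg hd]
    have h : ∑ h : ZMod p, ec p (h * d) = ∑ h : ZMod p, ec p h :=
      Fintype.sum_equiv (Equiv.mulRight₀ d hd) (fun h => ec p (h * d)) (fun h => ec p h)
        (fun x => rfl)
    rw [h, sum_e hp.one_lt]

noncomputable def al (T₁ : Finset (ZMod p)) (h : ZMod p) : ℂ := ∑ k ∈ T₁, ec p (h * k)

lemma al_zero (T₁ : Finset (ZMod p)) : al T₁ 0 = T₁.card := by
  simp [al, e_zero]

lemma al_mul (T₁ T₂ : Finset (ZMod p)) (h : ZMod p) :
    al T₁ h * al T₂ (-h) = ∑ k ∈ T₁, ∑ l ∈ T₂, ec p (h * (k - l)) := by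
  rw [al, al, Finset.sum_mul_sum]
  refine Finset.sum_congr rfl fun k _ => Finset.sum_congr rfl fun l _ => ?_
  rw [← e_add, show h * k + -h * l = h * (k - l) by ring]

lemma sum_al (hp : p.Prime) (T₁ : Finset (ZMod p)) (h0 : (0 : ZMod p) ∉ T₁) :
    ∑ h : ZMod p, al T₁ h = 0 := by
  simp only [al]
  rw [Finset.sum_comm]
  refine Finset.sum_eq_zero fun k hk => ?_
  rw [sum_e_eq hp k, if_neg (fun hc => h0 (by rwa [hc] at hk))]

lemma sum_al_mul (hp : p.Prime) (T₁ : Finset (ZMod p)) :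
    ∑ h : ZMod p, al T₁ h * al T₁ (-h) = (p : ℂ) * T₁.card := by
  have h1 : ∀ h : ZMod p, al T₁ h * al T₁ (-h) = ∑ k ∈ T₁, ∑ l ∈ T₁, ec p (h * (k - l)) :=
    fun h => al_mul T₁ T₁ h
  simp only [h1]
  rw [Finset.sum_comm]
  have h2 : ∀ k ∈ T₁, (∑ h : ZMod p, ∑ l ∈ T₁, ec p (h * (k - l))) = (p : ℂ) := by
    intro k hk
    rw [Finset.sum_comm]
    have h3 : ∀ l ∈ T₁, (∑ h : ZMod p, ec p (h * (k - l))) = if l = k then (p:ℂ) else 0 := by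
      intro l _
      rw [sum_e_eq hp (k - l)]
      congr 1
      simp [sub_eq_zero, eq_comm]
    rw [Finset.sum_congr rfl h3, Finset.sum_ite_eq' T₁ k, if_pos hk]
  rw [Finset.sum_congr rfl h2, Finset.sum_const, nsmul_eq_mul, mul_comm]

noncomputable def fpoly (T₁ : Finset (ZMod p)) : ℚ[X] := ∑ k ∈ T₁, X ^ k.val
noncomputable def gpoly (T : Finset (ZMod p)) : ℚ[X] := ∑ k ∈ T, ∑ l ∈ T, X ^ (k - l).val

lemma al_eval (T₁ : Finset (ZMod p)) (h : ZMod p) : al T₁ h = aeval (ec p h) (fpoly T₁) := by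
  rw [fpoly, map_sum, al]
  exact Finset.sum_congr rfl fun k _ => by rw [map_pow, aeval_X, e_mul_eq_pow]

lemma b_eval (T : Finset (ZMod p)) (h : ZMod p) :
    al T h * al T (-h) = aeval (ec p h) (gpoly T) := by
  rw [al_mul, gpoly, map_sum]
  refine Finset.sum_congr rfl fun k _ => ?_
  rw [map_sum]
  exact Finset.sum_congr rfl fun l _ => by rw [map_pow, aeval_X, e_mul_eq_pow]

lemma const_eval (hp : p.Prime) (F : ℚ[X]) (c : ℚ) (h0 : aeval (zc p) F = (c : ℂ))
    (h : ZMod p) (hh : h ≠ 0) : aeval (ec p h) F = (c : ℂ) := by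
  have hint : aeval (zc p) (F - C c) = 0 := by
    rw [map_sub, aeval_C, h0]
    simp
  obtain ⟨g, hg⟩ := minpoly.dvd ℚ (zc p) hint
  have hprim : IsPrimitiveRoot (ec p h) p :=
    (zc_prim p).pow_of_coprime h.val (gcd_key hp hh)
  haveI : NeZero ((p : ℕ) : ℂ) := ⟨Nat.cast_ne_zero.mpr (NeZero.ne p)⟩
  have hroot : aeval (ec p h) (minpoly ℚ (zc p)) = 0 := by
    rw [← cyclotomic_eq_minpoly_rat (zc_prim p) hp.pos, aeval_def, eval₂_eq_eval_map,
      map_cyclotomic]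
    exact isRoot_cyclotomic_iff.mpr hprim
  have hF : F = minpoly ℚ (zc p) * g + C c := by rw [← hg]; ring
  rw [hF, map_add, _root_.map_mul, hroot, zero_mul, zero_add, aeval_C]
  simp

lemma inv_r (i : ZMod p) : (DihedralGroup.r i : DihedralGroup p)⁻¹ = .r (-i) := by
  apply inv_eq_of_mul_eq_one_right
  rw [r_mul_r, add_neg_cancel, one_def]

lemma inv_sr (i : ZMod p) : (DihedralGroup.sr i : DihedralGroup p)⁻¹ = .sr i :=
  inv_eq_of_mul_eq_one_right (sr_mul_self i)

open scoped Classical in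
lemma fold_sum (T' : Finset (ZMod p)) (g : ZMod p) (cc ee : ℂ) :
    ∑ k : ZMod p, (if k ∈ T' then (1:ℂ) else 0) * (cc * (ec p (g * k) * ee))
      = cc * al T' g * ee := by
  simp only [ite_mul, one_mul, zero_mul]
  rw [Finset.sum_ite_mem, Finset.univ_inter, al, Finset.mul_sum, Finset.sum_mul]
  exact Finset.sum_congr rfl fun k _ => by ring

variable {S : Set (DihedralGroup p)}

open scoped Classical in
lemma key_eig (hSinv : S⁻¹ = S) (h1 : (1 : DihedralGroup p) ∉ S)
    (T₁ T : Finset (ZMod p))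
    (hT₁ : T₁ = Finset.univ.filter (fun k => (.r k : DihedralGroup p) ∈ S))
    (hT : T = Finset.univ.filter (fun k => (.sr k : DihedralGroup p) ∈ S))
    (h : ZMod p) (cv dv μ : ℂ)
    (hc : cv * al T₁ h + dv * al T (-h) = μ * cv)
    (hd : dv * al T₁ (-h) + cv * al T h = μ * dv)
    (hnz : cv ≠ 0 ∨ dv ≠ 0) :
    μ ∈ spectrum ℂ (adjMat (cayleyGraph S)) := by
  set v : DihedralGroup p → ℂ := fun x => match x with
    | .r j => cv * ec p (h * j)
    | .sr j => dv * ec p (-(h * j)) with hv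
  have hvne : v ≠ 0 := by
    intro hv0
    rcases hnz with hcv | hdv
    · have := congrFun hv0 (.r 0)
      simp only [hv, mul_zero, e_zero, mul_one, Pi.zero_apply] at this
      exact hcv this
    · have := congrFun hv0 (.sr 0)
      simp only [hv, mul_zero, neg_zero, e_zero, mul_one, Pi.zero_apply] at this
      exact hdv this
  have hmv : (adjMat (cayleyGraph S)).mulVec v = μ • v := by
    funext x
    have expand : (adjMat (cayleyGraph S)).mulVec v x
        = ∑ y, (if x⁻¹ * y ∈ S then (1:ℂ) else 0) * v y := by
      simp only [Matrix.mulVec, dotProduct]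
      exact Finset.sum_congr rfl fun y _ => by rw [adjMat_apply hSinv h1]
    rw [expand, sum_dihedral (f := fun y => (if x⁻¹ * y ∈ S then (1:ℂ) else 0) * v y)]
    match x with
    | .r i =>
      have e1 : ∑ j : ZMod p, (if (DihedralGroup.r i : DihedralGroup p)⁻¹ * .r j ∈ S
            then (1:ℂ) else 0) * v (.r j)
          = cv * al T₁ h * ec p (h * i) := by
        rw [← Fintype.sum_equiv (Equiv.addLeft i)
          (fun k => (if (DihedralGroup.r i : DihedralGroup p)⁻¹ * .r (i + k) ∈ S then (1:ℂ) else 0)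
              * v (.r (i + k))) _ (fun k => rfl), ← fold_sum T₁ h cv (ec p (h * i))]
        refine Finset.sum_congr rfl fun k _ => ?_
        rw [inv_r, r_mul_r, neg_add_cancel_left, hT₁]
        simp only [Finset.mem_filter, Finset.mem_univ, true_and, hv]
        rw [show h * (i + k) = h * k + h * i by ring, e_add]
      have e2 : ∑ j : ZMod p, (if (DihedralGroup.r i : DihedralGroup p)⁻¹ * .sr j ∈ S
            then (1:ℂ) else 0) * v (.sr j)
          = dv * al T (-h) * ec p (h * i) := by
        rw [← Fintype.sum_equiv (Equiv.subRight i)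
          (fun k => (if (DihedralGroup.r i : DihedralGroup p)⁻¹ * .sr (k - i) ∈ S then (1:ℂ) else 0)
              * v (.sr (k - i))) _ (fun k => rfl), ← fold_sum T (-h) dv (ec p (h * i))]
        refine Finset.sum_congr rfl fun k _ => ?_
        rw [inv_r, r_mul_sr, show k - i - -i = k by ring, hT]
        simp only [Finset.mem_filter, Finset.mem_univ, true_and, hv]
        rw [show -(h * (k - i)) = (-h) * k + h * i by ring, e_add]
      rw [e1, e2]
      show _ = μ * (cv * ec p (h * i))
      linear_combination ec p (h * i) * hc
    | .sr i =>
      have e1 : ∑ j : ZMod p, (if (DihedralGroup.sr i : DihedralGroup p)⁻¹ * .r j ∈ S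
            then (1:ℂ) else 0) * v (.r j)
          = cv * al T h * ec p (-(h * i)) := by
        rw [← Fintype.sum_equiv (Equiv.addLeft (-i))
          (fun k => (if (DihedralGroup.sr i : DihedralGroup p)⁻¹ * .r (-i + k) ∈ S then (1:ℂ) else 0)
              * v (.r (-i + k))) _ (fun k => rfl), ← fold_sum T h cv (ec p (-(h * i)))]
        refine Finset.sum_congr rfl fun k _ => ?_
        rw [inv_sr, sr_mul_r, show i + (-i + k) = k by ring, hT]
        simp only [Finset.mem_filter, Finset.mem_univ, true_and, hv]
        rw [show h * (-i + k) = h * k + -(h * i) by ring, e_add]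
      have e2 : ∑ j : ZMod p, (if (DihedralGroup.sr i : DihedralGroup p)⁻¹ * .sr j ∈ S
            then (1:ℂ) else 0) * v (.sr j)
          = dv * al T₁ (-h) * ec p (-(h * i)) := by
        rw [← Fintype.sum_equiv (Equiv.addRight i)
          (fun k => (if (DihedralGroup.sr i : DihedralGroup p)⁻¹ * .sr (k + i) ∈ S then (1:ℂ) else 0)
              * v (.sr (k + i))) _ (fun k => rfl), ← fold_sum T₁ (-h) dv (ec p (-(h * i)))]
        refine Finset.sum_congr rfl fun k _ => ?_
        rw [inv_sr, sr_mul_sr, add_sub_cancel_right, hT₁]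
        simp only [Finset.mem_filter, Finset.mem_univ, true_and, hv]
        rw [show -(h * (k + i)) = (-h) * k + -(h * i) by ring, e_add]
      rw [e1, e2]
      show _ = μ * (dv * ec p (-(h * i)))
      linear_combination ec p (-(h * i)) * hd
  rw [spectrum.mem_iff]
  intro hunit
  have hdet0 : ((algebraMap ℂ (Matrix (DihedralGroup p) (DihedralGroup p) ℂ) μ)
      - adjMat (cayleyGraph S)).det = 0 := by
    rw [← Matrix.exists_mulVec_eq_zero_iff]
    refine ⟨v, hvne, ?_⟩
    rw [Matrix.sub_mulVec, hmv, Algebra.algebraMap_eq_smul_one, Matrix.smul_mulVec,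
      Matrix.one_mulVec, sub_self]
  have := (Matrix.isUnit_iff_isUnit_det _).mp hunit
  rw [hdet0] at this
  exact not_isUnit_zero this

lemma abs_zc : ‖zc p‖ = 1 := by
  rw [zc, show 2 * Real.pi * Complex.I / p = ((2 * Real.pi / p : ℝ) : ℂ) * Complex.I by
    push_cast; ring]
  exact Complex.norm_exp_ofReal_mul_I _

lemma e_conj (a : ZMod p) : (starRingEnd ℂ) (ec p a) = ec p (-a) := by
  have habs : ‖ec p a‖ = 1 := by
    rw [ec, norm_pow, abs_zc, one_pow]
  have h1 : (starRingEnd ℂ) (ec p a) * ec p a = 1 := by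
    rw [mul_comm, Complex.mul_conj, Complex.normSq_eq_norm_sq, habs]
    norm_num
  rw [e_neg]
  exact eq_inv_of_mul_eq_one_left h1

lemma al_conj (T : Finset (ZMod p)) (h : ZMod p) :
    (starRingEnd ℂ) (al T h) = al T (-h) := by
  rw [al, map_sum, al]
  exact Finset.sum_congr rfl fun k _ => by rw [e_conj, ← neg_mul]

lemma al_neg_of_symm {T₁ : Finset (ZMod p)} (hsymm : ∀ k ∈ T₁, -k ∈ T₁) (h : ZMod p) :
    al T₁ (-h) = al T₁ h := by
  rw [al, al]
  refine Finset.sum_nbij' (fun k => -k) (fun k => -k) ?_ ?_ ?_ ?_ ?_ <;> intro a ha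
  · exact hsymm a ha
  · exact hsymm a ha
  · simp
  · simp
  · rw [show -h * a = h * (-a) by ring]

lemma prime_not_square {p : ℕ} (hp : p.Prime) (s : ℤ) : s ^ 2 ≠ (p : ℤ) := by
  intro hs
  have h1 : s.natAbs * s.natAbs = p := by
    have := congrArg Int.natAbs hs
    rwa [Int.natAbs_natCast, pow_two, Int.natAbs_mul] at this
  have hd : s.natAbs ∣ p := ⟨s.natAbs, h1.symm⟩
  rcases (Nat.Prime.eq_one_or_self_of_dvd hp _ hd) with h | h
  · rw [h] at h1; simp at h1; exact hp.one_lt.ne' h1.symm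
  · rw [h] at h1
    have := hp.two_le
    nlinarith

lemma arith {p : ℕ} (hp : p.Prime) (hp3 : 3 ≤ p) (t : ℕ) (ht : t ≤ p) (n : ℤ)
    (heq : 4 * (t : ℤ) ^ 2 + ((p : ℤ) - 1) * n ^ 2 = 4 * (p : ℤ) * (t : ℤ)) :
    t = 0 ∨ t = 1 ∨ t = p - 1 ∨ t = p := by
  obtain ⟨N, hN0, hN2⟩ : ∃ N : ℤ, 0 ≤ N ∧ N ^ 2 = n ^ 2 := ⟨|n|, abs_nonneg n, sq_abs n⟩
  set P : ℤ := (p : ℤ) with hPdef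
  set T : ℤ := (t : ℤ) with hTdef
  have hP3 : 3 ≤ P := by omega
  have hT0 : 0 ≤ T := Int.natCast_nonneg t
  have hTP : T ≤ P := by omega
  have heqN : 4 * T ^ 2 + (P - 1) * N ^ 2 = 4 * P * T := by rw [hN2]; exact heq
  have hbound : 4 * T * (P - T) ≤ P ^ 2 := by nlinarith [sq_nonneg (2 * T - P)]
  have hNP : N < P := by
    by_contra hc
    push_neg at hc
    have hsq : P ^ 2 ≤ N ^ 2 := by nlinarith
    nlinarith
  have hwit : (2 * T - N) * (2 * T + N) = P * (4 * T - N ^ 2) := by linear_combination heqN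
  have hprime : Prime P := Int.prime_iff_natAbs_prime.mpr (by rw [hPdef, Int.natAbs_natCast]; exact hp)
  have hPne : P ≠ 0 := by positivity
  rcases hprime.dvd_mul.mp ⟨4 * T - N ^ 2, hwit⟩ with hdvd | hdvd
  · obtain ⟨k, hk⟩ := hdvd
    have hk0 : 0 ≤ k := by nlinarith
    have hk2 : k ≤ 2 := by nlinarith
    interval_cases k
    · -- N = 2T
      have hN : N = 2 * T := by omega
      have hfact : 4 * (P * (T * (T - 1))) = 0 := by
        linear_combination heqN - ((P - 1) * (N + 2 * T)) * hN
      have : T = 0 ∨ T = 1 := by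
        rcases mul_eq_zero.mp hfact with h | h
        · norm_num at h
        rcases mul_eq_zero.mp h with h | h
        · exact absurd h hPne
        rcases mul_eq_zero.mp h with h | h
        · exact Or.inl h
        · exact Or.inr (by omega)
      omega
    · -- N = 2T - P
      exfalso
      have hN : N = 2 * T - P := by omega
      have hG : P * ((2 * T - P) ^ 2 - P) = 0 := by
        linear_combination heqN - ((P - 1) * (N + 2 * T - P)) * hN
      rcases mul_eq_zero.mp hG with h | h
      · exact hPne h
      · exact prime_not_square hp (2 * T - P) (by omega)
    · -- 2T - N = 2P
      have : T = P ∧ N = 0 := by omega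
      omega
  · obtain ⟨k, hk⟩ := hdvd
    have hk0 : 0 ≤ k := by nlinarith
    have hk2 : k ≤ 2 := by nlinarith
    interval_cases k
    · -- 2T + N = 0
      have : T = 0 := by omega
      omega
    · -- N = P - 2T
      exfalso
      have hN : N = P - 2 * T := by omega
      have hG : P * ((2 * T - P) ^ 2 - P) = 0 := by
        linear_combination heqN - ((P - 1) * (N + P - 2 * T)) * hN
      rcases mul_eq_zero.mp hG with h | h
      · exact hPne h
      · exact prime_not_square hp (2 * T - P) (by omega)
    · -- N = 2P - 2T
      have hN : N = 2 * P - 2 * T := by omega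
      have hG : 4 * (P * ((P - T) * (P - T - 1))) = 0 := by
        linear_combination heqN - ((P - 1) * (N + 2 * P - 2 * T)) * hN
      have : T = P ∨ T = P - 1 := by
        rcases mul_eq_zero.mp hG with h | h
        · norm_num at h
        rcases mul_eq_zero.mp h with h | h
        · exact absurd h hPne
        rcases mul_eq_zero.mp h with h | h
        · left; omega
        · right; omega
      omega

open scoped Classical in
lemma necessity (hp : p.Prime) (hp3 : 3 ≤ p)
    (hS : S = S₁ ∪ S₂)
    (h1 : (1 : DihedralGroup p) ∉ S) (hSinv : S⁻¹ = S)
    (hS₁ : S₁ ⊆ rSet p) (hS₂ : S₂ ⊆ srSet p)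
    (hI : IsIntegralGraph (cayleyGraph S)) :
    InBooleanAlgebra p S₁ ∧
      ((∃ k : ZMod p, S₂ = srSet p \ {DihedralGroup.sr k}) ∨
        S₂ = srSet p ∨
        (∃ k : ZMod p, S₂ = {DihedralGroup.sr k}) ∨
        S₂ = ∅) := by
  have memr : ∀ k : ZMod p, ((.r k : DihedralGroup p) ∈ S) ↔ (.r k : DihedralGroup p) ∈ S₁ := by
    intro k
    rw [hS]
    constructor
    · rintro (h | h)
      · exact h
      · obtain ⟨m, hm⟩ := hS₂ h
        simp at hm
    · exact Or.inl
  have memsr : ∀ k : ZMod p, ((.sr k : DihedralGroup p) ∈ S) ↔ (.sr k : DihedralGroup p) ∈ S₂ := by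
    intro k
    rw [hS]
    constructor
    · rintro (h | h)
      · obtain ⟨m, hm⟩ := hS₁ h
        simp at hm
      · exact h
    · exact Or.inr
  set T₁ : Finset (ZMod p) := Finset.univ.filter (fun k => (.r k : DihedralGroup p) ∈ S) with hT₁
  set T : Finset (ZMod p) := Finset.univ.filter (fun k => (.sr k : DihedralGroup p) ∈ S) with hT
  have hmemT₁ : ∀ k, k ∈ T₁ ↔ (.r k : DihedralGroup p) ∈ S₁ := by
    intro k
    rw [hT₁, Finset.mem_filter]
    simp [memr k]
  have hmemT : ∀ k, k ∈ T ↔ (.sr k : DihedralGroup p) ∈ S₂ := by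
    intro k
    rw [hT, Finset.mem_filter]
    simp [memsr k]
  have h0T₁ : (0 : ZMod p) ∉ T₁ := by
    rw [hT₁]
    simp only [Finset.mem_filter, Finset.mem_univ, true_and]
    rw [← one_def]
    exact h1
  have hsymmT₁ : ∀ k ∈ T₁, -k ∈ T₁ := by
    intro k hk
    rw [hT₁, Finset.mem_filter] at hk ⊢
    refine ⟨Finset.mem_univ _, ?_⟩
    have hk2 := hk.2
    rw [← hSinv] at hk2
    rw [← inv_r]
    exact hk2
  have htcard : T.card ≤ p := by
    have h := Finset.card_le_univ T
    rwa [ZMod.card] at h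
  -- Step 1 : extraction at h = 1
  obtain ⟨c₁, n, hc₁, hn⟩ : ∃ (c₁ : ℚ) (n : ℤ),
      al T₁ 1 = (c₁ : ℂ) ∧ al T 1 * al T (-1) = (((n : ℤ) : ℂ) / 2) ^ 2 := by
    by_cases hb0 : al T 1 = 0
    · have hsp := key_eig hSinv h1 T₁ T hT₁ hT 1 1 0 (al T₁ 1)
        (by ring) (by rw [hb0]; ring) (Or.inl one_ne_zero)
      obtain ⟨z, hz⟩ := hI _ hsp
      exact ⟨(z : ℚ), 0, by rw [hz]; norm_num, by rw [hb0]; norm_num⟩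
    · set β := al T 1 with hβ
      set m : ℝ := ‖β‖ with hm
      have hmne : ((m : ℝ) : ℂ) ≠ 0 := by
        simp only [Complex.ofReal_ne_zero, hm]
        exact norm_ne_zero_iff.mpr hb0
      have hmsq : β * al T (-1) = ((m : ℝ) : ℂ) ^ 2 := by
        rw [← al_conj, Complex.mul_conj, Complex.normSq_eq_norm_sq]
        push_cast
        rw [hm]
      have halneg := al_neg_of_symm hsymmT₁ 1
      have hsp1 := key_eig hSinv h1 T₁ T hT₁ hT 1 1 (β / m) (al T₁ 1 + m)
        (by field_simp; linear_combination hmsq)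
        (by rw [halneg]; field_simp; ring) (Or.inl one_ne_zero)
      have hsp2 := key_eig hSinv h1 T₁ T hT₁ hT 1 1 (-(β / m)) (al T₁ 1 - m)
        (by field_simp; linear_combination -hmsq)
        (by rw [halneg]; field_simp; ring) (Or.inl one_ne_zero)
      obtain ⟨z1, hz1⟩ := hI _ hsp1
      obtain ⟨z2, hz2⟩ := hI _ hsp2
      refine ⟨((z1 : ℚ) + (z2 : ℚ)) / 2, z1 - z2, ?_, ?_⟩
      · push_cast
        linear_combination hz1 / 2 + hz2 / 2
      · rw [hmsq]
        push_cast
        linear_combination (((m : ℝ) : ℂ) / 2 + ((z1 : ℂ) - (z2 : ℂ)) / 4) * (hz1 - hz2)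
  -- Step 2 : propagation
  have halh : ∀ hh : ZMod p, hh ≠ 0 → al T₁ hh = (c₁ : ℂ) := by
    intro hh hne
    rw [al_eval]
    refine const_eval hp (fpoly T₁) c₁ ?_ hh hne
    rw [← e_one hp.one_lt, ← al_eval]
    exact hc₁
  have hbh : ∀ hh : ZMod p, hh ≠ 0 → al T hh * al T (-hh) = (((n : ℤ) : ℂ) / 2) ^ 2 := by
    intro hh hne
    rw [b_eval]
    have : aeval (ec p hh) (gpoly T) = ((((n : ℚ) / 2) ^ 2 : ℚ) : ℂ) := by
      refine const_eval hp (gpoly T) (((n : ℚ) / 2) ^ 2) ?_ hh hne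
      rw [← e_one hp.one_lt, ← b_eval, hn]
      push_cast
      ring
    rw [this]
    push_cast
    ring
  -- Step 3 : moments
  have herase0 : (Finset.univ.erase (0 : ZMod p)).card = p - 1 := by
    rw [Finset.card_erase_of_mem (Finset.mem_univ _), Finset.card_univ, ZMod.card]
  have hsplit : ∀ f : ZMod p → ℂ, ∑ h : ZMod p, f h = f 0 + ∑ h ∈ Finset.univ.erase 0, f h :=
    fun f => (Finset.add_sum_erase _ f (Finset.mem_univ 0)).symm
  have E1 : (T₁.card : ℂ) + ((p : ℂ) - 1) * (c₁ : ℂ) = 0 := by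
    have h0 := sum_al hp T₁ h0T₁
    rw [hsplit (fun h => al T₁ h), al_zero,
      Finset.sum_congr rfl (fun h hh => halh h (Finset.ne_of_mem_erase hh)),
      Finset.sum_const, herase0, nsmul_eq_mul, Nat.cast_sub hp.one_le, Nat.cast_one] at h0
    exact h0
  have E2 : (T₁.card : ℂ) ^ 2 + ((p : ℂ) - 1) * (c₁ : ℂ) ^ 2 = (p : ℂ) * T₁.card := by
    have h0 := sum_al_mul hp T₁
    rw [hsplit (fun h => al T₁ h * al T₁ (-h)), neg_zero, al_zero,
      Finset.sum_congr rfl (fun h hh => by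
        rw [halh h (Finset.ne_of_mem_erase hh),
          halh (-h) (neg_ne_zero.mpr (Finset.ne_of_mem_erase hh))]),
      Finset.sum_const, herase0, nsmul_eq_mul, Nat.cast_sub hp.one_le, Nat.cast_one] at h0
    linear_combination h0
  have E3 : (T.card : ℂ) ^ 2 + ((p : ℂ) - 1) * (((n : ℤ) : ℂ) / 2) ^ 2 = (p : ℂ) * T.card := by
    have h0 := sum_al_mul hp T
    rw [hsplit (fun h => al T h * al T (-h)), neg_zero, al_zero,
      Finset.sum_congr rfl (fun h hh => hbh h (Finset.ne_of_mem_erase hh)),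
      Finset.sum_const, herase0, nsmul_eq_mul, Nat.cast_sub hp.one_le, Nat.cast_one] at h0
    linear_combination h0
  -- Step 4 : to exact arithmetic
  have E1' : (T₁.card : ℚ) + ((p : ℚ) - 1) * c₁ = 0 := by exact_mod_cast E1
  have E2' : (T₁.card : ℚ) ^ 2 + ((p : ℚ) - 1) * c₁ ^ 2 = (p : ℚ) * T₁.card := by exact_mod_cast E2
  have E3' : 4 * (T.card : ℤ) ^ 2 + ((p : ℤ) - 1) * n ^ 2 = 4 * (p : ℤ) * T.card := by
    have hq : (T.card : ℚ) ^ 2 + ((p : ℚ) - 1) * ((n : ℚ) / 2) ^ 2 = (p : ℚ) * T.card := by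
      exact_mod_cast E3
    have h4 : 4 * (T.card : ℚ) ^ 2 + ((p : ℚ) - 1) * (n : ℚ) ^ 2 = 4 * (p : ℚ) * T.card := by
      linear_combination 4 * hq
    exact_mod_cast h4
  have hpQ : (p : ℚ) ≠ 0 := Nat.cast_ne_zero.mpr hp.pos.ne'
  have ht₁ : T₁.card = 0 ∨ T₁.card = p - 1 := by
    have key : (p : ℚ) * ((T₁.card : ℚ) * ((T₁.card : ℚ) - ((p : ℚ) - 1))) = 0 := by
      linear_combination ((T₁.card : ℚ) - ((p : ℚ) - 1) * c₁) * E1' + ((p : ℚ) - 1) * E2'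
    rcases mul_eq_zero.mp key with h | h
    · exact absurd h hpQ
    rcases mul_eq_zero.mp h with h | h
    · left; exact_mod_cast h
    · right
      have hc : (T₁.card : ℚ) = ((p - 1 : ℕ) : ℚ) := by
        rw [Nat.cast_sub hp.one_le, Nat.cast_one]
        linarith [h]
      exact_mod_cast hc
  -- Part 1 : Boolean algebra
  have hBA : InBooleanAlgebra p S₁ := by
    refine ⟨hS₁, fun k l hgcd => ?_⟩
    rcases ht₁ with h | h
    · have hempty : T₁ = ∅ := Finset.card_eq_zero.mp h
      have hno : ∀ m : ZMod p, (.r m : DihedralGroup p) ∉ S₁ := fun m hm => by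
        have hmm := (hmemT₁ m).mpr hm
        rw [hempty] at hmm
        simp at hmm
      simp [hno k, hno l]
    · have hsub : T₁ ⊆ Finset.univ.erase 0 := fun x hx =>
        Finset.mem_erase.mpr ⟨fun h0 => h0T₁ (h0 ▸ hx), Finset.mem_univ _⟩
      have heq : T₁ = Finset.univ.erase 0 :=
        Finset.eq_of_subset_of_card_le hsub (by rw [herase0, h])
      have hiff : ∀ m : ZMod p, ((.r m : DihedralGroup p) ∈ S₁) ↔ m ≠ 0 := by
        intro m
        rw [← hmemT₁, heq, Finset.mem_erase]
        simp
      rw [hiff k, hiff l]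
      have hlt := hp.one_lt
      constructor
      · intro hk hl0
        subst hl0
        rw [gcd_key hp hk, ZMod.val_zero, Nat.gcd_zero_left] at hgcd
        omega
      · intro hl hk0
        subst hk0
        rw [gcd_key hp hl, ZMod.val_zero, Nat.gcd_zero_left] at hgcd
        omega
  refine ⟨hBA, ?_⟩
  -- Part 2 : S₂ classification
  rcases arith hp hp3 T.card htcard n E3' with h | h | h | h
  · right; right; right
    have hT0 : T = ∅ := Finset.card_eq_zero.mp h
    rw [Set.eq_empty_iff_forall_notMem]
    intro x hx
    obtain ⟨mm, rfl⟩ := hS₂ hx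
    have hmm : mm ∈ T := (hmemT mm).mpr hx
    rw [hT0] at hmm
    simp at hmm
  · right; right; left
    obtain ⟨k, hk⟩ := Finset.card_eq_one.mp h
    refine ⟨k, ?_⟩
    ext x
    simp only [Set.mem_singleton_iff]
    constructor
    · intro hx
      obtain ⟨mm, rfl⟩ := hS₂ hx
      have hmm : mm ∈ T := (hmemT mm).mpr hx
      rw [hk, Finset.mem_singleton] at hmm
      rw [hmm]
    · rintro rfl
      exact (hmemT k).mp (hk ▸ Finset.mem_singleton_self k)
  · left
    have hcc : Tᶜ.card = 1 := by
      rw [Finset.card_compl, h]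
      have h2 : Fintype.card (ZMod p) = p := ZMod.card p
      rw [h2]
      have := hp.pos
      omega
    obtain ⟨k, hk⟩ := Finset.card_eq_one.mp hcc
    have hmem' : ∀ mm : ZMod p, mm ∈ T ↔ mm ≠ k := by
      intro mm
      constructor
      · intro hmm hkk
        subst hkk
        have hknotin : mm ∉ T := Finset.mem_compl.mp (hk ▸ Finset.mem_singleton_self mm)
        exact hknotin hmm
      · intro hne
        by_contra hmm
        have hcmp : mm ∈ Tᶜ := Finset.mem_compl.mpr hmm
        rw [hk, Finset.mem_singleton] at hcmp
        exact hne hcmp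
    refine ⟨k, ?_⟩
    ext x
    constructor
    · intro hx
      obtain ⟨mm, rfl⟩ := hS₂ hx
      refine ⟨⟨mm, rfl⟩, ?_⟩
      have hne := (hmem' mm).mp ((hmemT mm).mpr hx)
      simp only [Set.mem_singleton_iff]
      intro hc
      apply hne
      simpa using hc
    · rintro ⟨⟨mm, rfl⟩, hx2⟩
      apply (hmemT mm).mp
      apply (hmem' mm).mpr
      intro hc
      exact hx2 (by rw [hc]; exact Set.mem_singleton _)
  · right; left
    have hTuniv : T = Finset.univ := Finset.eq_univ_of_card T (by rw [h, ZMod.card])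
    ext x
    constructor
    · intro hx
      exact hS₂ hx
    · rintro ⟨mm, rfl⟩
      exact (hmemT mm).mp (hTuniv ▸ Finset.mem_univ mm)

end IntDih

/-- Theorem 4.3. For an odd prime `p`, `X(D_p,S)` is integral iff
`S₁ ∈ B(⟨a⟩)` and `S₂` is `b⟨a⟩∖{ba^k}`, the full coset `b⟨a⟩`, a singleton `{ba^k}`,
or the empty set. -/
theorem stmt4 (p : ℕ) (hp : p.Prime) (hodd : Odd p) [NeZero p]
    (S S₁ S₂ : Set (DihedralGroup p)) (hS : S = S₁ ∪ S₂)
    (h1 : (1 : DihedralGroup p) ∉ S) (hSinv : S⁻¹ = S)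
    (hS₁ : S₁ ⊆ rSet p) (hS₂ : S₂ ⊆ srSet p) :
    IsIntegralGraph (cayleyGraph S) ↔
      (InBooleanAlgebra p S₁ ∧
        ((∃ k : ZMod p, S₂ = srSet p \ {DihedralGroup.sr k}) ∨
          S₂ = srSet p ∨
          (∃ k : ZMod p, S₂ = {DihedralGroup.sr k}) ∨
          S₂ = ∅)) := by
  have hp3 : 3 ≤ p := by
    have h2 := hp.two_le
    have h3 := Nat.odd_iff.mp hodd
    omega
  constructor
  · intro hI
    exact IntDih.necessity hp hp3 hS h1 hSinv hS₁ hS₂ hI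
  · rintro ⟨hBA, hcases⟩
    have h1ne : (1 : ZMod p) ≠ 0 := by
      haveI : Fact (1 < p) := ⟨hp.one_lt⟩
      exact one_ne_zero
    have hBA' : ∀ m : ZMod p, m ≠ 0 →
        ((.r m : DihedralGroup p) ∈ S₁ ↔ (.r 1 : DihedralGroup p) ∈ S₁) := by
      intro m hm
      exact hBA.2 m 1 (by rw [IntDih.gcd_key hp hm, IntDih.gcd_key hp h1ne])
    exact IntDih.sufficiency hp hS h1 hSinv hS₁ hS₂ hBA' hcases
end

section
/- Let n = p₁^{α₁}···p_r^{α_r} be odd (each p_i ≥ 3 prime, r ≥ 1), and let S₂ ⊆ b⟨a⟩ ⊆ D_n with |S₂| = t ≥ 2. Suppose the multiset S₂² = {s₁s₂ : (s₁,s₂) ∈ S₂×S₂} equals t*[1] ∪ m₂*[a^{d₂}] for some divisor d₂ of n with d₂ ≠ n and m₂ ≥ 1. Then φ_h(S₂²) is a perfect square for every 1 ≤ h ≤ ⌊(n−1)/2⌋ if and only if n/d₂ = p_i for some 1 ≤ i ≤ r and t = p_i − 1 or t = p_i. Here φ_h(S₂²) = Σ_{x ∈ S₂²} φ_h(x) with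 multiplicities, where φ_h(a^k) = e^{2πihk/n}. -/
open DihedralGroup Polynomial

lemma expsum_range (m h : ℕ) (hm : 0 < m) :
    ∑ u ∈ Finset.range m, Complex.exp (2 * (Real.pi:ℂ) * Complex.I * h * u / m)
      = if m ∣ h then (m : ℂ) else 0 := by
  have hm' : (m : ℂ) ≠ 0 := by exact_mod_cast hm.ne'
  have h2pi : (2 * (Real.pi:ℂ) * Complex.I) ≠ 0 := by
    simp [Real.pi_ne_zero, Complex.I_ne_zero]
  have hterm : ∀ u : ℕ, Complex.exp (2 * (Real.pi:ℂ) * Complex.I * h * u / m)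
      = Complex.exp (2 * (Real.pi:ℂ) * Complex.I * h / m) ^ u := by
    intro u
    rw [← Complex.exp_nat_mul]
    ring_nf
  simp only [hterm]
  by_cases hd : m ∣ h
  · rw [if_pos hd]
    obtain ⟨c, hc⟩ := hd
    have h1 : Complex.exp (2 * (Real.pi:ℂ) * Complex.I * h / m) = 1 := by
      have he : (2 * (Real.pi:ℂ) * Complex.I * h / m) = (c : ℤ) * (2 * (Real.pi:ℂ) * Complex.I) := by
        field_simp
        rw [hc]
        push_cast
        ring
      rw [he, Complex.exp_int_mul_two_pi_mul_I]
    rw [h1]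
    simp
  · rw [if_neg hd]
    have hz : Complex.exp (2 * (Real.pi:ℂ) * Complex.I * h / m) ≠ 1 := by
      intro hcon
      rw [Complex.exp_eq_one_iff] at hcon
      obtain ⟨z, hzz⟩ := hcon
      apply hd
      have h3 : (2 * (Real.pi:ℂ) * Complex.I) * (h : ℂ) = (2 * (Real.pi:ℂ) * Complex.I) * (z * m) := by
        field_simp at hzz
        linear_combination (2 * (Real.pi:ℂ) * Complex.I) * hzz
      have h4 : (h : ℂ) = (z : ℂ) * m := mul_left_cancel₀ h2pi h3
      have h5 : (h : ℤ) = z * m := by exact_mod_cast h4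
      have : (m : ℤ) ∣ (h : ℤ) := ⟨z, by linarith⟩
      exact_mod_cast this
    rw [geom_sum_eq hz]
    have hpow : Complex.exp (2 * (Real.pi:ℂ) * Complex.I * h / m) ^ m = 1 := by
      rw [← Complex.exp_nat_mul]
      have he : (m : ℂ) * (2 * (Real.pi:ℂ) * Complex.I * h / m) = (h : ℤ) * (2 * (Real.pi:ℂ) * Complex.I) := by
        push_cast
        field_simp
      rw [he, Complex.exp_int_mul_two_pi_mul_I]
    rw [hpow]
    simp

open Finset

lemma Wprime (p h : ℕ) (hp : p.Prime) :
    ∑ u ∈ (Finset.range p).filter (fun u => Nat.gcd u p = 1),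
        Complex.exp (2 * (Real.pi:ℂ) * Complex.I * h * u / p)
      = (if p ∣ h then (p : ℂ) else 0) - 1 := by
  have hfe : (Finset.range p).filter (fun u => Nat.gcd u p = 1) = (Finset.range p).erase 0 := by
    ext u
    simp only [mem_filter, mem_range, mem_erase]
    constructor
    · rintro ⟨hu, hg⟩
      refine ⟨fun h0 => ?_, hu⟩
      subst h0
      simp [Nat.gcd_zero_left] at hg
      exact hp.one_lt.ne' hg
    · rintro ⟨h0, hu⟩
      refine ⟨hu, ?_⟩
      have : ¬ p ∣ u := fun hd => h0 (Nat.eq_zero_of_dvd_of_lt hd hu)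
      exact Nat.Coprime.gcd_eq_one ((Nat.coprime_comm).mp (hp.coprime_iff_not_dvd.mpr this))
  rw [hfe, Finset.sum_erase_eq_sub (by simp [hp.pos]), expsum_range p h hp.pos]
  norm_num [Complex.exp_zero]





lemma Wpow (p e h : ℕ) (hp : p.Prime) (he : 2 ≤ e) (hph : ¬ p ∣ h) :
    ∑ u ∈ (Finset.range (p^e)).filter (fun u => Nat.gcd u (p^e) = 1),
        Complex.exp (2 * (Real.pi:ℂ) * Complex.I * h * u / ((p^e : ℕ) : ℂ))
      = 0 := by
  have hp0 : (p:ℕ) ≠ 0 := hp.pos.ne'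
  have hsplit := Finset.sum_filter_add_sum_filter_not (Finset.range (p^e))
    (fun u => Nat.gcd u (p^e) = 1)
    (fun u => Complex.exp (2 * (Real.pi:ℂ) * Complex.I * h * u / ((p^e : ℕ) : ℂ)))
  have htot : ∑ u ∈ Finset.range (p^e),
      Complex.exp (2 * (Real.pi:ℂ) * Complex.I * h * u / ((p^e : ℕ) : ℂ)) = 0 := by
    rw [expsum_range (p^e) h (by positivity), if_neg]
    intro hd
    exact hph ((dvd_pow_self p (by omega : e ≠ 0)).trans hd)
  have hnotfilter : (Finset.range (p^e)).filter (fun u => ¬ Nat.gcd u (p^e) = 1)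
      = (Finset.range (p^(e-1))).image (fun j => p * j) := by
    ext v
    simp only [mem_filter, mem_range, mem_image]
    constructor
    · rintro ⟨hv, hg⟩
      have hpd : p ∣ v := by
        by_contra hnd
        exact hg (Nat.Coprime.pow_right _ ((Nat.coprime_comm).mp (hp.coprime_iff_not_dvd.mpr hnd)))
      obtain ⟨j, rfl⟩ := hpd
      refine ⟨j, ?_, rfl⟩
      have hpe : p^e = p * p^(e-1) := by
        rw [← pow_succ']
        congr 1
        omega
      rw [hpe] at hv
      exact lt_of_mul_lt_mul_left hv (Nat.zero_le p)
    · rintro ⟨j, hj, rfl⟩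
      have hpe : p^e = p * p^(e-1) := by
        rw [← pow_succ']
        congr 1
        omega
      constructor
      · rw [hpe]
        exact (mul_lt_mul_iff_right₀ hp.pos).mpr hj
      · intro hg
        have hd : p ∣ Nat.gcd (p*j) (p^e) :=
          Nat.dvd_gcd ⟨j, rfl⟩ (dvd_pow_self p (by omega : e ≠ 0))
        rw [hg] at hd
        have := Nat.le_of_dvd one_pos hd
        have := hp.two_le
        omega
  have hmul : ∑ v ∈ (Finset.range (p^(e-1))).image (fun j => p * j),
      Complex.exp (2 * (Real.pi:ℂ) * Complex.I * h * v / ((p^e : ℕ) : ℂ)) = 0 := by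
    rw [Finset.sum_image (by intro a _ b _ hab; exact Nat.eq_of_mul_eq_mul_left hp.pos hab)]
    have hconv : ∀ j : ℕ, Complex.exp (2 * (Real.pi:ℂ) * Complex.I * h * ((p*j : ℕ) : ℂ) / ((p^e : ℕ) : ℂ))
        = Complex.exp (2 * (Real.pi:ℂ) * Complex.I * h * j / ((p^(e-1) : ℕ) : ℂ)) := by
      intro j
      congr 1
      have hpc : ((p:ℂ)) ≠ 0 := by exact_mod_cast hp0
      have hpec : ((p^(e-1) : ℕ) : ℂ) ≠ 0 := by
        have : (0:ℕ) < p^(e-1) := by positivity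
        exact_mod_cast this.ne'
      have hpe : (((p^e : ℕ)) : ℂ) = (p : ℂ) * ((p^(e-1) : ℕ) : ℂ) := by
        push_cast
        rw [← pow_succ']
        congr 1
        omega
      rw [hpe]
      push_cast
      field_simp
    simp only [hconv]
    rw [expsum_range (p^(e-1)) h (by positivity), if_neg]
    intro hd
    refine hph (dvd_trans ?_ hd)
    exact dvd_pow_self p (by omega : e - 1 ≠ 0)
  rw [hnotfilter, hmul, htot] at hsplit
  simpa using hsplit


lemma nt_lemma (p t : ℕ) (hp : p.Prime) (ht2 : 2 ≤ t) (htp : t ≤ p) (z : ℤ)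
    (hz : (t:ℤ) * ((p:ℤ) - t) = z^2 * ((p:ℤ) - 1)) : t = p - 1 ∨ t = p := by
  by_cases h1 : t = p
  · exact Or.inr h1
  by_cases h2 : t = p - 1
  · exact Or.inl h2
  exfalso
  have hp2 := hp.two_le
  set P : ℤ := (p:ℤ) with hP
  set T : ℤ := (t:ℤ) with hT
  have hT2 : 2 ≤ T := by rw [hT]; exact_mod_cast ht2
  have hPT : T ≤ P - 2 := by rw [hT, hP]; push_cast; omega
  have hP4 : 4 ≤ P := by omega
  have hz2pos : 1 ≤ z^2 := by
    rcases eq_or_ne z 0 with rfl | hzne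
    · exfalso; nlinarith
    · have : 0 < z^2 := by positivity
      omega
  have hzP : z^2 < P := by nlinarith [sq_nonneg (P - 2*T)]
  set w : ℤ := |z| with hw
  have hw2 : w^2 = z^2 := sq_abs z
  have hw0 : 1 ≤ w := by
    rcases eq_or_ne z 0 with rfl | hzne
    · simp at hz2pos
    · have := abs_pos.mpr hzne; omega
  have hwP : w < P := by nlinarith
  have hdvd : P ∣ (T - w) * (T + w) := by
    refine ⟨T - z^2, ?_⟩
    rw [← hw2] at hz ⊢
    nlinarith [hz]
  have hpint : Prime P := Nat.prime_iff_prime_int.mp hp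
  rcases hpint.dvd_mul.mp hdvd with hd | hd
  · obtain ⟨c, hc⟩ := hd
    have hc0 : c = 0 := by
      by_contra hcne
      rcases lt_or_gt_of_ne hcne with hcl | hcg
      · have : c ≤ -1 := by omega
        nlinarith
      · have : 1 ≤ c := by omega
        nlinarith
    rw [hc0, mul_zero] at hc
    have hTw : T = w := by omega
    rw [← hw2, ← hTw] at hz
    have h3 : T*P*(T-1) = 0 := by linear_combination -hz
    have h4 : (0:ℤ) < T*P*(T-1) :=
      mul_pos (mul_pos (show (0:ℤ) < T by omega) (show (0:ℤ) < P by omega))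
        (show (0:ℤ) < T-1 by omega)
    exact absurd h3 (ne_of_gt h4)
  · obtain ⟨c, hc⟩ := hd
    have hc1 : c = 1 := by
      by_contra hcne
      rcases lt_or_gt_of_ne hcne with hcl | hcg
      · have : c ≤ 0 := by omega
        nlinarith
      · have : 2 ≤ c := by omega
        nlinarith
    rw [hc1, mul_one] at hc
    have hTw : w = P - T := by omega
    rw [← hw2, hTw] at hz
    have h3 : (P-T)*((P-T)*(P-1) - T) = 0 := by linear_combination -hz
    rcases mul_eq_zero.mp h3 with h4 | h4
    · omega
    · nlinarith [h4, mul_le_mul_of_nonneg_right (show (2:ℤ) ≤ P - T by omega)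
        (show (0:ℤ) ≤ P - 1 by omega)]


-- extractor
def gidx {n : ℕ} : DihedralGroup n → ZMod n
  | .r k => k
  | .sr k => k

open Finset

lemma atom_sum_bij (n d₂ n' : ℕ) [NeZero n] (hnn : n = d₂ * n') (hd₂pos : 0 < d₂)
    {M : Type*} [AddCommMonoid M] (f : ℕ → M) :
    ∑ k ∈ Finset.univ.filter (fun k : ZMod n => Nat.gcd k.val n = d₂), f k.val
      = ∑ u ∈ (Finset.range n').filter (fun u => Nat.gcd u n' = 1), f (d₂ * u) := by
  refine Finset.sum_nbij' (fun k => k.val / d₂) (fun u => ((d₂ * u : ℕ) : ZMod n)) ?_ ?_ ?_ ?_ ?_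
  · intro k hk
    simp only [mem_filter, mem_univ, true_and] at hk
    have hdvd : d₂ ∣ k.val := hk ▸ Nat.gcd_dvd_left _ _
    have hklt : k.val < n := ZMod.val_lt k
    simp only [mem_filter, mem_range]
    constructor
    · apply Nat.div_lt_of_lt_mul
      rw [← hnn]
      exact ZMod.val_lt k
    · have h1 : d₂ * Nat.gcd (k.val / d₂) n' = Nat.gcd (d₂ * (k.val / d₂)) (d₂ * n') := (Nat.gcd_mul_left _ _ _).symm
      rw [Nat.mul_div_cancel' hdvd, ← hnn, hk] at h1
      exact (Nat.eq_of_mul_eq_mul_left hd₂pos (by omega)).symm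
  · intro u hu
    simp only [mem_filter, mem_range] at hu
    have hlt : d₂ * u < n := by rw [hnn]; exact (mul_lt_mul_iff_right₀ hd₂pos).mpr hu.1
    simp only [mem_filter, mem_univ, true_and]
    rw [ZMod.val_natCast_of_lt hlt, hnn, Nat.gcd_mul_left, hu.2, mul_one]
  · intro k hk
    simp only [mem_filter, mem_univ, true_and] at hk
    have hdvd : d₂ ∣ k.val := hk ▸ Nat.gcd_dvd_left _ _
    show ((d₂ * (k.val / d₂) : ℕ) : ZMod n) = k
    rw [Nat.mul_div_cancel' hdvd]
    exact ZMod.natCast_rightInverse k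
  · intro u hu
    simp only [mem_filter, mem_range] at hu
    have hlt : d₂ * u < n := by rw [hnn]; exact (mul_lt_mul_iff_right₀ hd₂pos).mpr hu.1
    show ((d₂ * u : ℕ) : ZMod n).val / d₂ = u
    rw [ZMod.val_natCast_of_lt hlt, Nat.mul_div_cancel_left _ hd₂pos]
  · intro k hk
    simp only [mem_filter, mem_univ, true_and] at hk
    have hdvd : d₂ ∣ k.val := hk ▸ Nat.gcd_dvd_left _ _
    show f k.val = f (d₂ * (k.val / d₂))
    rw [Nat.mul_div_cancel' hdvd]

lemma atom_card (n d₂ n' : ℕ) [NeZero n] (hnn : n = d₂ * n') (hd₂pos : 0 < d₂) :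
    (Finset.univ.filter (fun k : ZMod n => Nat.gcd k.val n = d₂)).card = Nat.totient n' := by
  classical
  have h := atom_sum_bij n d₂ n' hnn hd₂pos (M := ℕ) (fun _ => 1)
  simp only [Finset.sum_const, smul_eq_mul, mul_one] at h
  rw [h]
  have : (Finset.range n').filter (fun u => Nat.gcd u n' = 1)
      = (Finset.range n').filter n'.Coprime := by
    ext u
    simp [Nat.Coprime, Nat.gcd_comm]
  rw [this]
  rfl

open scoped Classical in
lemma sqMult_eq_card (n : ℕ) [NeZero n] (S : Set (DihedralGroup n)) (x : DihedralGroup n) :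
    sqMult S x = (Finset.univ.filter
      (fun q : DihedralGroup n × DihedralGroup n => q.1 ∈ S ∧ q.2 ∈ S ∧ q.1 * q.2 = x)).card := by
  classical
  rw [sqMult, Nat.card_eq_fintype_card, Fintype.card_subtype]

lemma sr_mem_extract {n : ℕ} {S : Set (DihedralGroup n)} (hS : S ⊆ srSet n)
    {x : DihedralGroup n} (hx : x ∈ S) : x = DihedralGroup.sr (gidx x) := by
  obtain ⟨k, hk⟩ := hS hx
  subst hk
  rfl

lemma sum_sqMult_eq (n : ℕ) [NeZero n] (S : Set (DihedralGroup n)) (hS : S ⊆ srSet n) :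
    ∑ k : ZMod n, sqMult S (DihedralGroup.r k) = Nat.card S * Nat.card S := by
  classical
  have hcard : Nat.card S = S.toFinset.card := Nat.card_eq_card_toFinset S
  rw [hcard]
  rw [← Finset.card_product]
  rw [Finset.card_eq_sum_card_fiberwise
    (f := fun q : DihedralGroup n × DihedralGroup n => gidx (q.1 * q.2))
    (t := Finset.univ) (fun _ _ => Finset.mem_univ _)]
  apply Finset.sum_congr rfl
  intro k _
  rw [sqMult_eq_card]
  apply congrArg Finset.card
  ext ⟨x, y⟩
  simp only [Finset.mem_filter, Finset.mem_product, Set.mem_toFinset, Finset.mem_univ, true_and,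
    and_assoc]
  constructor
  · rintro ⟨hx, hy, hg⟩
    refine ⟨hx, hy, ?_⟩
    rw [hg]
    rfl
  · rintro ⟨hx, hy, hg⟩
    refine ⟨hx, hy, ?_⟩
    rw [sr_mem_extract hS hx, sr_mem_extract hS hy] at hg ⊢
    rw [DihedralGroup.sr_mul_sr] at hg ⊢
    exact congrArg DihedralGroup.r hg

lemma diff_gcd (n d₂ t m₂ : ℕ) [NeZero n] (S : Set (DihedralGroup n)) (hS : S ⊆ srSet n)
    (hsq : ∀ k : ZMod n, sqMult S (DihedralGroup.r k) =
      (if k = 0 then t else 0) + (if Nat.gcd k.val n = d₂ then m₂ else 0))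
    {x y : DihedralGroup n} (hx : x ∈ S) (hy : y ∈ S) (hxy : x ≠ y) :
    Nat.gcd ((gidx x - gidx y : ZMod n)).val n = d₂ := by
  have hne : gidx x - gidx y ≠ 0 := by
    intro h0
    apply hxy
    have hgg : gidx x = gidx y := sub_eq_zero.mp h0
    calc x = DihedralGroup.sr (gidx x) := sr_mem_extract hS hx
      _ = DihedralGroup.sr (gidx y) := by rw [hgg]
      _ = y := (sr_mem_extract hS hy).symm
  have hpos : 0 < sqMult S (DihedralGroup.r (gidx x - gidx y)) := by
    have : Nonempty {q : DihedralGroup n × DihedralGroup n //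
        q.1 ∈ S ∧ q.2 ∈ S ∧ q.1 * q.2 = DihedralGroup.r (gidx x - gidx y)} := by
      refine ⟨⟨(y, x), hy, hx, ?_⟩⟩
      have h1 : y * x = DihedralGroup.sr (gidx y) * DihedralGroup.sr (gidx x) := by
        rw [← sr_mem_extract hS hx, ← sr_mem_extract hS hy]
      rw [h1, DihedralGroup.sr_mul_sr]
    exact Nat.card_pos
  rw [hsq] at hpos
  rw [if_neg hne] at hpos
  by_contra hgc
  rw [if_neg hgc] at hpos
  omega

lemma card_le_of_prime (n d₂ n' p t m₂ : ℕ) [NeZero n] (hnn : n = d₂ * n') (hd₂pos : 0 < d₂)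
    (hp : p.Prime) (hpn : p ∣ n')
    (S : Set (DihedralGroup n)) (hS : S ⊆ srSet n) (hne : S.Nonempty)
    (hsq : ∀ k : ZMod n, sqMult S (DihedralGroup.r k) =
      (if k = 0 then t else 0) + (if Nat.gcd k.val n = d₂ then m₂ else 0)) :
    Nat.card S ≤ p := by
  classical
  haveI : NeZero p := ⟨hp.pos.ne'⟩
  obtain ⟨s₀, hs₀⟩ := hne
  -- d₂ divides the val of any difference from s₀
  have hdvd : ∀ x ∈ S, d₂ ∣ ((gidx x - gidx s₀ : ZMod n)).val := by
    intro x hx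
    by_cases hxs : x = s₀
    · subst hxs
      simp [ZMod.val_zero]
    · have := diff_gcd n d₂ t m₂ S hS hsq hx hs₀ hxs
      exact this ▸ Nat.gcd_dvd_left _ _
  set f : S → ZMod p := fun x => ((((gidx x.1 - gidx s₀ : ZMod n)).val / d₂ : ℕ) : ZMod p) with hf
  have hinj : Function.Injective f := by
    rintro ⟨x, hx⟩ ⟨y, hy⟩ hfxy
    by_contra hne'
    have hxyne : x ≠ y := fun h => hne' (Subtype.ext h)
    set a := ((gidx x - gidx s₀ : ZMod n)).val with ha
    set b := ((gidx y - gidx s₀ : ZMod n)).val with hb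
    set c := ((gidx x - gidx y : ZMod n)).val with hc
    have hda : d₂ ∣ a := hdvd x hx
    have hdb : d₂ ∣ b := hdvd y hy
    have hgc : Nat.gcd c n = d₂ := diff_gcd n d₂ t m₂ S hS hsq hx hy hxyne
    have hdc : d₂ ∣ c := hgc ▸ Nat.gcd_dvd_left _ _
    have hw1 : Nat.gcd (c / d₂) n' = 1 := by
      have h1 : d₂ * Nat.gcd (c / d₂) n' = Nat.gcd (d₂ * (c / d₂)) (d₂ * n') :=
        (Nat.gcd_mul_left _ _ _).symm
      rw [Nat.mul_div_cancel' hdc, ← hnn, hgc] at h1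
      exact Nat.eq_of_mul_eq_mul_left hd₂pos (by omega)
    -- congruence mod n : c ≡ a - b
    have hzmod : (Int.cast ((c : ℤ) - ((a : ℤ) - (b : ℤ))) : ZMod n) = 0 := by
      push_cast
      rw [ZMod.natCast_val, ZMod.natCast_val, ZMod.natCast_val,
        ZMod.cast_id, ZMod.cast_id, ZMod.cast_id]
      ring
    have hndvd : (n : ℤ) ∣ (c : ℤ) - ((a : ℤ) - (b : ℤ)) :=
      (ZMod.intCast_zmod_eq_zero_iff_dvd _ n).mp hzmod
    have hpdvd : (p : ℤ) ∣ ((b / d₂ : ℕ) : ℤ) - ((a / d₂ : ℕ) : ℤ) := by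
      have h0 : (((a / d₂ : ℕ)) : ZMod p) = (((b / d₂ : ℕ)) : ZMod p) := hfxy
      have hm := (ZMod.natCast_eq_natCast_iff _ _ _).mp h0
      exact_mod_cast hm.dvd
    have hae : (a : ℤ) = (d₂ : ℤ) * ((a / d₂ : ℕ) : ℤ) := by
      exact_mod_cast congrArg (Nat.cast : ℕ → ℤ) (Nat.mul_div_cancel' hda).symm
    have hbe : (b : ℤ) = (d₂ : ℤ) * ((b / d₂ : ℕ) : ℤ) := by
      exact_mod_cast congrArg (Nat.cast : ℕ → ℤ) (Nat.mul_div_cancel' hdb).symm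
    have hce : (c : ℤ) = (d₂ : ℤ) * ((c / d₂ : ℕ) : ℤ) := by
      exact_mod_cast congrArg (Nat.cast : ℕ → ℤ) (Nat.mul_div_cancel' hdc).symm
    have hn'dvd : (n' : ℤ) ∣ (((c / d₂ : ℕ) : ℤ) - (((a / d₂ : ℕ) : ℤ) - ((b / d₂ : ℕ) : ℤ))) := by
      have hcastn : ((n : ℤ)) = (d₂ : ℤ) * (n' : ℤ) := by
        exact_mod_cast congrArg (Nat.cast : ℕ → ℤ) hnn
      have h2 : (d₂ : ℤ) * (n' : ℤ) ∣ (d₂ : ℤ) *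
          (((c / d₂ : ℕ) : ℤ) - (((a / d₂ : ℕ) : ℤ) - ((b / d₂ : ℕ) : ℤ))) := by
        rw [← hcastn]
        have heq : (c : ℤ) - ((a : ℤ) - (b : ℤ)) = (d₂ : ℤ) *
            (((c / d₂ : ℕ) : ℤ) - (((a / d₂ : ℕ) : ℤ) - ((b / d₂ : ℕ) : ℤ))) := by
          rw [hae, hbe, hce]; ring
        rw [← heq]
        exact hndvd
      exact (mul_dvd_mul_iff_left (by exact_mod_cast hd₂pos.ne' : (d₂ : ℤ) ≠ 0)).mp h2
    have hpw : (p : ℤ) ∣ ((c / d₂ : ℕ) : ℤ) := by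
      have hpn' : (p : ℤ) ∣ (n' : ℤ) := by exact_mod_cast hpn
      have h4 := dvd_sub (hpn'.trans hn'dvd) hpdvd
      have heq2 : (((c / d₂ : ℕ) : ℤ) - (((a / d₂ : ℕ) : ℤ) - ((b / d₂ : ℕ) : ℤ)))
          - (((b / d₂ : ℕ) : ℤ) - ((a / d₂ : ℕ) : ℤ)) = ((c / d₂ : ℕ) : ℤ) := by ring
      rwa [heq2] at h4
    have hpwn : p ∣ c / d₂ := by exact_mod_cast hpw
    have : p ∣ 1 := hw1 ▸ Nat.dvd_gcd hpwn hpn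
    have := Nat.le_of_dvd one_pos this
    have := hp.two_le
    omega
  have := Nat.card_le_card_of_injective f hinj
  rwa [Nat.card_zmod] at this

lemma phi_zero (n h : ℕ) [NeZero n] : phi n h 0 = 1 := by
  rw [phi, ZMod.val_zero]
  norm_num [Complex.exp_zero]

lemma char_sum (n d₂ n' t m₂ : ℕ) [NeZero n] (hnn : n = d₂ * n') (hd₂pos : 0 < d₂)
    (S : Set (DihedralGroup n))
    (hsq : ∀ k : ZMod n, sqMult S (DihedralGroup.r k) =
      (if k = 0 then t else 0) + (if Nat.gcd k.val n = d₂ then m₂ else 0))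
    (h : ℕ) :
    ∑ k : ZMod n, (sqMult S (DihedralGroup.r k) : ℂ) * phi n h k
      = (t : ℂ) + (m₂ : ℂ) * ∑ u ∈ (Finset.range n').filter (fun u => Nat.gcd u n' = 1),
          Complex.exp (2 * (Real.pi:ℂ) * Complex.I * h * u / (n' : ℕ)) := by
  classical
  have hn0 : (n : ℂ) ≠ 0 := by
    have := (NeZero.ne n); exact_mod_cast this
  have hn'0 : n' ≠ 0 := by
    rintro rfl
    rw [mul_zero] at hnn
    exact (NeZero.ne n) hnn
  simp only [hsq]
  push_cast
  simp only [add_mul, Finset.sum_add_distrib]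
  congr 1
  · have hsplit : ∀ k : ZMod n, (if k = 0 then (t:ℂ) else 0) * phi n h k
        = if k = 0 then (t:ℂ) * phi n h k else 0 := by
      intro k; split <;> simp
    simp only [hsplit]
    rw [Finset.sum_ite_eq' Finset.univ (0 : ZMod n) (fun k => (t:ℂ) * phi n h k)]
    simp [phi_zero n h]
  · have hsplit : ∀ k : ZMod n, (if Nat.gcd k.val n = d₂ then (m₂:ℂ) else 0) * phi n h k
        = if Nat.gcd k.val n = d₂ then (m₂:ℂ) * phi n h k else 0 := by
      intro k; split <;> simp
    simp only [hsplit]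
    rw [← Finset.sum_filter, ← Finset.mul_sum]
    congr 1
    have hbij := atom_sum_bij n d₂ n' hnn hd₂pos
      (f := fun v : ℕ => Complex.exp (2 * (Real.pi:ℂ) * Complex.I * h * v / n))
    have hphi : ∀ k : ZMod n, phi n h k
        = Complex.exp (2 * (Real.pi:ℂ) * Complex.I * h * (k.val : ℕ) / n) := fun k => rfl
    rw [show (∑ k ∈ Finset.univ.filter (fun k : ZMod n => Nat.gcd k.val n = d₂), phi n h k)
        = ∑ k ∈ Finset.univ.filter (fun k : ZMod n => Nat.gcd k.val n = d₂),
            Complex.exp (2 * (Real.pi:ℂ) * Complex.I * h * (k.val : ℕ) / n) from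
      Finset.sum_congr rfl (fun k _ => hphi k)]
    rw [hbij]
    apply Finset.sum_congr rfl
    intro u hu
    congr 1
    have hcastn : (n : ℂ) = (d₂ : ℂ) * (n' : ℂ) := by exact_mod_cast congrArg (Nat.cast : ℕ → ℂ) hnn
    have hd₂0 : (d₂ : ℂ) ≠ 0 := by exact_mod_cast hd₂pos.ne'
    have hn'c : (n' : ℂ) ≠ 0 := by exact_mod_cast hn'0
    rw [hcastn]
    push_cast
    field_simp


set_option maxHeartbeats 1600000 in
/-- Lemma 4.2. Let `n` be odd (a product of primes `≥ 3`), `S₂ ⊆ b⟨a⟩`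
with `|S₂| = t ≥ 2`, and suppose `S₂² = t*[1] ∪ m₂*[a^{d₂}]` with `d₂ ∣ n`, `d₂ ≠ n`,
`m₂ ≥ 1`. Then `φ_h(S₂²)` is the square of an integer for every `1 ≤ h ≤ ⌊(n−1)/2⌋`
iff `n/d₂ = p` for a prime `p ∣ n` and `t = p − 1` or `t = p`. -/
theorem stmt6 (n : ℕ) (hodd : Odd n) (hn : 1 < n) [NeZero n]
    (S₂ : Set (DihedralGroup n)) (hS₂ : S₂ ⊆ srSet n)
    (t m₂ d₂ : ℕ) (ht : t = Nat.card S₂) (ht2 : 2 ≤ t) (hm₂ : 1 ≤ m₂)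
    (hd₂ : d₂ ∣ n) (hd₂n : d₂ ≠ n)
    (hsq : ∀ k : ZMod n, sqMult S₂ (DihedralGroup.r k) =
      (if k = 0 then t else 0) + (if Nat.gcd k.val n = d₂ then m₂ else 0)) :
    (∀ h : ℕ, 1 ≤ h → h ≤ (n - 1) / 2 →
        ∃ z : ℤ, ∑ k : ZMod n, (sqMult S₂ (DihedralGroup.r k) : ℂ) * phi n h k = (z : ℂ) ^ 2) ↔
      ∃ p : ℕ, p.Prime ∧ p ∣ n ∧ n / d₂ = p ∧ (t = p - 1 ∨ t = p) := by
  classical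
  have hd₂pos : 0 < d₂ := by
    rcases Nat.eq_zero_or_pos d₂ with h0 | h
    · subst h0; rw [zero_dvd_iff] at hd₂; omega
    · exact h
  set n' := n / d₂ with hn'def
  have hnn : n = d₂ * n' := (Nat.mul_div_cancel' hd₂).symm
  clear_value n'
  have hn'0 : n' ≠ 0 := by rintro h0; rw [h0, mul_zero] at hnn; omega
  have hn'ne1 : n' ≠ 1 := by intro h1; rw [h1, mul_one] at hnn; exact hd₂n hnn.symm
  have hn'1 : 1 < n' := by omega
  obtain ⟨nc, hnc⟩ := hodd
  have hn3 : 3 ≤ n := by omega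
  have h1le : (1:ℕ) ≤ (n-1)/2 := by omega
  have hn'dvd : n' ∣ n := ⟨d₂, by rw [hnn]; ring⟩
  have hkey : ∀ h : ℕ, ∑ k : ZMod n, (sqMult S₂ (DihedralGroup.r k) : ℂ) * phi n h k
      = (t : ℂ) + (m₂ : ℂ) * ∑ u ∈ (Finset.range n').filter (fun u => Nat.gcd u n' = 1),
          Complex.exp (2 * (Real.pi:ℂ) * Complex.I * h * u / (n' : ℕ)) :=
    char_sum n d₂ n' t m₂ hnn hd₂pos S₂ hsq
  have htotid : t * t = t + m₂ * Nat.totient n' := by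
    have h1 := sum_sqMult_eq n S₂ hS₂
    rw [← ht] at h1
    have h2 : ∑ k : ZMod n, sqMult S₂ (DihedralGroup.r k) = t + m₂ * Nat.totient n' := by
      simp only [hsq]
      rw [Finset.sum_add_distrib]
      congr 1
      · rw [Finset.sum_ite_eq' Finset.univ (0 : ZMod n) (fun _ => t)]
        simp
      · rw [← Finset.sum_filter, Finset.sum_const, atom_card n d₂ n' hnn hd₂pos,
          smul_eq_mul, mul_comm]
    rw [← h2, h1]
  have hnecard : 0 < Nat.card S₂ := by omega
  have hS₂ne : S₂.Nonempty := Set.nonempty_coe_sort.mp (Nat.card_pos_iff.mp hnecard).1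
  constructor
  · intro hall
    by_cases hprime : n'.Prime
    · refine ⟨n', hprime, hn'dvd, rfl, ?_⟩
      obtain ⟨z, hz⟩ := hall 1 le_rfl h1le
      rw [hkey 1] at hz
      have hW := Wprime n' 1 hprime
      rw [if_neg (by rw [Nat.dvd_one]; omega)] at hW
      rw [hW] at hz
      have hint : (t:ℤ) - (m₂:ℤ) = z^2 := by
        have hc : (((t:ℤ) - (m₂:ℤ) : ℤ) : ℂ) = ((z^2 : ℤ) : ℂ) := by
          push_cast
          linear_combination hz
        exact_mod_cast hc
      have htle : t ≤ n' := by
        rw [ht]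
        exact card_le_of_prime n d₂ n' n' t m₂ hnn hd₂pos hprime dvd_rfl S₂ hS₂ hS₂ne hsq
      rw [Nat.totient_prime hprime] at htotid
      have htotz : (t:ℤ) * t = t + m₂ * ((n':ℤ) - 1) := by
        have hc := congrArg (Nat.cast : ℕ → ℤ) htotid
        push_cast [Nat.cast_sub hprime.one_lt.le] at hc
        linarith [hc]
      have hteq : (t:ℤ) * ((n':ℤ) - t) = z^2 * ((n':ℤ) - 1) := by
        linear_combination ((n':ℤ) - 1) * hint - htotz
      exact nt_lemma n' t hprime ht2 htle z hteq
    · exfalso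
      have hpp : (n'.minFac).Prime := Nat.minFac_prime hn'ne1
      set p := n'.minFac with hpdef
      have hpd : p ∣ n' := Nat.minFac_dvd n'
      clear_value p
      have htle : t ≤ p := by
        rw [ht]
        exact card_le_of_prime n d₂ n' p t m₂ hnn hd₂pos hpp hpd S₂ hS₂ hS₂ne hsq
      have hp2 := hpp.two_le
      have hpodd : p % 2 = 1 := by
        have hpn : p ∣ n := hpd.trans hn'dvd
        rcases Nat.even_or_odd p with he | ho
        · obtain ⟨c, hc⟩ := he
          obtain ⟨e, he2⟩ := dvd_trans (⟨c, by omega⟩ : 2 ∣ p) hpn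
          omega
        · obtain ⟨c, hc⟩ := ho
          omega
      have htotpos : 0 < Nat.totient n' := Nat.totient_pos.mpr (by omega)
      by_cases hq : ∃ q, q.Prime ∧ q ∣ n' ∧ q ≠ p
      · obtain ⟨q, hqp, hqd, hqne⟩ := hq
        have hqge : p ≤ q := by rw [hpdef]; exact Nat.minFac_le_of_dvd hqp.two_le hqd
        have hqodd : q % 2 = 1 := by
          have hqn : q ∣ n := hqd.trans hn'dvd
          rcases Nat.even_or_odd q with he | ho
          · obtain ⟨c, hc⟩ := he
            obtain ⟨e, he2⟩ := dvd_trans (⟨c, by omega⟩ : 2 ∣ q) hqn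
            omega
          · obtain ⟨c, hc⟩ := ho
            omega
        have hq2 : p + 2 ≤ q := by omega
        have hcop : Nat.Coprime p q := (Nat.coprime_primes hpp hqp).mpr (by omega)
        have hpqd : p * q ∣ n' := hcop.mul_dvd_of_dvd_of_dvd hpd hqd
        have htotdvd := Nat.totient_dvd_of_dvd hpqd
        have htotpq : Nat.totient (p*q) = (p-1)*(q-1) := by
          rw [Nat.totient_mul hcop, Nat.totient_prime hpp, Nat.totient_prime hqp]
        have hle := Nat.le_of_dvd htotpos (htotpq ▸ htotdvd)
        -- move to ℤ
        have hA : (3:ℤ) ≤ (p:ℤ) := by omega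
        have hB : (p:ℤ) + 2 ≤ (q:ℤ) := by omega
        have hT : (t:ℤ) ≤ (p:ℤ) := by omega
        have hT2 : (2:ℤ) ≤ (t:ℤ) := by omega
        have hM : (1:ℤ) ≤ (m₂:ℤ) := by omega
        have hΦ : ((p:ℤ)-1)*((q:ℤ)-1) ≤ (Nat.totient n' : ℤ) := by
          have hc := hle
          zify [hpp.one_lt.le, hqp.one_lt.le] at hc
          exact hc
        have hMΦ : (m₂:ℤ) * (Nat.totient n' : ℤ) = (t:ℤ)*(t:ℤ) - (t:ℤ) := by
          have hc := congrArg (Nat.cast : ℕ → ℤ) htotid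
          push_cast at hc
          linarith
        have hΦpos : (0:ℤ) < (Nat.totient n' : ℤ) := by exact_mod_cast htotpos
        have z3 : (Nat.totient n' : ℤ) ≤ (m₂:ℤ) * (Nat.totient n' : ℤ) :=
          le_mul_of_one_le_left hΦpos.le hM
        have z1 : ((p:ℤ)-1)*((p:ℤ)+1) ≤ ((p:ℤ)-1)*((q:ℤ)-1) :=
          mul_le_mul_of_nonneg_left (by omega) (by omega)
        have z2 : (t:ℤ)*(t:ℤ) ≤ (p:ℤ)*(p:ℤ) :=
          mul_le_mul hT hT (by omega) (by omega)
        have z4 : ((p:ℤ)-1)*((p:ℤ)+1) = (p:ℤ)*(p:ℤ) - 1 := by ring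
        linarith
      · push_neg at hq
        have hpow := Nat.eq_prime_pow_of_unique_prime_dvd hn'0
            (fun {d} hd hdn => hq d hd hdn)
        set L := n'.primeFactorsList.length with hLdef
        clear_value L
        have hL2 : 2 ≤ L := by
          rcases (by omega : L = 0 ∨ L = 1 ∨ 2 ≤ L) with h0 | h1 | h2
          · rw [h0, pow_zero] at hpow; exact absurd hpow hn'ne1
          · rw [h1, pow_one] at hpow; rw [hpow] at hprime; exact absurd hpp hprime
          · exact h2
        have hφ : Nat.totient n' = p^(L-1) * (p-1) := by
          rw [hpow, Nat.totient_prime_pow hpp (by omega)]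
        have hppow : p ≤ p^(L-1) := by
          calc p = p^1 := (pow_one p).symm
          _ ≤ p^(L-1) := Nat.pow_le_pow_right hpp.pos (by omega)
        have hge : p*(p-1) ≤ m₂ * Nat.totient n' := by
          rw [hφ]
          calc p*(p-1) ≤ p^(L-1)*(p-1) := Nat.mul_le_mul_right _ hppow
          _ ≤ m₂ * (p^(L-1)*(p-1)) := Nat.le_mul_of_pos_left _ (by omega)
        -- t = p via ℤ
        have hMΦ : (m₂:ℤ) * (Nat.totient n' : ℤ) = (t:ℤ)*(t:ℤ) - (t:ℤ) := by
          have hc := congrArg (Nat.cast : ℕ → ℤ) htotid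
          push_cast at hc
          linarith
        have hgez : (p:ℤ)*((p:ℤ)-1) ≤ (m₂:ℤ) * (Nat.totient n' : ℤ) := by
          have hc := hge
          zify [hpp.one_lt.le] at hc
          exact hc
        have hAT : ((p:ℤ) - t) * ((p:ℤ) + t - 1) = (p:ℤ)*((p:ℤ)-1) - ((t:ℤ)*(t:ℤ) - t) := by
          ring
        have htp : t = p := by
          have h6 : (0:ℤ) ≤ ((p:ℤ) - t) := by omega
          have h7 : (0:ℤ) < ((p:ℤ) + t - 1) := by omega
          have h8 : ((p:ℤ) - t) * ((p:ℤ) + t - 1) ≤ 0 := by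
            rw [hAT]; linarith [hgez, hMΦ]
          have h9 : (p:ℤ) - t = 0 := by
            rcases eq_or_lt_of_le h6 with he | hgt
            · omega
            · nlinarith
          omega
        obtain ⟨z, hz⟩ := hall 1 le_rfl h1le
        rw [hkey 1] at hz
        have hWp : ∑ u ∈ (Finset.range n').filter (fun u => Nat.gcd u n' = 1),
            Complex.exp (2 * (Real.pi:ℂ) * Complex.I * (1:ℕ) * u / ((n' : ℕ) : ℂ)) = 0 := by
          rw [hpow]
          exact Wpow p L 1 hpp hL2 (fun hd => by
            have := Nat.le_of_dvd one_pos hd; omega)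
        rw [hWp] at hz
        have hint : (t:ℤ) = z^2 := by
          have hc : (((t:ℤ)) : ℂ) = ((z^2 : ℤ) : ℂ) := by
            push_cast
            linear_combination hz
          exact_mod_cast hc
        rw [htp] at hint
        have hsq' : (z.natAbs)*(z.natAbs) = p := by
          have hc : ((z.natAbs : ℤ))*(z.natAbs) = (p:ℤ) := by
            rw [Int.natAbs_mul_self']
            linear_combination -hint
          exact_mod_cast hc
        rcases hpp.eq_one_or_self_of_dvd z.natAbs ⟨z.natAbs, hsq'.symm⟩ with h1 | h1
        · rw [h1] at hsq'; omega
        · rw [h1] at hsq'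
          have : 2*p ≤ p*p := Nat.mul_le_mul_right p hp2
          omega
  · rintro ⟨p, hpprime, hpdvd, hnd₂p, hcase⟩
    have hn'p : n' = p := hnd₂p
    rw [hn'p] at hkey
    rw [hn'p, Nat.totient_prime hpprime] at htotid
    have hp2 := hpprime.two_le
    have hpodd2 : p % 2 = 1 := by
      rcases Nat.even_or_odd p with he | ho
      · obtain ⟨c, hc⟩ := he
        obtain ⟨e, he2⟩ := dvd_trans (⟨c, by omega⟩ : 2 ∣ p) hpdvd
        omega
      · obtain ⟨c, hc⟩ := ho
        omega
    have hp3 : 3 ≤ p := by omega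
    have htz : (t:ℤ) * t = t + m₂ * ((p:ℤ) - 1) := by
      have hc := congrArg (Nat.cast : ℕ → ℤ) htotid
      push_cast [Nat.cast_sub hpprime.one_lt.le] at hc
      linarith
    intro h hh1 hh2
    rw [hkey h]
    have hW := Wprime p h hpprime
    by_cases hph : p ∣ h
    · rw [if_pos hph] at hW
      refine ⟨t, ?_⟩
      rw [hW]
      have hcC : ((t:ℂ)) * t = t + m₂ * ((p:ℂ) - 1) := by
        have h5 := congrArg (Int.cast : ℤ → ℂ) htz
        push_cast at h5
        exact h5
      push_cast
      linear_combination -hcC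
    · rw [if_neg hph] at hW
      rw [hW]
      rcases hcase with h1 | h1
      · have ht1 : (t:ℤ) = (p:ℤ) - 1 := by omega
        rw [ht1] at htz
        have h0 : ((p:ℤ)-1)*(((p:ℤ)-2) - m₂) = 0 := by linear_combination htz
        have hm₂z : (m₂:ℤ) = (p:ℤ) - 2 := by
          rcases mul_eq_zero.mp h0 with hbad | hgood
          · omega
          · omega
        have hm₂n : m₂ = p - 2 := by omega
        refine ⟨1, ?_⟩
        rw [h1, hm₂n]
        push_cast [Nat.cast_sub (show 1 ≤ p by omega), Nat.cast_sub (show 2 ≤ p by omega)]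
        ring
      · have ht1 : (t:ℤ) = (p:ℤ) := by omega
        rw [ht1] at htz
        have h0 : ((p:ℤ)-1)*((p:ℤ) - m₂) = 0 := by linear_combination htz
        have hm₂n : m₂ = p := by
          rcases mul_eq_zero.mp h0 with hbad | hgood
          · omega
          · omega
        refine ⟨0, ?_⟩
        rw [h1, hm₂n]
        push_cast
        ring
end
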